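/- arXiv:1404.5554 — 7 statements merged into one kernel-verified Lean document; each statement's English description precedes it below -/
import Mathlib

section
/- Consider the Markov-modulated alternating service model with exponential preparation times. Let M ≥ 1, let P = (p_{i,j}) be an irreducible M×M stochastic matrix with stationary distribution ϖ = (ϖ_1,…,ϖ_M), let μ_1,…,μ_M > 0, and for each state i let ν_i be a probability law on [0,∞) (the service-time law in state i) with Laplace–Stieltjes transform α_i(s) = ∫ e^{−sx} ν_i(dx). Suppose (W, Z, Z', A, B) are random elements on a common probability space with W ≥ 0, Z, Z' ∈ {1,…,M}, such that: conditionally on (W, Z = i), Z' equals j with probability p_{i,j}; conditionally on Z = i, A has law ν_i and is conditionally independent of (W, Z'); conditionally on Z' = j, B is exponentially distributed with rate μ_j and is conditionally independent of (W, Z, A); and the stationarity condition holds: the pair (max(0, B − A − W), Z') has the same joint law as (W, Z). Then for every j ∈ {1,…,M}: P[W = 0, Z = j] = ϖ_j − c_j, and for every Borel set S ⊆ (0,∞), P[W ∈ S, Z = j] = ∫_S μ_j c_j e^{−μ_j x} dx, where c_j = Σ_{i=1}^M p_{i,j} · E[e^{−μ_j W} 1_{Z=i}] · α_i(μ_j).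 -/
open MeasureTheory ProbabilityTheory Real Set
open scoped ENNReal NNReal

private lemma stat_pow {M : ℕ} (p : Fin M → Fin M → ℝ) (v : Fin M → ℝ)
    (hv : ∀ j, ∑ i, v i * p i j = v j) (n : ℕ) (j : Fin M) :
    ∑ i, v i * ((Matrix.of p) ^ n) i j = v j := by
  induction n generalizing j with
  | zero =>
    simp only [pow_zero, Matrix.one_apply]
    rw [Finset.sum_congr rfl (fun i _ => by rw [mul_ite, mul_one, mul_zero])]
    simp
  | succ n ih =>
    have : ∀ i, ((Matrix.of p) ^ (n+1)) i j = ∑ k, ((Matrix.of p) ^ n) i k * p k j := by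
      intro i
      rw [pow_succ, Matrix.mul_apply]
      rfl
    simp_rw [this, Finset.mul_sum]
    rw [Finset.sum_comm]
    simp_rw [← mul_assoc, ← Finset.sum_mul]
    simp_rw [ih]
    exact hv j

private lemma pow_nonneg' {M : ℕ} (p : Fin M → Fin M → ℝ) (hp : ∀ i j, 0 ≤ p i j)
    (n : ℕ) (i j : Fin M) : 0 ≤ ((Matrix.of p) ^ n) i j := by
  induction n generalizing i j with
  | zero =>
    simp only [pow_zero, Matrix.one_apply]
    positivity
  | succ n ih =>
    rw [pow_succ, Matrix.mul_apply]
    exact Finset.sum_nonneg fun k _ => mul_nonneg (ih i k) (hp k j)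

private lemma stat_pos {M : ℕ} (p : Fin M → Fin M → ℝ) (hp : ∀ i j, 0 ≤ p i j)
    (h_irred : ∀ i j, ∃ n : ℕ, 0 < n ∧ 0 < ((Matrix.of p) ^ n) i j)
    (v : Fin M → ℝ) (hv_nonneg : ∀ i, 0 ≤ v i)
    (hv : ∀ j, ∑ i, v i * p i j = v j)
    (k : Fin M) (hk : 0 < v k) (i : Fin M) : 0 < v i := by
  obtain ⟨n, _, hn⟩ := h_irred k i
  have := stat_pow p v hv n i
  have hle : v k * ((Matrix.of p) ^ n) k i ≤ ∑ l, v l * ((Matrix.of p) ^ n) l i :=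
    Finset.single_le_sum (fun l _ => mul_nonneg (hv_nonneg l) (pow_nonneg' p hp n l i))
      (Finset.mem_univ k)
  calc 0 < v k * ((Matrix.of p) ^ n) k i := mul_pos hk hn
    _ ≤ _ := hle
  |>.trans_eq this

private lemma stat_unique {M : ℕ} (hM : 1 ≤ M) (p : Fin M → Fin M → ℝ)
    (hp : ∀ i j, 0 ≤ p i j)
    (h_irred : ∀ i j, ∃ n : ℕ, 0 < n ∧ 0 < ((Matrix.of p) ^ n) i j)
    (vv ϖ : Fin M → ℝ)
    (hvv_nonneg : ∀ i, 0 ≤ vv i) (hvv_sum : ∑ i, vv i = 1)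
    (hvv : ∀ j, ∑ i, vv i * p i j = vv j)
    (hϖ_nonneg : ∀ i, 0 ≤ ϖ i) (hϖ_sum : ∑ i, ϖ i = 1)
    (hϖ : ∀ j, ∑ i, ϖ i * p i j = ϖ j) : vv = ϖ := by
  haveI : NeZero M := ⟨by omega⟩
  -- ϖ is everywhere positive
  have hϖk : ∃ k, 0 < ϖ k := by
    by_contra h
    push_neg at h
    have : ∑ i, ϖ i = 0 := Finset.sum_eq_zero fun i _ => le_antisymm (h i) (hϖ_nonneg i)
    rw [hϖ_sum] at this; norm_num at this
  obtain ⟨k₀, hk₀⟩ := hϖk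
  have hϖ_pos : ∀ i, 0 < ϖ i := stat_pos p hp h_irred ϖ hϖ_nonneg hϖ k₀ hk₀
  -- t = min vv i / ϖ i
  have hne : (Finset.univ : Finset (Fin M)).Nonempty := Finset.univ_nonempty
  set t := Finset.univ.inf' hne (fun i => vv i / ϖ i) with ht
  obtain ⟨k, -, hk⟩ := Finset.exists_mem_eq_inf' hne (fun i => vv i / ϖ i)
  have htle : ∀ i, t * ϖ i ≤ vv i := by
    intro i
    have h1 : t ≤ vv i / ϖ i := Finset.inf'_le _ (Finset.mem_univ i)
    calc t * ϖ i ≤ (vv i / ϖ i) * ϖ i := by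
          exact mul_le_mul_of_nonneg_right h1 (hϖ_pos i).le
      _ = vv i := div_mul_cancel₀ _ (hϖ_pos i).ne'
  -- u := vv - t • ϖ is a nonneg stationary vector with u k = 0
  set u : Fin M → ℝ := fun i => vv i - t * ϖ i with hu
  have hu_nonneg : ∀ i, 0 ≤ u i := fun i => sub_nonneg.2 (htle i)
  have hu_stat : ∀ j, ∑ i, u i * p i j = u j := by
    intro j
    simp only [hu, sub_mul, mul_assoc, Finset.sum_sub_distrib, hvv j, ← Finset.mul_sum]
    rw [hϖ j]
  have huk : u k = 0 := by
    have htk : t = vv k / ϖ k := by rw [ht]; exact hk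
    simp only [hu, htk, div_mul_cancel₀ _ (hϖ_pos k).ne', sub_self]
  have hu_zero : ∀ i, u i = 0 := by
    by_contra h
    push_neg at h
    obtain ⟨i, hi⟩ := h
    have hipos : 0 < u i := lt_of_le_of_ne (hu_nonneg i) (Ne.symm hi)
    have := stat_pos p hp h_irred u hu_nonneg hu_stat i hipos k
    rw [huk] at this; exact lt_irrefl 0 this
  have hvv_eq : ∀ i, vv i = t * ϖ i := fun i => by
    have := hu_zero i; simp only [hu] at this; linarith
  have ht1 : t = 1 := by
    have : ∑ i, vv i = t * ∑ i, ϖ i := by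
      rw [Finset.mul_sum]; exact Finset.sum_congr rfl fun i _ => hvv_eq i
    rw [hvv_sum, hϖ_sum, mul_one] at this
    exact this.symm
  funext i
  rw [hvv_eq i, ht1, one_mul]

private lemma exp_pdf_measurable (r : ℝ) : Measurable (exponentialPDF r) :=
  (measurable_exponentialPDFReal r).ennreal_ofReal

private lemma expMeasure_apply {r : ℝ} (hr : 0 < r) {s : Set ℝ} (hs : MeasurableSet s) :
    expMeasure r s = ∫⁻ x in s, exponentialPDF r x := by
  rw [expMeasure, gammaMeasure, withDensity_apply _ hs]
  rfl

private lemma expMeasure_Iic {r : ℝ} (hr : 0 < r) (x : ℝ) :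
    expMeasure r (Iic x) = ENNReal.ofReal (1 - exp (-r * x)) := by
  rw [expMeasure_apply hr measurableSet_Iic, lintegral_exponentialPDF_eq_antiDeriv hr x]
  split_ifs with h
  · rw [neg_mul]
  · have : 1 - exp (-r * x) ≤ 0 := by
      have : (1:ℝ) ≤ exp (-r * x) := by
        rw [Real.one_le_exp_iff]
        nlinarith
      linarith
    rw [ENNReal.ofReal_of_nonpos this, ENNReal.ofReal_zero]

private lemma exp_lint_shift {r : ℝ} (hr : 0 < r) {S : Set ℝ} (hS : MeasurableSet S)
    (hS0 : S ⊆ Ioi 0) {t : ℝ} (ht : 0 ≤ t) :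
    ∫⁻ b in {b | b - t ∈ S}, exponentialPDF r b
      = ENNReal.ofReal (exp (-(r * t))) * ∫⁻ x in S, exponentialPDF r x := by
  have hmeas : MeasurableSet {b : ℝ | b - t ∈ S} :=
    (measurable_id.sub_const t) hS
  have hmap : (volume : Measure ℝ) = Measure.map (· + t) volume :=
    (map_add_right_eq_self volume t).symm
  calc ∫⁻ b in {b | b - t ∈ S}, exponentialPDF r b ∂volume
      = ∫⁻ b in {b | b - t ∈ S}, exponentialPDF r b ∂(Measure.map (· + t) volume) := by
        rw [← hmap]
    _ = ∫⁻ x in (· + t) ⁻¹' {b | b - t ∈ S}, exponentialPDF r (x + t) := by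
        exact setLIntegral_map hmeas (exp_pdf_measurable r) (measurable_add_const t)
    _ = ∫⁻ x in S, exponentialPDF r (x + t) := by
        congr 1
        ext x
        simp
    _ = ∫⁻ x in S, ENNReal.ofReal (exp (-(r * t))) * exponentialPDF r x := by
        apply setLIntegral_congr_fun hS
        intro x hx
        beta_reduce
        have hx0 : 0 < x := hS0 hx
        rw [exponentialPDF_of_nonneg (by linarith), exponentialPDF_of_nonneg hx0.le,
          ← ENNReal.ofReal_mul (exp_nonneg _)]
        have he : -(r * (x + t)) = -(r * t) + -(r * x) := by ring
        rw [he, Real.exp_add]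
        ring
    _ = ENNReal.ofReal (exp (-(r * t))) * ∫⁻ x in S, exponentialPDF r x := by
        rw [lintegral_const_mul _ (exp_pdf_measurable r)]

private lemma exp_lint_ofReal {r : ℝ} (hr : 0 < r) {S : Set ℝ} (hS : MeasurableSet S)
    (hS0 : S ⊆ Ioi 0) :
    ∫⁻ x in S, exponentialPDF r x = ENNReal.ofReal (∫ x in S, r * exp (-r * x)) := by
  have hint : IntegrableOn (fun x => r * exp (-r * x)) S volume := by
    exact ((exp_neg_integrableOn_Ioi 0 hr).mono_set hS0).const_mul r
  rw [ofReal_integral_eq_lintegral_ofReal hint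
    (Filter.Eventually.of_forall fun x => by positivity)]
  apply setLIntegral_congr_fun hS
  intro x hx
  beta_reduce
  rw [exponentialPDF_of_nonneg (le_of_lt (hS0 hx)), neg_mul]

private lemma exp_lint_Ioi_one {r : ℝ} (hr : 0 < r) :
    ∫⁻ x in Ioi 0, exponentialPDF r x = 1 := by
  have h1 := lintegral_exponentialPDF_eq_one hr
  have h2 : ∫⁻ x in Iic 0, exponentialPDF r x = 0 := by
    rw [lintegral_exponentialPDF_eq_antiDeriv hr 0]
    simp
  have h3 := lintegral_add_compl (exponentialPDF r) (measurableSet_Iic (a := (0:ℝ)))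
    (μ := volume)
  rw [compl_Iic, h1, h2, zero_add] at h3
  exact h3

private lemma iic_spanning : IsCountablySpanning (range (Iic : ℝ → Set ℝ)) := by
  refine ⟨fun n => Iic (n : ℝ), fun n => mem_range_self _, ?_⟩
  ext x
  simp only [mem_iUnion, mem_Iic, mem_univ, iff_true]
  exact ⟨⌈x⌉₊, Nat.le_ceil x⟩

private lemma gen_Iic : MeasurableSpace.generateFrom (range (Iic : ℝ → Set ℝ))
    = (inferInstance : MeasurableSpace ℝ) :=
  (BorelSpace.measurable_eq.trans (borel_eq_generateFrom_Iic (α := ℝ))).symm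

private lemma gen_R3 : (inferInstance : MeasurableSpace (ℝ × ℝ × ℝ)) =
    MeasurableSpace.generateFrom
      (image2 (· ×ˢ ·) {s : Set ℝ | MeasurableSet s}
        (image2 (· ×ˢ ·) {s : Set ℝ | MeasurableSet s} (range (Iic : ℝ → Set ℝ)))) := by
  have hinner : MeasurableSpace.generateFrom
      (image2 (· ×ˢ ·) {s : Set ℝ | MeasurableSet s} (range (Iic : ℝ → Set ℝ)))
      = (inferInstance : MeasurableSpace (ℝ × ℝ)) :=
    generateFrom_eq_prod MeasurableSpace.generateFrom_measurableSet gen_Iic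
      isCountablySpanning_measurableSet iic_spanning
  exact (generateFrom_eq_prod MeasurableSpace.generateFrom_measurableSet hinner
    isCountablySpanning_measurableSet
    (isCountablySpanning_measurableSet.prod iic_spanning)).symm

private lemma pi_R3 : IsPiSystem
    (image2 (· ×ˢ ·) {s : Set ℝ | MeasurableSet s}
      (image2 (· ×ˢ ·) {s : Set ℝ | MeasurableSet s} (range (Iic : ℝ → Set ℝ)))) :=
  MeasurableSpace.isPiSystem_measurableSet.prod (MeasurableSpace.isPiSystem_measurableSet.prod isPiSystem_Iic)

private lemma tendsto_aux {Ω : Type*} [MeasurableSpace Ω] (Pr : Measure Ω)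
    (T : Set Ω) (B : Ω → ℝ) (hB : Measurable B)
    (C : ℝ≥0∞) (hC : C ≠ ⊤) (r : ℝ) (hr : 0 < r)
    (h : ∀ n : ℕ, Pr (T ∩ {ω | B ω ≤ n}) = C * ENNReal.ofReal (1 - Real.exp (-r * n))) :
    Pr T = C := by
  have hmono : Monotone (fun n : ℕ => T ∩ {ω | B ω ≤ n}) := by
    intro m n hmn
    refine inter_subset_inter_right _ (fun ω hω => ?_)
    simp only [mem_setOf_eq] at hω ⊢
    calc B ω ≤ (m : ℝ) := hω
      _ ≤ (n : ℝ) := by exact_mod_cast hmn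
  have hU : ⋃ n : ℕ, (T ∩ {ω | B ω ≤ n}) = T := by
    ext ω
    simp only [mem_iUnion, mem_inter_iff, mem_setOf_eq]
    exact ⟨fun ⟨n, hn, _⟩ => hn, fun hT => ⟨⌈B ω⌉₊, hT, Nat.le_ceil _⟩⟩
  have h1 : Filter.Tendsto (fun n : ℕ => Pr (T ∩ {ω | B ω ≤ n})) Filter.atTop (nhds (Pr T)) := by
    have := tendsto_measure_iUnion_atTop (μ := Pr) hmono
    rwa [hU] at this
  have h2 : Filter.Tendsto (fun n : ℕ => Pr (T ∩ {ω | B ω ≤ n})) Filter.atTop (nhds C) := by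
    simp_rw [h]
    have hreal : Filter.Tendsto (fun n : ℕ => 1 - Real.exp (-r * n)) Filter.atTop (nhds 1) := by
      have hpow : Filter.Tendsto (fun n : ℕ => Real.exp (-r) ^ n) Filter.atTop (nhds 0) :=
        tendsto_pow_atTop_nhds_zero_of_lt_one (Real.exp_nonneg _)
          (Real.exp_lt_one_iff.mpr (by linarith))
      have : (fun n : ℕ => 1 - Real.exp (-r * n)) = fun n : ℕ => 1 - Real.exp (-r) ^ n := by
        funext n
        rw [show -r * (n : ℝ) = (n : ℝ) * (-r) by ring, Real.exp_nat_mul]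
      rw [this]
      simpa using (tendsto_const_nhds.sub hpow)
    have hofReal : Filter.Tendsto (fun n : ℕ => ENNReal.ofReal (1 - Real.exp (-r * n)))
        Filter.atTop (nhds 1) := by
      have := (ENNReal.continuous_ofReal.tendsto 1).comp hreal
      simpa [Function.comp_def] using this
    have := ENNReal.Tendsto.const_mul (a := C) hofReal (Or.inl one_ne_zero)
    simpa using this
  exact tendsto_nhds_unique h1 h2
/-- Markov-modulated alternating service model with exponential preparation times:
stationary waiting time `W` paired with the modulating state `Z`. For every state `j`,
`P[W = 0, Z = j] = ϖ_j - c_j` and on `(0,∞)` the (defective) law of `W` on `{Z = j}` has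
density `x ↦ μ_j c_j e^{-μ_j x}`, where
`c_j = ∑_i p_{i,j} E[e^{-μ_j W}; Z = i] α_i(μ_j)`. -/
theorem stmt0 {Ω : Type*} [MeasurableSpace Ω] (Pr : Measure Ω) [IsProbabilityMeasure Pr]
    (M : ℕ) (hM : 1 ≤ M)
    (p : Fin M → Fin M → ℝ) (ϖ : Fin M → ℝ) (μ : Fin M → ℝ)
    (hp_nonneg : ∀ i j, 0 ≤ p i j) (hp_row : ∀ i, ∑ j, p i j = 1)
    (h_irred : ∀ i j, ∃ n : ℕ, 0 < n ∧ 0 < ((Matrix.of p) ^ n) i j)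
    (hϖ_nonneg : ∀ i, 0 ≤ ϖ i) (hϖ_sum : ∑ i, ϖ i = 1)
    (hϖ_stat : ∀ j, ∑ i, ϖ i * p i j = ϖ j)
    (hμ : ∀ j, 0 < μ j)
    (ν : Fin M → Measure ℝ) (hν : ∀ i, IsProbabilityMeasure (ν i))
    (hν_supp : ∀ i, ν i (Set.Iio 0) = 0)
    (W : Ω → ℝ) (Z Z' : Ω → Fin M) (A B : Ω → ℝ)
    (hW : Measurable W) (hZ : Measurable Z) (hZ' : Measurable Z')
    (hA : Measurable A) (hB : Measurable B)
    (hW_nonneg : ∀ ω, 0 ≤ W ω)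
    -- Joint conditional structure: given `Z = i`, `Z' = j` w.p. `p i j` (independently of
    -- `W`); given `Z = i`, `A ~ ν i`, conditionally independent of `(W, Z')`; given
    -- `Z' = j`, `B ~ Exp(μ j)`, conditionally independent of `(W, Z, A)`.
    (h_joint : ∀ (i j : Fin M) (S_W S_A : Set ℝ),
      MeasurableSet S_W → MeasurableSet S_A → ∀ x : ℝ,
      Pr {ω | W ω ∈ S_W ∧ Z ω = i ∧ Z' ω = j ∧ A ω ∈ S_A ∧ B ω ≤ x}
        = Pr {ω | W ω ∈ S_W ∧ Z ω = i} * ENNReal.ofReal (p i j) * ν i S_A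
            * ENNReal.ofReal (1 - Real.exp (-(μ j) * x)))
    -- Stationarity: `(max (0, B - A - W), Z')` has the same joint law as `(W, Z)`.
    (h_stat : Measure.map (fun ω => (max 0 (B ω - A ω - W ω), Z' ω)) Pr
        = Measure.map (fun ω => (W ω, Z ω)) Pr)
    (α : Fin M → ℝ → ℝ) (hα : ∀ i s, α i s = ∫ x, Real.exp (-s * x) ∂(ν i))
    (c : Fin M → ℝ)
    (hc : ∀ j, c j = ∑ i, p i j *
      (∫ ω in {ω | Z ω = i}, Real.exp (-(μ j) * W ω) ∂Pr) * α i (μ j)) :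
    ∀ j : Fin M,
      Pr {ω | W ω = 0 ∧ Z ω = j} = ENNReal.ofReal (ϖ j - c j)
        ∧ ∀ S : Set ℝ, MeasurableSet S → S ⊆ Set.Ioi 0 →
            Pr {ω | W ω ∈ S ∧ Z ω = j}
              = ENNReal.ofReal (∫ x in S, μ j * c j * Real.exp (-(μ j) * x)) := by
  have hZs : ∀ i : Fin M, MeasurableSet {ω | Z ω = i} :=
    fun i => hZ (measurableSet_singleton i)
  have hZ's : ∀ i : Fin M, MeasurableSet {ω | Z' ω = i} :=
    fun i => hZ' (measurableSet_singleton i)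
  have hBAW : Measurable fun ω => B ω - A ω - W ω := (hB.sub hA).sub hW
  -- (A) joint law of (Z, Z')
  have haveA : ∀ i j : Fin M, Pr {ω | Z ω = i ∧ Z' ω = j}
      = Pr {ω | Z ω = i} * ENNReal.ofReal (p i j) := by
    intro i j
    refine tendsto_aux Pr _ B hB _
      (ENNReal.mul_ne_top (measure_ne_top Pr _) ENNReal.ofReal_ne_top) (μ j) (hμ j) ?_
    intro n
    have h := h_joint i j Set.univ Set.univ MeasurableSet.univ MeasurableSet.univ n
    have hset1 : {ω | W ω ∈ Set.univ ∧ Z ω = i ∧ Z' ω = j ∧ A ω ∈ Set.univ ∧ B ω ≤ (n : ℝ)}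
        = {ω | Z ω = i ∧ Z' ω = j} ∩ {ω | B ω ≤ (n : ℝ)} := by
      ext ω; simp only [Set.mem_univ, true_and, Set.mem_inter_iff, Set.mem_setOf_eq]; tauto
    have hset2 : {ω | W ω ∈ Set.univ ∧ Z ω = i} = {ω | Z ω = i} := by
      ext ω; simp
    haveI := hν i
    rw [hset1, hset2, measure_univ, mul_one] at h
    exact h
  -- (B) the core density computation
  have haveB : ∀ (i j : Fin M) (S : Set ℝ), MeasurableSet S → S ⊆ Set.Ioi 0 →
      Pr {ω | B ω - A ω - W ω ∈ S ∧ Z ω = i ∧ Z' ω = j}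
        = ENNReal.ofReal (p i j * (∫ ω in {ω | Z ω = i}, Real.exp (-(μ j) * W ω) ∂Pr)
            * α i (μ j)) * ∫⁻ x in S, exponentialPDF (μ j) x := by
    intro i j S hS hS0
    haveI := hν i
    haveI : IsProbabilityMeasure (expMeasure (μ j)) := isProbabilityMeasure_expMeasure (hμ j)
    set T : Set Ω := {ω | Z ω = i ∧ Z' ω = j} with hT_def
    have hT : MeasurableSet T := (hZs i).inter (hZ's j)
    set η : Measure ℝ := Measure.map W (Pr.restrict {ω | Z ω = i}) with hη_def
    haveI : IsFiniteMeasure η := by rw [hη_def]; exact Measure.isFiniteMeasure_map _ _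
    have hfWAB : Measurable (fun ω => (W ω, (A ω, B ω)) : Ω → ℝ × ℝ × ℝ) :=
      hW.prodMk (hA.prodMk hB)
    have hη_apply : ∀ s : Set ℝ, MeasurableSet s → η s = Pr {ω | W ω ∈ s ∧ Z ω = i} := by
      intro s hs
      rw [hη_def, Measure.map_apply hW hs, Measure.restrict_apply (hW hs)]
      rfl
    have hmeasExpν : Measurable fun a : ℝ => ENNReal.ofReal (Real.exp (-(μ j) * a)) :=
      (Real.measurable_exp.comp (measurable_id.const_mul _)).ennreal_ofReal
    have haeν : ∀ᵐ a ∂(ν i), 0 ≤ a := by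
      rw [ae_iff]
      have h1 : {a : ℝ | ¬ 0 ≤ a} = Set.Iio 0 := by ext a; simp [not_le]
      rw [h1]; exact hν_supp i
    set G : ℝ≥0∞ := ∫⁻ x in S, exponentialPDF (μ j) x with hG_def
    set ρ : Measure (ℝ × ℝ × ℝ) := η.prod ((ν i).prod (expMeasure (μ j))) with hρ_def
    set κ : Measure (ℝ × ℝ × ℝ) :=
      Measure.map (fun ω => (W ω, (A ω, B ω))) (Pr.restrict T) with hκ_def
    haveI : IsFiniteMeasure κ := by rw [hκ_def]; exact Measure.isFiniteMeasure_map _ _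
    have hρuniv : ρ Set.univ = Pr {ω | Z ω = i} := by
      rw [hρ_def]
      rw [show (Set.univ : Set (ℝ × ℝ × ℝ)) = Set.univ ×ˢ (Set.univ ×ˢ Set.univ) by
        rw [Set.univ_prod_univ, Set.univ_prod_univ]]
      rw [Measure.prod_prod, Measure.prod_prod, measure_univ (μ := ν i),
        measure_univ (μ := expMeasure (μ j)), one_mul, mul_one,
        hη_apply _ MeasurableSet.univ]
      congr 1
      ext ω; simp
    have hκρ : κ = ENNReal.ofReal (p i j) • ρ := by
      refine ext_of_generate_finite _ gen_R3 pi_R3 ?_ ?_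
      · rintro _ ⟨S_W, hSW, _, ⟨S_A, hSA, _, ⟨x, rfl⟩, rfl⟩, rfl⟩
        have hSWm : MeasurableSet S_W := hSW
        have hSAm : MeasurableSet S_A := hSA
        have hRect : MeasurableSet (S_W ×ˢ (S_A ×ˢ Set.Iic x)) :=
          hSWm.prod (hSAm.prod measurableSet_Iic)
        rw [hκ_def, Measure.map_apply hfWAB hRect, Measure.restrict_apply (hfWAB hRect)]
        have hsetEq : (fun ω => (W ω, (A ω, B ω))) ⁻¹' (S_W ×ˢ (S_A ×ˢ Set.Iic x)) ∩ T
            = {ω | W ω ∈ S_W ∧ Z ω = i ∧ Z' ω = j ∧ A ω ∈ S_A ∧ B ω ≤ x} := by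
          ext ω
          simp only [Set.mem_inter_iff, Set.mem_preimage, Set.mem_prod, Set.mem_Iic,
            Set.mem_setOf_eq, hT_def]
          tauto
        rw [hsetEq, h_joint i j S_W S_A hSWm hSAm x]
        rw [hρ_def, Measure.smul_apply, Measure.prod_prod, Measure.prod_prod,
          hη_apply S_W hSWm, expMeasure_Iic (hμ j) x, smul_eq_mul]
        ring
      · rw [hκ_def, Measure.map_apply hfWAB MeasurableSet.univ, Set.preimage_univ,
          Measure.restrict_apply_univ, hT_def, haveA i j, Measure.smul_apply, smul_eq_mul,
          hρuniv]
        ring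
    have hEmeas : MeasurableSet {x : ℝ × ℝ × ℝ | x.2.2 - x.2.1 - x.1 ∈ S} :=
      ((measurable_snd.snd.sub measurable_snd.fst).sub measurable_fst) hS
    have hκE : Pr {ω | B ω - A ω - W ω ∈ S ∧ Z ω = i ∧ Z' ω = j}
        = κ {x : ℝ × ℝ × ℝ | x.2.2 - x.2.1 - x.1 ∈ S} := by
      rw [hκ_def, Measure.map_apply hfWAB hEmeas, Measure.restrict_apply (hfWAB hEmeas)]
      rfl
    have hprod2 : ∀ w : ℝ, 0 ≤ w →
        ((ν i).prod (expMeasure (μ j))) {y : ℝ × ℝ | y.2 - y.1 - w ∈ S}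
          = (∫⁻ a, ENNReal.ofReal (Real.exp (-(μ j) * a)) ∂(ν i))
              * (ENNReal.ofReal (Real.exp (-(μ j) * w)) * G) := by
      intro w hw
      have hmeas2 : MeasurableSet {y : ℝ × ℝ | y.2 - y.1 - w ∈ S} :=
        ((measurable_snd.sub measurable_fst).sub_const w) hS
      rw [Measure.prod_apply hmeas2]
      have hinner : ∀ᵐ a ∂(ν i),
          (expMeasure (μ j)) (Prod.mk a ⁻¹' {y : ℝ × ℝ | y.2 - y.1 - w ∈ S})
            = ENNReal.ofReal (Real.exp (-(μ j) * a))
                * (ENNReal.ofReal (Real.exp (-(μ j) * w)) * G) := by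
        filter_upwards [haeν] with a ha
        have hpre : Prod.mk a ⁻¹' {y : ℝ × ℝ | y.2 - y.1 - w ∈ S}
            = {b : ℝ | b - (a + w) ∈ S} := by
          ext b
          simp only [Set.mem_preimage, Set.mem_setOf_eq, sub_sub]
        have hBmeas : MeasurableSet {b : ℝ | b - (a + w) ∈ S} :=
          (measurable_id.sub_const (a + w)) hS
        rw [hpre, expMeasure_apply (hμ j) hBmeas, exp_lint_shift (hμ j) hS hS0 (by linarith)]
        rw [show -((μ j) * (a + w)) = -(μ j) * a + -(μ j) * w by ring, Real.exp_add,
          ENNReal.ofReal_mul (Real.exp_nonneg _), ← hG_def]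
        ring
      rw [lintegral_congr_ae hinner, lintegral_mul_const _ hmeasExpν]
    have haeW : ∀ᵐ w ∂η, 0 ≤ w := by
      rw [ae_iff]
      have h1 : {w : ℝ | ¬ 0 ≤ w} = Set.Iio 0 := by ext a; simp [not_le]
      rw [h1, hη_def, Measure.map_apply hW measurableSet_Iio]
      have h2 : W ⁻¹' Set.Iio 0 = ∅ := by
        ext ω
        simp only [Set.mem_preimage, Set.mem_Iio, Set.mem_empty_iff_false, iff_false, not_lt]
        exact hW_nonneg ω
      rw [h2]
      simp
    have hρE : ρ {x : ℝ × ℝ × ℝ | x.2.2 - x.2.1 - x.1 ∈ S}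
        = (∫⁻ a, ENNReal.ofReal (Real.exp (-(μ j) * a)) ∂(ν i))
            * ((∫⁻ w, ENNReal.ofReal (Real.exp (-(μ j) * w)) ∂η) * G) := by
      rw [hρ_def, Measure.prod_apply hEmeas]
      have hcong : ∀ᵐ w ∂η,
          ((ν i).prod (expMeasure (μ j)))
              (Prod.mk w ⁻¹' {x : ℝ × ℝ × ℝ | x.2.2 - x.2.1 - x.1 ∈ S})
            = (∫⁻ a, ENNReal.ofReal (Real.exp (-(μ j) * a)) ∂(ν i))
                * (ENNReal.ofReal (Real.exp (-(μ j) * w)) * G) := by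
        filter_upwards [haeW] with w hw
        have hpre : Prod.mk w ⁻¹' {x : ℝ × ℝ × ℝ | x.2.2 - x.2.1 - x.1 ∈ S}
            = {y : ℝ × ℝ | y.2 - y.1 - w ∈ S} := rfl
        rw [hpre, hprod2 w hw]
      rw [lintegral_congr_ae hcong, lintegral_const_mul _ (hmeasExpν.mul_const G),
        lintegral_mul_const _ hmeasExpν]
    have hexpWmeas : Measurable fun ω => Real.exp (-(μ j) * W ω) :=
      Real.measurable_exp.comp (hW.const_mul _)
    have hIA : (∫⁻ a, ENNReal.ofReal (Real.exp (-(μ j) * a)) ∂(ν i))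
        = ENNReal.ofReal (α i (μ j)) := by
      rw [hα i (μ j)]
      refine (ofReal_integral_eq_lintegral_ofReal ?_ ?_).symm
      · refine Integrable.mono' (integrable_const 1)
          (Real.measurable_exp.comp (measurable_id.const_mul _)).aestronglyMeasurable ?_
        filter_upwards [haeν] with a ha
        rw [Real.norm_eq_abs, abs_of_nonneg (Real.exp_nonneg _)]
        refine Real.exp_le_one_iff.mpr ?_
        nlinarith [hμ j]
      · exact Filter.Eventually.of_forall fun a => Real.exp_nonneg _
    have hIW : (∫⁻ w, ENNReal.ofReal (Real.exp (-(μ j) * w)) ∂η)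
        = ENNReal.ofReal (∫ ω in {ω | Z ω = i}, Real.exp (-(μ j) * W ω) ∂Pr) := by
      rw [hη_def, lintegral_map hmeasExpν hW]
      refine (ofReal_integral_eq_lintegral_ofReal ?_ ?_).symm
      · refine Integrable.mono' (integrable_const 1) hexpWmeas.aestronglyMeasurable ?_
        refine Filter.Eventually.of_forall fun ω => ?_
        rw [Real.norm_eq_abs, abs_of_nonneg (Real.exp_nonneg _)]
        refine Real.exp_le_one_iff.mpr ?_
        nlinarith [hμ j, hW_nonneg ω]
      · exact Filter.Eventually.of_forall fun ω => Real.exp_nonneg _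
    have hEint_nonneg : 0 ≤ ∫ ω in {ω | Z ω = i}, Real.exp (-(μ j) * W ω) ∂Pr :=
      setIntegral_nonneg (hZs i) fun ω _ => Real.exp_nonneg _
    rw [hκE, hκρ, Measure.smul_apply, smul_eq_mul, hρE, hIA, hIW,
      ENNReal.ofReal_mul (mul_nonneg (hp_nonneg i j) hEint_nonneg),
      ENNReal.ofReal_mul (hp_nonneg i j)]
    ring
  -- stationarity transfer
  have hmaxmeas : Measurable fun ω => (max 0 (B ω - A ω - W ω), Z' ω) :=
    (measurable_const.max hBAW).prodMk hZ'
  have hWZmeas : Measurable fun ω => (W ω, Z ω) := hW.prodMk hZ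
  have hstat_apply : ∀ (S : Set ℝ) (jj : Fin M), MeasurableSet S →
      Pr {ω | W ω ∈ S ∧ Z ω = jj}
        = Pr {ω | max 0 (B ω - A ω - W ω) ∈ S ∧ Z' ω = jj} := by
    intro S jj hS
    have hSp : MeasurableSet (S ×ˢ ({jj} : Set (Fin M))) := hS.prod (measurableSet_singleton jj)
    have h1 := congrArg (fun m : Measure (ℝ × Fin M) => m (S ×ˢ ({jj} : Set (Fin M)))) h_stat
    rw [Measure.map_apply hmaxmeas hSp, Measure.map_apply hWZmeas hSp] at h1
    have e1 : (fun ω => (max 0 (B ω - A ω - W ω), Z' ω)) ⁻¹' (S ×ˢ ({jj} : Set (Fin M)))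
        = {ω | max 0 (B ω - A ω - W ω) ∈ S ∧ Z' ω = jj} := rfl
    have e2 : (fun ω => (W ω, Z ω)) ⁻¹' (S ×ˢ ({jj} : Set (Fin M)))
        = {ω | W ω ∈ S ∧ Z ω = jj} := rfl
    rw [e1, e2] at h1
    exact h1.symm
  -- KEY identity
  have hKEY : ∀ (jj : Fin M) (S : Set ℝ), MeasurableSet S → S ⊆ Set.Ioi 0 →
      Pr {ω | W ω ∈ S ∧ Z ω = jj}
        = ENNReal.ofReal (c jj) * ∫⁻ x in S, exponentialPDF (μ jj) x := by
    intro j S hS hS0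
    rw [hstat_apply S j hS]
    have hmaxset : {ω | max 0 (B ω - A ω - W ω) ∈ S ∧ Z' ω = j}
        = {ω | B ω - A ω - W ω ∈ S ∧ Z' ω = j} := by
      ext ω
      simp only [Set.mem_setOf_eq]
      refine and_congr_left fun _ => ?_
      rcases le_or_gt (B ω - A ω - W ω) 0 with h | h
      · rw [max_eq_left h]
        constructor
        · intro h0
          have h2 := hS0 h0
          rw [Set.mem_Ioi] at h2
          exact absurd h2 (lt_irrefl 0)
        · intro h0; have h2 := hS0 h0; rw [Set.mem_Ioi] at h2; linarith
      · rw [max_eq_right h.le]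
    rw [hmaxset]
    have hpart : {ω | B ω - A ω - W ω ∈ S ∧ Z' ω = j}
        = ⋃ i, {ω | B ω - A ω - W ω ∈ S ∧ Z ω = i ∧ Z' ω = j} := by
      ext ω
      simp only [Set.mem_setOf_eq, Set.mem_iUnion]
      exact ⟨fun ⟨h1, h2⟩ => ⟨Z ω, h1, rfl, h2⟩, fun ⟨i, h1, _, h3⟩ => ⟨h1, h3⟩⟩
    have hdisj : Pairwise (Function.onFun Disjoint
        fun i => {ω | B ω - A ω - W ω ∈ S ∧ Z ω = i ∧ Z' ω = j}) := by
      intro a b hab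
      exact Set.disjoint_left.mpr fun ω h1 h2 => hab (h1.2.1.symm.trans h2.2.1)
    have hsm : ∀ i : Fin M,
        MeasurableSet {ω | B ω - A ω - W ω ∈ S ∧ Z ω = i ∧ Z' ω = j} :=
      fun i => (hBAW hS).inter ((hZs i).inter (hZ's j))
    rw [hpart, measure_iUnion hdisj hsm, tsum_fintype,
      Finset.sum_congr rfl fun i _ => haveB i j S hS hS0, ← Finset.sum_mul]
    congr 1
    rw [hc j, ENNReal.ofReal_sum_of_nonneg fun i _ =>
      mul_nonneg (mul_nonneg (hp_nonneg i j)
        (setIntegral_nonneg (hZs i) fun ω _ => Real.exp_nonneg _))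
        (hα i (μ j) ▸ integral_nonneg fun x => Real.exp_nonneg _)]
  -- stationary distribution of Z is ϖ
  have hZ'eq : ∀ jj : Fin M, Pr {ω | Z' ω = jj} = Pr {ω | Z ω = jj} := by
    intro jj
    have hSp : MeasurableSet ((Set.univ : Set ℝ) ×ˢ ({jj} : Set (Fin M))) :=
      MeasurableSet.univ.prod (measurableSet_singleton jj)
    have h1 := congrArg
      (fun m : Measure (ℝ × Fin M) => m (Set.univ ×ˢ ({jj} : Set (Fin M)))) h_stat
    rw [Measure.map_apply hmaxmeas hSp, Measure.map_apply hWZmeas hSp] at h1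
    have e1 : (fun ω => (max 0 (B ω - A ω - W ω), Z' ω)) ⁻¹'
        ((Set.univ : Set ℝ) ×ˢ ({jj} : Set (Fin M))) = {ω | Z' ω = jj} := by
      ext ω
      simp only [Set.mem_preimage, Set.mem_prod, Set.mem_univ, true_and,
        Set.mem_singleton_iff, Set.mem_setOf_eq]
    have e2 : (fun ω => (W ω, Z ω)) ⁻¹' ((Set.univ : Set ℝ) ×ˢ ({jj} : Set (Fin M)))
        = {ω | Z ω = jj} := by
      ext ω
      simp only [Set.mem_preimage, Set.mem_prod, Set.mem_univ, true_and,
        Set.mem_singleton_iff, Set.mem_setOf_eq]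
    rw [e1, e2] at h1
    exact h1
  have hZpart : ∀ jj : Fin M,
      Pr {ω | Z ω = jj} = ∑ i, Pr {ω | Z ω = i} * ENNReal.ofReal (p i jj) := by
    intro jj
    rw [← hZ'eq jj]
    have hp2 : {ω | Z' ω = jj} = ⋃ i, {ω | Z ω = i ∧ Z' ω = jj} := by
      ext ω
      simp only [Set.mem_setOf_eq, Set.mem_iUnion]
      exact ⟨fun h => ⟨Z ω, rfl, h⟩, fun ⟨i, _, h2⟩ => h2⟩
    have hdisj : Pairwise (Function.onFun Disjoint fun i => {ω | Z ω = i ∧ Z' ω = jj}) := by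
      intro a b hab
      exact Set.disjoint_left.mpr fun ω h1 h2 => hab (h1.1.symm.trans h2.1)
    rw [hp2, measure_iUnion hdisj (fun i => (hZs i).inter (hZ's jj)), tsum_fintype]
    exact Finset.sum_congr rfl fun i _ => haveA i jj
  have hPZ : ∀ jj : Fin M, Pr {ω | Z ω = jj} = ENNReal.ofReal (ϖ jj) := by
    have hπ_sum : ∑ i, (Pr {ω | Z ω = i}).toReal = 1 := by
      have hu : (Set.univ : Set Ω) = ⋃ i, {ω | Z ω = i} := by
        ext ω; simp
      have hdisj : Pairwise (Function.onFun Disjoint fun i : Fin M => {ω | Z ω = i}) := by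
        intro a b hab
        exact Set.disjoint_left.mpr fun ω h1 h2 => hab (h1.symm.trans h2)
      have h1 : ∑ i, Pr {ω | Z ω = i} = 1 := by
        rw [← tsum_fintype (L := SummationFilter.unconditional _), ← measure_iUnion hdisj (fun i => hZs i), ← hu, measure_univ]
      rw [← ENNReal.toReal_sum fun i _ => measure_ne_top Pr _, h1, ENNReal.toReal_one]
    have hπ_stat : ∀ jj, ∑ i, (Pr {ω | Z ω = i}).toReal * p i jj
        = (Pr {ω | Z ω = jj}).toReal := by
      intro jj
      have h1 := congrArg ENNReal.toReal (hZpart jj)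
      rw [ENNReal.toReal_sum fun i _ =>
        ENNReal.mul_ne_top (measure_ne_top Pr _) ENNReal.ofReal_ne_top] at h1
      have h2 : ∀ i : Fin M, (Pr {ω | Z ω = i} * ENNReal.ofReal (p i jj)).toReal
          = (Pr {ω | Z ω = i}).toReal * p i jj := fun i => by
        rw [ENNReal.toReal_mul, ENNReal.toReal_ofReal (hp_nonneg i jj)]
      rw [Finset.sum_congr rfl fun i _ => h2 i] at h1
      exact h1.symm
    have hπϖ : (fun i => (Pr {ω | Z ω = i}).toReal) = ϖ :=
      stat_unique hM p hp_nonneg h_irred _ ϖ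
        (fun i => ENNReal.toReal_nonneg) hπ_sum hπ_stat hϖ_nonneg hϖ_sum hϖ_stat
    intro jj
    rw [← congrFun hπϖ jj]
    exact (ENNReal.ofReal_toReal (measure_ne_top Pr _)).symm
  -- conclusion
  intro j
  have hc_nonneg : 0 ≤ c j := by
    rw [hc j]
    refine Finset.sum_nonneg fun i _ => ?_
    refine mul_nonneg (mul_nonneg (hp_nonneg i j)
      (setIntegral_nonneg (hZs i) fun ω _ => Real.exp_nonneg _)) ?_
    rw [hα]
    exact integral_nonneg fun x => Real.exp_nonneg _
  have hIoi : Pr {ω | W ω ∈ Set.Ioi 0 ∧ Z ω = j} = ENNReal.ofReal (c j) := by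
    rw [hKEY j (Set.Ioi 0) measurableSet_Ioi (subset_refl _), exp_lint_Ioi_one (hμ j), mul_one]
  constructor
  · have hsplit : {ω | Z ω = j}
        = {ω | W ω = 0 ∧ Z ω = j} ∪ {ω | W ω ∈ Set.Ioi 0 ∧ Z ω = j} := by
      ext ω
      simp only [Set.mem_setOf_eq, Set.mem_union, Set.mem_Ioi]
      constructor
      · intro h
        rcases (hW_nonneg ω).eq_or_lt with h0 | h0
        · exact Or.inl ⟨h0.symm, h⟩
        · exact Or.inr ⟨h0, h⟩
      · rintro (⟨_, h⟩ | ⟨_, h⟩) <;> exact h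
    have hdisj : Disjoint {ω | W ω = 0 ∧ Z ω = j} {ω | W ω ∈ Set.Ioi 0 ∧ Z ω = j} :=
      Set.disjoint_left.mpr fun ω h1 h2 => by
        have h3 := h2.1
        rw [Set.mem_Ioi, h1.1] at h3
        exact lt_irrefl 0 h3
    have hm2 : MeasurableSet {ω | W ω ∈ Set.Ioi 0 ∧ Z ω = j} :=
      (hW measurableSet_Ioi).inter (hZs j)
    have hsum : Pr {ω | Z ω = j}
        = Pr {ω | W ω = 0 ∧ Z ω = j} + Pr {ω | W ω ∈ Set.Ioi 0 ∧ Z ω = j} := by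
      rw [hsplit]
      exact measure_union hdisj hm2
    rw [hPZ j, hIoi] at hsum
    rw [ENNReal.ofReal_sub _ hc_nonneg]
    exact ENNReal.eq_sub_of_add_eq ENNReal.ofReal_ne_top hsum.symm
  · intro S hS hS0
    rw [hKEY j S hS hS0, exp_lint_ofReal (hμ j) hS hS0, ← ENNReal.ofReal_mul hc_nonneg]
    congr 1
    have h1 : ∀ x : ℝ, μ j * c j * Real.exp (-(μ j) * x)
        = c j * (μ j * Real.exp (-(μ j) * x)) := fun x => by ring
    simp_rw [h1, integral_const_mul]
end

section
/- Let μ > 0, let Y be a nonnegative random variable, and let B be exponentially distributed with rate μ, independent of Y. Then for every s ≥ 0: E[e^{−s·max(0, B − Y)}] = 1 − (s/(μ + s))·E[e^{−μY}]. -/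
open MeasureTheory ProbabilityTheory Set

lemma integral_exp_neg_mul_Ioi_zero' {c : ℝ} (hc : 0 < c) :
    ∫ x in Ioi (0:ℝ), Real.exp (-(c * x)) = 1 / c := by
  have h := integral_comp_mul_left_Ioi (fun u => Real.exp (-u)) 0 hc
  simp only [mul_zero] at h
  rw [h, integral_exp_neg_Ioi_zero, smul_eq_mul, mul_one, one_div]

/-- Let `μ > 0`, `Y` a nonnegative random variable and `B` exponentially distributed with
rate `μ` (i.e. with CDF `x ↦ 1 - exp (-μ x)`), independent of `Y`. Then for every `s ≥ 0`,
`E[exp (-s * max 0 (B - Y))] = 1 - (s / (μ + s)) * E[exp (-μ Y)]`. -/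
theorem stmt4 {Ω : Type*} [MeasurableSpace Ω] (Pr : Measure Ω) [IsProbabilityMeasure Pr]
    (μ : ℝ) (hμ : 0 < μ) (Y B : Ω → ℝ) (hY : Measurable Y) (hB : Measurable B)
    (hY_nonneg : ∀ ω, 0 ≤ Y ω)
    (hB_exp : ∀ x : ℝ, Pr {ω | B ω ≤ x} = ENNReal.ofReal (1 - Real.exp (-μ * x)))
    (h_indep : IndepFun B Y Pr) :
    ∀ s : ℝ, 0 ≤ s →
      ∫ ω, Real.exp (-s * max 0 (B ω - Y ω)) ∂Pr
        = 1 - (s / (μ + s)) * ∫ ω, Real.exp (-μ * Y ω) ∂Pr := by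
  intro s hs
  set M : Ω → ℝ := fun ω => max 0 (B ω - Y ω) with hMdef
  have hM_meas : Measurable M := measurable_const.max (hB.sub hY)
  have hM_nonneg : ∀ ω, 0 ≤ M ω := fun ω => le_max_left _ _
  have hμs : 0 < μ + s := by linarith
  -- integrability of exp(-μ Y)
  have hexpY_meas : Measurable fun ω => Real.exp (-μ * Y ω) :=
    (measurable_const.mul hY).exp
  have hexpY_int : Integrable (fun ω => Real.exp (-μ * Y ω)) Pr := by
    apply (integrable_const (1:ℝ)).mono' hexpY_meas.aestronglyMeasurable
    filter_upwards with ω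
    rw [Real.norm_eq_abs, abs_of_pos (Real.exp_pos _)]
    exact Real.exp_le_one_iff.mpr (by nlinarith [hY_nonneg ω])
  set I := ∫ ω, Real.exp (-μ * Y ω) ∂Pr with hIdef
  have hI_nonneg : 0 ≤ I := integral_nonneg fun ω => (Real.exp_pos _).le
  have hI_lin : ∫⁻ ω, ENNReal.ofReal (Real.exp (-μ * Y ω)) ∂Pr = ENNReal.ofReal I :=
    (ofReal_integral_eq_lintegral_ofReal hexpY_int
      (Filter.Eventually.of_forall fun ω => (Real.exp_pos _).le)).symm
  -- tail of B
  have h_tail : ∀ x : ℝ, 0 ≤ x →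
      Pr {ω | x < B ω} = ENNReal.ofReal (Real.exp (-μ * x)) := by
    intro x hx
    have hset : {ω | x < B ω} = {ω | B ω ≤ x}ᶜ := by ext ω; simp [not_le]
    have hmeas : MeasurableSet {ω | B ω ≤ x} := hB measurableSet_Iic
    have h0 : (0:ℝ) ≤ 1 - Real.exp (-μ * x) := by
      have : Real.exp (-μ * x) ≤ 1 := Real.exp_le_one_iff.mpr (by nlinarith)
      linarith
    rw [hset, measure_compl hmeas (measure_ne_top _ _), measure_univ, hB_exp x,
      ← ENNReal.ofReal_one, ← ENNReal.ofReal_sub _ h0]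
    norm_num
  -- joint law
  have h_map : Pr.map (fun ω => (Y ω, B ω)) = (Pr.map Y).prod (Pr.map B) :=
    (indepFun_iff_map_prod_eq_prod_map_map hY.aemeasurable hB.aemeasurable).mp h_indep.symm
  -- tail of M
  have h_tailM : ∀ t : ℝ, t ∈ Ioi (0:ℝ) →
      Pr {ω | t < M ω} = ENNReal.ofReal (Real.exp (-μ * t)) * ENNReal.ofReal I := by
    intro t ht
    rw [mem_Ioi] at ht
    have hsetM : {ω | t < M ω} = {ω | Y ω + t < B ω} := by
      ext ω
      simp only [hMdef, mem_setOf_eq, lt_max_iff]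
      constructor
      · rintro (h | h) <;> linarith
      · intro h; right; linarith
    have hS : MeasurableSet {p : ℝ × ℝ | p.1 + t < p.2} :=
      measurableSet_lt (measurable_fst.add_const t) measurable_snd
    have hpre : {ω | Y ω + t < B ω}
        = (fun ω => (Y ω, B ω)) ⁻¹' {p : ℝ × ℝ | p.1 + t < p.2} := rfl
    have hanti : Measurable fun y : ℝ => (Pr.map B) (Ioi (y + t)) :=
      Antitone.measurable fun y y' h =>
        measure_mono (Ioi_subset_Ioi (by linarith))
    rw [hsetM, hpre, ← Measure.map_apply (hY.prodMk hB) hS, h_map, Measure.prod_apply hS]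
    have hsec : ∀ y : ℝ, (Prod.mk y ⁻¹' {p : ℝ × ℝ | p.1 + t < p.2}) = Ioi (y + t) := by
      intro y; ext b; simp [mem_Ioi]
    calc ∫⁻ y, (Pr.map B) (Prod.mk y ⁻¹' {p : ℝ × ℝ | p.1 + t < p.2}) ∂(Pr.map Y)
        = ∫⁻ y, (Pr.map B) (Ioi (y + t)) ∂(Pr.map Y) := by simp_rw [hsec]
      _ = ∫⁻ ω, (Pr.map B) (Ioi (Y ω + t)) ∂Pr := lintegral_map hanti hY
      _ = ∫⁻ ω, ENNReal.ofReal (Real.exp (-μ * t))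
            * ENNReal.ofReal (Real.exp (-μ * Y ω)) ∂Pr := by
          refine lintegral_congr fun ω => ?_
          rw [Measure.map_apply hB measurableSet_Ioi,
            show B ⁻¹' Ioi (Y ω + t) = {ω' | Y ω + t < B ω'} from rfl,
            h_tail _ (by linarith [hY_nonneg ω]),
            show -μ * (Y ω + t) = -μ * t + -μ * Y ω by ring,
            Real.exp_add, ENNReal.ofReal_mul (Real.exp_pos _).le]
      _ = ENNReal.ofReal (Real.exp (-μ * t)) * ENNReal.ofReal I := by
          rw [lintegral_const_mul _ hexpY_meas.ennreal_ofReal, hI_lin]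
  -- the inner antiderivative
  have g_cont : Continuous fun t : ℝ => s * Real.exp (-s * t) :=
    continuous_const.mul ((continuous_const.mul continuous_id).rexp)
  have hinner : ∀ x : ℝ, ∫ t in (0:ℝ)..x, s * Real.exp (-s * t) = 1 - Real.exp (-s * x) := by
    intro x
    have hder : ∀ t ∈ Set.uIcc (0:ℝ) x,
        HasDerivAt (fun u => -Real.exp (-s * u)) (s * Real.exp (-s * t)) t := by
      intro t _
      have h1 : HasDerivAt (fun u : ℝ => -s * u) (-s) t := by
        simpa using (hasDerivAt_id t).const_mul (-s)
      have h2 := ((Real.hasDerivAt_exp (-s * t)).comp t h1).neg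
      refine h2.congr_deriv ?_
      ring
    rw [intervalIntegral.integral_eq_sub_of_hasDerivAt hder (g_cont.intervalIntegrable 0 x)]
    simp
    ring
  -- layer cake
  have key := lintegral_comp_eq_lintegral_meas_lt_mul Pr
    (Filter.Eventually.of_forall hM_nonneg) hM_meas.aemeasurable
    (fun t _ => g_cont.intervalIntegrable 0 t)
    (Filter.Eventually.of_forall fun t => mul_nonneg hs (Real.exp_pos _).le)
  simp_rw [hinner] at key
  -- compute the right-hand side of the layer cake identity
  have hRHS : ∫⁻ t in Ioi (0:ℝ), Pr {a | t < M a} * ENNReal.ofReal (s * Real.exp (-s * t))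
      = ENNReal.ofReal (I * s / (μ + s)) := by
    have h1 : ∀ t ∈ Ioi (0:ℝ),
        Pr {a | t < M a} * ENNReal.ofReal (s * Real.exp (-s * t))
          = ENNReal.ofReal (I * s) * ENNReal.ofReal (Real.exp (-(μ + s) * t)) := by
      intro t ht
      rw [h_tailM t ht, ← ENNReal.ofReal_mul (Real.exp_pos _).le,
        ← ENNReal.ofReal_mul (mul_nonneg (Real.exp_pos _).le hI_nonneg),
        ← ENNReal.ofReal_mul (mul_nonneg hI_nonneg hs)]
      congr 1
      rw [show -(μ + s) * t = -μ * t + -s * t by ring, Real.exp_add]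
      ring
    rw [setLIntegral_congr_fun measurableSet_Ioi h1,
      lintegral_const_mul _ (by fun_prop)]
    have h2 : ∫⁻ t in Ioi (0:ℝ), ENNReal.ofReal (Real.exp (-(μ + s) * t))
        = ENNReal.ofReal (1 / (μ + s)) := by
      rw [← ofReal_integral_eq_lintegral_ofReal (exp_neg_integrableOn_Ioi 0 hμs)
        (Filter.Eventually.of_forall fun x => (Real.exp_pos _).le)]
      congr 1
      simp_rw [neg_mul]
      exact integral_exp_neg_mul_Ioi_zero' hμs
    rw [h2, ← ENNReal.ofReal_mul (mul_nonneg hI_nonneg hs)]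
    congr 1
    rw [mul_one_div]
  -- back to the real-valued integral
  have hexpM_meas : Measurable fun ω => Real.exp (-s * M ω) :=
    (measurable_const.mul hM_meas).exp
  have hexpM_int : Integrable (fun ω => Real.exp (-s * M ω)) Pr := by
    apply (integrable_const (1:ℝ)).mono' hexpM_meas.aestronglyMeasurable
    filter_upwards with ω
    rw [Real.norm_eq_abs, abs_of_pos (Real.exp_pos _)]
    exact Real.exp_le_one_iff.mpr (by nlinarith [hM_nonneg ω])
  have hdiff_int : Integrable (fun ω => 1 - Real.exp (-s * M ω)) Pr :=
    (integrable_const 1).sub hexpM_int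
  have hdiff_nn : ∀ ω, 0 ≤ 1 - Real.exp (-s * M ω) := fun ω => by
    have : Real.exp (-s * M ω) ≤ 1 := Real.exp_le_one_iff.mpr (by nlinarith [hM_nonneg ω])
    linarith
  have hofReal : ENNReal.ofReal (∫ ω, (1 - Real.exp (-s * M ω)) ∂Pr)
      = ENNReal.ofReal (I * s / (μ + s)) := by
    rw [ofReal_integral_eq_lintegral_ofReal hdiff_int (Filter.Eventually.of_forall hdiff_nn),
      key, hRHS]
  have hre : ∫ ω, (1 - Real.exp (-s * M ω)) ∂Pr = I * s / (μ + s) :=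
    (ENNReal.ofReal_eq_ofReal_iff (integral_nonneg hdiff_nn)
      (div_nonneg (mul_nonneg hI_nonneg hs) hμs.le)).mp hofReal
  have hsplit : ∫ ω, (1 - Real.exp (-s * M ω)) ∂Pr
      = 1 - ∫ ω, Real.exp (-s * M ω) ∂Pr := by
    rw [integral_sub (integrable_const 1) hexpM_int, integral_const, probReal_univ]
    simp
  have : ∫ ω, Real.exp (-s * M ω) ∂Pr = 1 - I * s / (μ + s) := by
    rw [hsplit] at hre; linarith
  rw [this]
  field_simp
end

section
/- Let μ > 0, let N ≥ 1, let κ_1, …, κ_N ≥ 0 with Σ_{n=1}^N κ_n = 1, and let B have the mixed-Erlang distribution F_B(x) = Σ_{n=1}^N κ_n (1 − e^{−μx} Σ_{ℓ=0}^{n−1} (μx)^ℓ/ℓ!) for x ≥ 0. Let Y be a nonnegative random variable independent of B. Then for every s ≥ 0: E[e^{−s·max(0, B − Y)}] = 1 − Σ_{n=1}^N κ_n · E[e^{−μY} Σ_{ℓ=0}^{n−1} (μY)^ℓ/ℓ!] + Σ_{n=1}^N κ_n (μ/(μ+s))^n · E[e^{−μY} Σ_{ℓ=0}^{n−1} ((μ+s)Y)^ℓ/ℓ!].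 -/
open MeasureTheory ProbabilityTheory Filter Set Topology

noncomputable def eSum (c : ℝ) (n : ℕ) (x : ℝ) : ℝ :=
  ∑ ℓ ∈ Finset.range n, (c * x) ^ ℓ / ℓ.factorial

lemma eSum_nonneg {c x : ℝ} (h : 0 ≤ c * x) (n : ℕ) : 0 ≤ eSum c n x :=
  Finset.sum_nonneg fun ℓ _ => div_nonneg (pow_nonneg h ℓ) (Nat.cast_nonneg _)

lemma eSum_succ (c : ℝ) (n : ℕ) (hn : 1 ≤ n) (x : ℝ) :
    eSum c n x = eSum c (n - 1) x + (c * x) ^ (n - 1) / (n - 1).factorial := by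
  obtain ⟨m, rfl⟩ := Nat.exists_eq_add_of_le hn
  simp [eSum, Finset.sum_range_succ, Nat.add_comm 1 m]

lemma continuous_eSum (c : ℝ) (n : ℕ) : Continuous (eSum c n) := by
  unfold eSum
  exact continuous_finset_sum _ fun ℓ _ => (((continuous_const.mul continuous_id).pow ℓ).div_const _)

attribute [fun_prop] continuous_eSum

lemma hasDerivAt_eSum (c : ℝ) (n : ℕ) (x : ℝ) :
    HasDerivAt (eSum c n) (c * eSum c (n - 1) x) x := by
  have h : ∀ ℓ ∈ Finset.range n, HasDerivAt (fun x => (c * x) ^ ℓ / ℓ.factorial)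
      ((ℓ : ℝ) * (c * x) ^ (ℓ - 1) * c / ℓ.factorial) x := by
    intro ℓ _
    have h1 : HasDerivAt (fun x : ℝ => c * x) c x := by
      simpa using (hasDerivAt_id x).const_mul c
    exact (h1.pow ℓ).div_const _
  have hsum := HasDerivAt.fun_sum h
  have hd : (∑ ℓ ∈ Finset.range n, (ℓ : ℝ) * (c * x) ^ (ℓ - 1) * c / ℓ.factorial)
      = c * eSum c (n - 1) x := by
    cases n with
    | zero => simp [eSum]
    | succ m =>
      rw [Finset.sum_range_succ']
      simp only [Nat.add_sub_cancel, eSum, Finset.mul_sum, Nat.cast_zero, zero_mul, zero_div,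
        add_zero]
      refine Finset.sum_congr rfl fun ℓ _ => ?_
      rw [Nat.factorial_succ]
      push_cast
      have hf : (ℓ.factorial : ℝ) ≠ 0 := Nat.cast_ne_zero.mpr ℓ.factorial_ne_zero
      field_simp
  have : HasDerivAt (fun x => ∑ ℓ ∈ Finset.range n, (c * x) ^ ℓ / ℓ.factorial)
      (c * eSum c (n - 1) x) x := hd ▸ hsum
  exact this


-- bound 1 : e^{-μ x} * eSum μ n x ≤ 1 for 0 ≤ μ x
lemma exp_mul_eSum_self_le_one {c x : ℝ} (h : 0 ≤ c * x) (n : ℕ) :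
    Real.exp (-c * x) * eSum c n x ≤ 1 := by
  have h1 : eSum c n x ≤ Real.exp (c * x) := Real.sum_le_exp_of_nonneg h n
  have h2 : (0:ℝ) < Real.exp (-c * x) := Real.exp_pos _
  calc Real.exp (-c * x) * eSum c n x ≤ Real.exp (-c * x) * Real.exp (c * x) :=
        mul_le_mul_of_nonneg_left h1 h2.le
    _ = 1 := by rw [← Real.exp_add]; simp

-- bound 2 : e^{-μ x} * eSum c n x ≤ ∑ (c/μ)^ℓ for x ≥ 0, μ > 0, c ≥ 0
lemma exp_mul_eSum_le {μ c x : ℝ} (hμ : 0 < μ) (hc : 0 ≤ c) (hx : 0 ≤ x) (n : ℕ) :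
    Real.exp (-μ * x) * eSum c n x ≤ ∑ ℓ ∈ Finset.range n, (c / μ) ^ ℓ := by
  rw [eSum, Finset.mul_sum]
  refine Finset.sum_le_sum fun ℓ _ => ?_
  have key : (c * x) ^ ℓ = (c / μ) ^ ℓ * (μ * x) ^ ℓ := by
    rw [← mul_pow]; congr 1; field_simp
  rw [key]
  have h1 : Real.exp (-μ * x) * ((μ * x) ^ ℓ / ℓ.factorial) ≤ 1 := by
    have hμx : 0 ≤ μ * x := mul_nonneg hμ.le hx
    have : (μ * x) ^ ℓ / ℓ.factorial ≤ eSum μ (ℓ + 1) x := by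
      rw [eSum]
      exact Finset.single_le_sum
        (fun j _ => div_nonneg (pow_nonneg hμx j) (Nat.cast_nonneg _))
        (Finset.self_mem_range_succ ℓ)
    calc Real.exp (-μ * x) * ((μ * x) ^ ℓ / ℓ.factorial)
        ≤ Real.exp (-μ * x) * eSum μ (ℓ + 1) x :=
          mul_le_mul_of_nonneg_left this (Real.exp_pos _).le
      _ ≤ 1 := exp_mul_eSum_self_le_one hμx _
  calc Real.exp (-μ * x) * ((c / μ) ^ ℓ * (μ * x) ^ ℓ / ℓ.factorial)
      = (c / μ) ^ ℓ * (Real.exp (-μ * x) * ((μ * x) ^ ℓ / ℓ.factorial)) := by ring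
    _ ≤ (c / μ) ^ ℓ * 1 := by
        refine mul_le_mul_of_nonneg_left h1 (pow_nonneg (div_nonneg hc hμ.le) ℓ)
    _ = (c / μ) ^ ℓ := mul_one _

-- tendsto : e^{-λ t} * eSum c n (y + t) → 0
lemma tendsto_exp_mul_eSum (c lam y : ℝ) (hlam : 0 < lam) (n : ℕ) :
    Tendsto (fun t => Real.exp (-lam * t) * eSum c n (y + t)) atTop (𝓝 0) := by
  have : (fun t => Real.exp (-lam * t) * eSum c n (y + t))
      = fun t => ∑ ℓ ∈ Finset.range n, Real.exp (-lam * t) * (c * (y + t)) ^ ℓ / ℓ.factorial := by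
    funext t; rw [eSum, Finset.mul_sum]; congr 1; funext ℓ; ring
  rw [this]
  have h0 : Tendsto (fun _ : ℝ => (0:ℝ)) atTop (𝓝 0) := tendsto_const_nhds
  have := tendsto_finset_sum (Finset.range n) (f := fun ℓ t =>
      Real.exp (-lam * t) * (c * (y + t)) ^ ℓ / ℓ.factorial) (x := atTop)
      (a := fun _ => (0:ℝ)) ?_
  · simpa using this
  intro ℓ _
  show Tendsto (fun t => Real.exp (-lam * t) * (c * (y + t)) ^ ℓ / ℓ.factorial) atTop (𝓝 0)
  have hcomp : Tendsto (fun t : ℝ => lam * (y + t)) atTop atTop :=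
    (tendsto_atTop_add_const_left atTop y tendsto_id).const_mul_atTop hlam
  have h := (Real.tendsto_pow_mul_exp_neg_atTop_nhds_zero ℓ).comp hcomp
  have heq : (fun t => Real.exp (-lam * t) * (c * (y + t)) ^ ℓ / ℓ.factorial)
      = fun t => ((c / lam) ^ ℓ * Real.exp (lam * y) / ℓ.factorial) *
          ((lam * (y + t)) ^ ℓ * Real.exp (-(lam * (y + t)))) := by
    funext t
    have h1 : (c * (y + t)) ^ ℓ = (c / lam) ^ ℓ * (lam * (y + t)) ^ ℓ := by
      rw [← mul_pow]; congr 1; field_simp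
    have h2 : Real.exp (lam * y) * Real.exp (-(lam * (y + t))) = Real.exp (-lam * t) := by
      rw [← Real.exp_add]; congr 1; ring
    rw [h1, ← h2]; ring
  rw [heq]
  simpa using h.const_mul ((c / lam) ^ ℓ * Real.exp (lam * y) / ℓ.factorial)

lemma hasDerivAt_G {μ s : ℝ} (hμ : 0 < μ) (hs : 0 < s) (y : ℝ) {n : ℕ} (hn : 1 ≤ n) (t : ℝ) :
    HasDerivAt (fun t => -(Real.exp (-μ * y) * (Real.exp (-(μ + s) * t) *
        (eSum μ n (y + t) - (μ / (μ + s)) ^ n * eSum (μ + s) n (y + t)))))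
      (s * Real.exp (-s * t) * (Real.exp (-μ * (y + t)) * eSum μ n (y + t))) t := by
  have hlam : (0:ℝ) < μ + s := by linarith
  have he : HasDerivAt (fun t : ℝ => Real.exp (-(μ + s) * t))
      (Real.exp (-(μ + s) * t) * (-(μ + s))) t := by
    have : HasDerivAt (fun t : ℝ => -(μ + s) * t) (-(μ + s)) t := by
      simpa using (hasDerivAt_id t).const_mul (-(μ + s))
    exact this.exp
  have hyt : ∀ c : ℝ, HasDerivAt (fun t => eSum c n (y + t)) (c * eSum c (n - 1) (y + t)) t := by
    intro c
    have h1 : HasDerivAt (fun t : ℝ => y + t) 1 t := by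
      simpa using (hasDerivAt_id t).const_add y
    have := (hasDerivAt_eSum c n (y + t)).comp t h1; simp only [mul_one] at this; exact this
  have hQ : HasDerivAt (fun t => eSum μ n (y + t) - (μ / (μ + s)) ^ n * eSum (μ + s) n (y + t))
      (μ * eSum μ (n - 1) (y + t) -
        (μ / (μ + s)) ^ n * ((μ + s) * eSum (μ + s) (n - 1) (y + t))) t :=
    (hyt μ).sub ((hyt (μ + s)).const_mul _)
  have hG := ((he.mul hQ).const_mul (Real.exp (-μ * y))).neg
  refine hG.congr_deriv (Eq.symm ?_)
  -- now prove the equality of derivative values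
  have hE : Real.exp (-s * t) * Real.exp (-μ * (y + t))
      = Real.exp (-μ * y) * Real.exp (-(μ + s) * t) := by
    rw [← Real.exp_add, ← Real.exp_add]; congr 1; ring
  have hstep : ∀ c : ℝ, eSum c n (y + t)
      = eSum c (n - 1) (y + t) + (c * (y + t)) ^ (n - 1) / (n - 1).factorial :=
    fun c => eSum_succ c n hn (y + t)
  have hkey : μ * ((μ * (y + t)) ^ (n - 1) / (n - 1).factorial)
      = (μ / (μ + s)) ^ n * ((μ + s) * (((μ + s) * (y + t)) ^ (n - 1) / (n - 1).factorial)) := by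
    have h1 : (μ / (μ + s)) ^ n * (μ + s) ^ n = μ ^ n := by
      rw [div_pow, div_mul_cancel₀]
      exact pow_ne_zero _ hlam.ne'
    have h2 : μ * (μ * (y + t)) ^ (n - 1) = μ ^ n * (y + t) ^ (n - 1) := by
      rw [mul_pow, ← mul_assoc, ← pow_succ']
      congr 2
      omega
    have h3 : (μ + s) * ((μ + s) * (y + t)) ^ (n - 1) = (μ + s) ^ n * (y + t) ^ (n - 1) := by
      rw [mul_pow, ← mul_assoc, ← pow_succ']
      congr 2
      omega
    have h4 : μ * (μ * (y + t)) ^ (n - 1)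
        = (μ / (μ + s)) ^ n * ((μ + s) * ((μ + s) * (y + t)) ^ (n - 1)) := by
      rw [h2, h3, ← h1]; ring
    linear_combination h4 / ((n - 1).factorial : ℝ)
  rw [hstep μ, hstep (μ + s)]
  set a := eSum μ (n - 1) (y + t)
  set b := eSum (μ + s) (n - 1) (y + t)
  set P := (μ * (y + t)) ^ (n - 1) / ((n - 1).factorial : ℝ)
  set Q := ((μ + s) * (y + t)) ^ (n - 1) / ((n - 1).factorial : ℝ)
  linear_combination (s * (a + P)) * hE -
    (Real.exp (-μ * y) * Real.exp (-(μ + s) * t)) * hkey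

lemma integral_tail_erlang {μ s : ℝ} (hμ : 0 < μ) (hs : 0 < s) {y : ℝ} (hy : 0 ≤ y)
    {n : ℕ} (hn : 1 ≤ n) :
    (∫ t in Ioi (0:ℝ), s * Real.exp (-s * t) * (Real.exp (-μ * (y + t)) * eSum μ n (y + t)))
      = Real.exp (-μ * y) * eSum μ n y
        - (μ / (μ + s)) ^ n * (Real.exp (-μ * y) * eSum (μ + s) n y) := by
  have hlam : (0:ℝ) < μ + s := by linarith
  have hderiv := fun t (_ : t ∈ Ioi (0:ℝ)) => hasDerivAt_G hμ hs y hn t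
  have hcont : ContinuousWithinAt (fun t => -(Real.exp (-μ * y) * (Real.exp (-(μ + s) * t) *
        (eSum μ n (y + t) - (μ / (μ + s)) ^ n * eSum (μ + s) n (y + t))))) (Ici (0:ℝ)) 0 := by
    apply Continuous.continuousWithinAt
    fun_prop
  have htend : Tendsto (fun t => -(Real.exp (-μ * y) * (Real.exp (-(μ + s) * t) *
        (eSum μ n (y + t) - (μ / (μ + s)) ^ n * eSum (μ + s) n (y + t))))) atTop (𝓝 0) := by
    have h1 := tendsto_exp_mul_eSum μ (μ + s) y hlam n
    have h2 := (tendsto_exp_mul_eSum (μ + s) (μ + s) y hlam n).const_mul ((μ / (μ + s)) ^ n)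
    have := ((h1.sub h2).const_mul (Real.exp (-μ * y))).neg
    simp only [mul_zero, sub_zero, neg_zero] at this
    convert this using 2 with t
    ring
  have hpos : ∀ t ∈ Ioi (0:ℝ),
      0 ≤ s * Real.exp (-s * t) * (Real.exp (-μ * (y + t)) * eSum μ n (y + t)) := by
    intro t ht
    have h0 : (0:ℝ) ≤ μ * (y + t) := by
      have := ht.out
      positivity
    have h5 : 0 ≤ eSum μ n (y + t) := eSum_nonneg h0 n
    exact mul_nonneg (mul_nonneg hs.le (Real.exp_pos _).le) (mul_nonneg (Real.exp_pos _).le h5)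
  have := integral_Ioi_of_hasDerivAt_of_nonneg hcont hderiv hpos htend
  rw [this]
  simp only [add_zero, mul_zero, neg_zero, Real.exp_zero, zero_sub, neg_neg, one_mul]
  ring

lemma integrableOn_tail_erlang {μ s : ℝ} (hμ : 0 < μ) (hs : 0 < s) {y : ℝ} (hy : 0 ≤ y)
    {n : ℕ} (hn : 1 ≤ n) :
    IntegrableOn (fun t => s * Real.exp (-s * t) * (Real.exp (-μ * (y + t)) * eSum μ n (y + t)))
      (Ioi (0:ℝ)) := by
  have hlam : (0:ℝ) < μ + s := by linarith
  have hderiv := fun t (_ : t ∈ Ioi (0:ℝ)) => hasDerivAt_G hμ hs y hn t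
  have hcont : ContinuousWithinAt (fun t => -(Real.exp (-μ * y) * (Real.exp (-(μ + s) * t) *
        (eSum μ n (y + t) - (μ / (μ + s)) ^ n * eSum (μ + s) n (y + t))))) (Ici (0:ℝ)) 0 := by
    apply Continuous.continuousWithinAt
    fun_prop
  have htend : Tendsto (fun t => -(Real.exp (-μ * y) * (Real.exp (-(μ + s) * t) *
        (eSum μ n (y + t) - (μ / (μ + s)) ^ n * eSum (μ + s) n (y + t))))) atTop (𝓝 0) := by
    have h1 := tendsto_exp_mul_eSum μ (μ + s) y hlam n
    have h2 := (tendsto_exp_mul_eSum (μ + s) (μ + s) y hlam n).const_mul ((μ / (μ + s)) ^ n)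
    have := ((h1.sub h2).const_mul (Real.exp (-μ * y))).neg
    simp only [mul_zero, sub_zero, neg_zero] at this
    convert this using 2 with t
    ring
  have hpos : ∀ t ∈ Ioi (0:ℝ),
      0 ≤ s * Real.exp (-s * t) * (Real.exp (-μ * (y + t)) * eSum μ n (y + t)) := by
    intro t ht
    have h0 : (0:ℝ) ≤ μ * (y + t) := by
      have := ht.out
      positivity
    have h5 : 0 ≤ eSum μ n (y + t) := eSum_nonneg h0 n
    exact mul_nonneg (mul_nonneg hs.le (Real.exp_pos _).le) (mul_nonneg (Real.exp_pos _).le h5)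
  exact integrableOn_Ioi_deriv_of_nonneg hcont hderiv hpos htend

lemma pointwise_layer {s : ℝ} (hs : 0 < s) (m : ℝ) :
    (∫ t in Ioi (0:ℝ), Set.indicator (Iio m) (fun t => s * Real.exp (-s * t)) t)
      = 1 - Real.exp (-s * max 0 m) := by
  rw [integral_indicator measurableSet_Iio, Measure.restrict_restrict measurableSet_Iio,
    Set.Iio_inter_Ioi]
  rcases le_or_gt m 0 with hm | hm
  · rw [Set.Ioo_eq_empty (not_lt.mpr hm)]
    rw [max_eq_left hm]
    simp
  · rw [max_eq_right hm.le]
    rw [← integral_Ioc_eq_integral_Ioo, ← intervalIntegral.integral_of_le hm.le]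
    have hder : ∀ t ∈ Set.uIcc (0:ℝ) m, HasDerivAt (fun t => -Real.exp (-s * t))
        (s * Real.exp (-s * t)) t := by
      intro t _
      have h1 : HasDerivAt (fun t : ℝ => -s * t) (-s) t := by
        simpa using (hasDerivAt_id t).const_mul (-s)
      have := h1.exp.neg
      refine this.congr_deriv (Eq.symm ?_)
      ring
    have hint : IntervalIntegrable (fun t => s * Real.exp (-s * t)) volume 0 m :=
      (continuous_const.mul (Real.continuous_exp.comp
        (continuous_const.mul continuous_id))).intervalIntegrable 0 m
    rw [intervalIntegral.integral_eq_sub_of_hasDerivAt hder hint]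
    simp [Real.exp_zero]
    ring

lemma layer_cake (ν : Measure ℝ) [IsProbabilityMeasure ν] {s : ℝ} (hs : 0 < s) (y : ℝ) :
    ∫ b, Real.exp (-s * max 0 (b - y)) ∂ν
      = 1 - ∫ t in Ioi (0:ℝ), s * Real.exp (-s * t) * (ν (Ioi (y + t))).toReal := by
  set η := volume.restrict (Ioi (0:ℝ)) with hη
  set F : ℝ × ℝ → ℝ :=
    Set.indicator {p : ℝ × ℝ | y + p.2 < p.1} (fun p => s * Real.exp (-s * p.2)) with hFdef
  have hSm : MeasurableSet {p : ℝ × ℝ | y + p.2 < p.1} :=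
    measurableSet_lt (measurable_const.add measurable_snd) measurable_fst
  have hFmeas : Measurable F :=
    (measurable_const.mul (Real.continuous_exp.measurable.comp
      (measurable_const.mul measurable_snd))).indicator hSm
  have hFm : AEStronglyMeasurable F (ν.prod η) := hFmeas.aestronglyMeasurable
  have hFsec : ∀ b t : ℝ, F (b, t)
      = Set.indicator (Iio (b - y)) (fun t => s * Real.exp (-s * t)) t := by
    intro b t
    simp only [hFdef, Set.indicator_apply, Set.mem_setOf_eq, Set.mem_Iio]
    exact if_congr (by constructor <;> intro h <;> linarith) rfl rfl
  have hGint : IntegrableOn (fun t => s * Real.exp (-s * t)) (Ioi (0:ℝ)) :=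
    (exp_neg_integrableOn_Ioi 0 hs).const_mul s
  have hFnorm : ∀ p : ℝ × ℝ, ‖F p‖ ≤ s * Real.exp (-s * p.2) ∧ 0 ≤ F p := by
    intro p
    have hpos : 0 ≤ s * Real.exp (-s * p.2) := mul_nonneg hs.le (Real.exp_pos _).le
    constructor
    · rw [hFdef]
      rcases Set.indicator_eq_zero_or_self {p : ℝ × ℝ | y + p.2 < p.1}
        (fun p => s * Real.exp (-s * p.2)) p with h | h
      · rw [h]; simpa using hpos
      · rw [h, Real.norm_of_nonneg hpos]
    · rw [hFdef]
      rcases Set.indicator_eq_zero_or_self {p : ℝ × ℝ | y + p.2 < p.1}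
        (fun p => s * Real.exp (-s * p.2)) p with h | h
      · rw [h]
      · rw [h]; exact hpos
  have hFint : Integrable F (ν.prod η) := by
    rw [integrable_prod_iff hFm]
    constructor
    · refine Filter.Eventually.of_forall fun b => ?_
      have : (fun t => F (b, t)) =
          Set.indicator (Iio (b - y)) (fun t => s * Real.exp (-s * t)) := by
        funext t; exact hFsec b t
      rw [this]
      exact (hGint.integrable).indicator measurableSet_Iio
    · refine (integrable_const (∫ t, s * Real.exp (-s * t) ∂η)).mono'
        hFm.norm.integral_prod_right' (Filter.Eventually.of_forall fun b => ?_)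
      have h1 : 0 ≤ ∫ t, ‖F (b, t)‖ ∂η := integral_nonneg fun t => norm_nonneg _
      rw [Real.norm_of_nonneg h1]
      refine integral_mono_of_nonneg (Filter.Eventually.of_forall fun t => norm_nonneg _)
        hGint (Filter.Eventually.of_forall fun t => (hFnorm (b, t)).1)
  have hswap : ∫ b, (∫ t, F (b, t) ∂η) ∂ν = ∫ t, (∫ b, F (b, t) ∂ν) ∂η := by
    have huncurry : Function.uncurry (fun b t => F (b, t)) = F := by
      funext p; rcases p with ⟨b, t⟩; rfl
    exact integral_integral_swap (by rw [huncurry]; exact hFint)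
  have hinner_t : ∀ t : ℝ, (∫ b, F (b, t) ∂ν)
      = s * Real.exp (-s * t) * (ν (Ioi (y + t))).toReal := by
    intro t
    have : (fun b => F (b, t)) =
        Set.indicator (Ioi (y + t)) (fun _ => s * Real.exp (-s * t)) := by
      funext b
      simp only [hFdef, Set.indicator_apply, Set.mem_setOf_eq, Set.mem_Ioi]
    rw [this, integral_indicator_const _ measurableSet_Ioi, smul_eq_mul]
    rw [measureReal_def]
    ring
  have hinner_b : ∀ b : ℝ, Real.exp (-s * max 0 (b - y)) = 1 - ∫ t, F (b, t) ∂η := by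
    intro b
    have : (fun t => F (b, t)) =
        Set.indicator (Iio (b - y)) (fun t => s * Real.exp (-s * t)) := by
      funext t; exact hFsec b t
    rw [this, hη, pointwise_layer hs]
    ring
  calc ∫ b, Real.exp (-s * max 0 (b - y)) ∂ν
      = ∫ b, (1 - ∫ t, F (b, t) ∂η) ∂ν := by
        exact integral_congr_ae (Filter.Eventually.of_forall fun b => hinner_b b)
    _ = (∫ _, (1:ℝ) ∂ν) - ∫ b, (∫ t, F (b, t) ∂η) ∂ν := by
        refine integral_sub (integrable_const 1) ?_
        exact hFint.integral_prod_left
    _ = 1 - ∫ t, (∫ b, F (b, t) ∂ν) ∂η := by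
        rw [hswap]; simp
    _ = 1 - ∫ t in Ioi (0:ℝ), s * Real.exp (-s * t) * (ν (Ioi (y + t))).toReal := by
        rw [hη]
        congr 1
        exact integral_congr_ae (Filter.Eventually.of_forall fun t => hinner_t t)

/-- Mixed-Erlang `B` (CDF `x ↦ ∑_{n=1}^N κ_n (1 - e^{-μx} ∑_{ℓ<n} (μx)^ℓ/ℓ!)` for `x ≥ 0`)
independent of a nonnegative `Y`: the transform identity
`E[e^{-s max(0, B-Y)}] = 1 - ∑_n κ_n E[e^{-μY} ∑_{ℓ<n} (μY)^ℓ/ℓ!]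
  + ∑_n κ_n (μ/(μ+s))^n E[e^{-μY} ∑_{ℓ<n} ((μ+s)Y)^ℓ/ℓ!]` for all `s ≥ 0`. -/
theorem stmt5 {Ω : Type*} [MeasurableSpace Ω] (Pr : Measure Ω) [IsProbabilityMeasure Pr]
    (μ : ℝ) (hμ : 0 < μ) (N : ℕ) (hN : 1 ≤ N) (κ : ℕ → ℝ)
    (hκ_nonneg : ∀ n, 0 ≤ κ n) (hκ_sum : ∑ n ∈ Finset.Icc 1 N, κ n = 1)
    (Y B : Ω → ℝ) (hY : Measurable Y) (hB : Measurable B)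
    (hY_nonneg : ∀ ω, 0 ≤ Y ω)
    (hB_nonneg : ∀ᵐ ω ∂Pr, 0 ≤ B ω)
    (hB_cdf : ∀ x : ℝ, 0 ≤ x →
      Pr {ω | B ω ≤ x} = ENNReal.ofReal (∑ n ∈ Finset.Icc 1 N, κ n *
        (1 - Real.exp (-μ * x) * ∑ ℓ ∈ Finset.range n, (μ * x) ^ ℓ / ℓ.factorial)))
    (h_indep : IndepFun B Y Pr) :
    ∀ s : ℝ, 0 ≤ s →
      ∫ ω, Real.exp (-s * max 0 (B ω - Y ω)) ∂Pr
        = 1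
          - ∑ n ∈ Finset.Icc 1 N, κ n *
              ∫ ω, Real.exp (-μ * Y ω) *
                ∑ ℓ ∈ Finset.range n, (μ * Y ω) ^ ℓ / ℓ.factorial ∂Pr
          + ∑ n ∈ Finset.Icc 1 N, κ n * (μ / (μ + s)) ^ n *
              ∫ ω, Real.exp (-μ * Y ω) *
                ∑ ℓ ∈ Finset.range n, ((μ + s) * Y ω) ^ ℓ / ℓ.factorial ∂Pr := by
  intro s hs0
  -- replace the statement's sums by `eSum`
  have hre : ∀ c : ℝ, ∀ n : ℕ, ∀ x : ℝ,
      (∑ ℓ ∈ Finset.range n, (c * x) ^ ℓ / (ℓ.factorial : ℝ)) = eSum c n x := fun _ _ _ => rfl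
  rcases hs0.eq_or_lt with rfl | hs
  · simp only [neg_zero, zero_mul, Real.exp_zero, integral_const, measure_univ,
      ENNReal.toReal_one, probReal_univ, smul_eq_mul, mul_one, one_mul, add_zero, div_self hμ.ne', one_pow]
    ring
  have hμY : ∀ ω, 0 ≤ μ * Y ω := fun ω => mul_nonneg hμ.le (hY_nonneg ω)
  have hlam : (0:ℝ) < μ + s := by linarith
  haveI hνB : IsProbabilityMeasure (Pr.map B) := Measure.isProbabilityMeasure_map hB.aemeasurable
  haveI hνY : IsProbabilityMeasure (Pr.map Y) := Measure.isProbabilityMeasure_map hY.aemeasurable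
  -- tail of the law of B
  have htail : ∀ x : ℝ, 0 ≤ x → ((Pr.map B) (Ioi x)).toReal
      = ∑ n ∈ Finset.Icc 1 N, κ n * (Real.exp (-μ * x) * eSum μ n x) := by
    intro x hx
    have hμx : 0 ≤ μ * x := mul_nonneg hμ.le hx
    have hT : ∀ n : ℕ, 0 ≤ Real.exp (-μ * x) * eSum μ n x
        ∧ Real.exp (-μ * x) * eSum μ n x ≤ 1 := fun n =>
      ⟨mul_nonneg (Real.exp_pos _).le (eSum_nonneg hμx n), exp_mul_eSum_self_le_one hμx n⟩
    set Fx := ∑ n ∈ Finset.Icc 1 N, κ n * (1 - Real.exp (-μ * x) * eSum μ n x) with hFxdef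
    have hF0 : 0 ≤ Fx := Finset.sum_nonneg fun n _ =>
      mul_nonneg (hκ_nonneg n) (by linarith [(hT n).2])
    have hF1 : Fx ≤ 1 := by
      rw [← hκ_sum]
      refine Finset.sum_le_sum fun n _ => ?_
      have := (hT n).1
      nlinarith [hκ_nonneg n]
    have hIic : (Pr.map B) (Iic x) = ENNReal.ofReal Fx := by
      rw [Measure.map_apply hB measurableSet_Iic]
      exact hB_cdf x hx
    have hIoi : (Pr.map B) (Ioi x) = 1 - ENNReal.ofReal Fx := by
      rw [← hIic, ← Set.compl_Iic,
        measure_compl measurableSet_Iic (measure_ne_top _ _), measure_univ]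
    rw [hIoi, ENNReal.toReal_sub_of_le (by
        rw [← ENNReal.ofReal_one]; exact ENNReal.ofReal_le_ofReal hF1) ENNReal.one_ne_top]
    rw [ENNReal.toReal_one, ENNReal.toReal_ofReal hF0]
    have hFx2 : Fx = (∑ n ∈ Finset.Icc 1 N, κ n)
        - ∑ n ∈ Finset.Icc 1 N, κ n * (Real.exp (-μ * x) * eSum μ n x) := by
      rw [hFxdef, ← Finset.sum_sub_distrib]
      exact Finset.sum_congr rfl fun n _ => by ring
    rw [hFx2, hκ_sum]
    ring
  -- inner integral for fixed y ≥ 0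
  have hinner : ∀ y : ℝ, 0 ≤ y →
      (∫ b, Real.exp (-s * max 0 (b - y)) ∂(Pr.map B))
        = 1 - ∑ n ∈ Finset.Icc 1 N, κ n * (Real.exp (-μ * y) * eSum μ n y)
            + ∑ n ∈ Finset.Icc 1 N, κ n *
                ((μ / (μ + s)) ^ n * (Real.exp (-μ * y) * eSum (μ + s) n y)) := by
    intro y hy
    rw [layer_cake _ hs y]
    have hcongr : ∫ t in Ioi (0:ℝ), s * Real.exp (-s * t) * ((Pr.map B) (Ioi (y + t))).toReal
        = ∫ t in Ioi (0:ℝ), ∑ n ∈ Finset.Icc 1 N,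
            κ n * (s * Real.exp (-s * t) * (Real.exp (-μ * (y + t)) * eSum μ n (y + t))) := by
      refine setIntegral_congr_fun measurableSet_Ioi fun t ht => ?_
      have hyt : (0:ℝ) ≤ y + t := by have := ht.out; linarith
      rw [htail (y + t) hyt, Finset.mul_sum]
      exact Finset.sum_congr rfl fun n _ => by ring
    rw [hcongr, integral_finset_sum _ (fun n hn =>
      ((integrableOn_tail_erlang hμ hs hy (Finset.mem_Icc.mp hn).1).const_mul (κ n)))]
    have : ∀ n ∈ Finset.Icc 1 N,
        (∫ t in Ioi (0:ℝ),
          κ n * (s * Real.exp (-s * t) * (Real.exp (-μ * (y + t)) * eSum μ n (y + t))))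
        = κ n * (Real.exp (-μ * y) * eSum μ n y
            - (μ / (μ + s)) ^ n * (Real.exp (-μ * y) * eSum (μ + s) n y)) := by
      intro n hn
      rw [MeasureTheory.integral_const_mul, integral_tail_erlang hμ hs hy (Finset.mem_Icc.mp hn).1]
    rw [Finset.sum_congr rfl this]
    have hsplit : ∑ n ∈ Finset.Icc 1 N, κ n * (Real.exp (-μ * y) * eSum μ n y
          - (μ / (μ + s)) ^ n * (Real.exp (-μ * y) * eSum (μ + s) n y))
        = ∑ n ∈ Finset.Icc 1 N, κ n * (Real.exp (-μ * y) * eSum μ n y)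
          - ∑ n ∈ Finset.Icc 1 N, κ n *
              ((μ / (μ + s)) ^ n * (Real.exp (-μ * y) * eSum (μ + s) n y)) := by
      rw [← Finset.sum_sub_distrib]
      exact Finset.sum_congr rfl fun n _ => by ring
    rw [hsplit]
    ring
  -- reduce to the product measure
  have hmap : Pr.map (fun ω => (B ω, Y ω)) = (Pr.map B).prod (Pr.map Y) :=
    (indepFun_iff_map_prod_eq_prod_map_map hB.aemeasurable hY.aemeasurable).mp h_indep
  have hfcont : Continuous (fun p : ℝ × ℝ => Real.exp (-s * max 0 (p.1 - p.2))) :=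
    Real.continuous_exp.comp (continuous_const.mul
      (continuous_const.max (continuous_fst.sub continuous_snd)))
  have hfint : Integrable (fun p : ℝ × ℝ => Real.exp (-s * max 0 (p.1 - p.2)))
      ((Pr.map B).prod (Pr.map Y)) := by
    refine Integrable.mono' (integrable_const 1) hfcont.aestronglyMeasurable
      (Filter.Eventually.of_forall fun p => ?_)
    rw [Real.norm_of_nonneg (Real.exp_pos _).le, ← Real.exp_zero]
    refine Real.exp_le_exp.mpr ?_
    have h1 : 0 ≤ max 0 (p.1 - p.2) := le_max_left _ _
    nlinarith
  have hLHS : ∫ ω, Real.exp (-s * max 0 (B ω - Y ω)) ∂Pr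
      = ∫ y, (∫ b, Real.exp (-s * max 0 (b - y)) ∂(Pr.map B)) ∂(Pr.map Y) := by
    rw [← integral_prod_symm _ hfint, ← hmap,
      integral_map (hB.aemeasurable.prodMk hY.aemeasurable) hfcont.aestronglyMeasurable]
  rw [hLHS]
  -- substitute the inner formula (a.e. y ≥ 0)
  have haeY : ∀ᵐ y ∂(Pr.map Y), 0 ≤ y :=
    (ae_map_iff hY.aemeasurable measurableSet_Ici).mpr
      (Filter.Eventually.of_forall fun ω => hY_nonneg ω)
  have hstep1 : ∫ y, (∫ b, Real.exp (-s * max 0 (b - y)) ∂(Pr.map B)) ∂(Pr.map Y)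
      = ∫ y, (1 - ∑ n ∈ Finset.Icc 1 N, κ n * (Real.exp (-μ * y) * eSum μ n y)
            + ∑ n ∈ Finset.Icc 1 N, κ n *
                ((μ / (μ + s)) ^ n * (Real.exp (-μ * y) * eSum (μ + s) n y))) ∂(Pr.map Y) :=
    integral_congr_ae (haeY.mono fun y hy => hinner y hy)
  have hgcont : Continuous (fun y : ℝ =>
      1 - ∑ n ∈ Finset.Icc 1 N, κ n * (Real.exp (-μ * y) * eSum μ n y)
        + ∑ n ∈ Finset.Icc 1 N, κ n *
            ((μ / (μ + s)) ^ n * (Real.exp (-μ * y) * eSum (μ + s) n y))) := by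
    refine Continuous.add (Continuous.sub continuous_const ?_) ?_
    · exact continuous_finset_sum _ fun n _ => continuous_const.mul
        ((Real.continuous_exp.comp (continuous_const.mul continuous_id)).mul
          (continuous_eSum μ n))
    · exact continuous_finset_sum _ fun n _ => continuous_const.mul (continuous_const.mul
        ((Real.continuous_exp.comp (continuous_const.mul continuous_id)).mul
          (continuous_eSum (μ + s) n)))
  rw [hstep1, integral_map hY.aemeasurable hgcont.aestronglyMeasurable]
  -- linearity over Pr
  have hI1 : ∀ n : ℕ, Integrable (fun ω => Real.exp (-μ * Y ω) * eSum μ n (Y ω)) Pr := by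
    intro n
    refine Integrable.mono' (integrable_const 1)
      (((Real.continuous_exp.comp (continuous_const.mul continuous_id)).mul
        (continuous_eSum μ n)).measurable.comp hY).aestronglyMeasurable
      (Filter.Eventually.of_forall fun ω => ?_)
    rw [Real.norm_of_nonneg (mul_nonneg (Real.exp_pos _).le (eSum_nonneg (hμY ω) n))]
    exact exp_mul_eSum_self_le_one (hμY ω) n
  have hI2 : ∀ n : ℕ, Integrable (fun ω => Real.exp (-μ * Y ω) * eSum (μ + s) n (Y ω)) Pr := by
    intro n
    refine Integrable.mono'
      (integrable_const (∑ ℓ ∈ Finset.range n, ((μ + s) / μ) ^ ℓ))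
      (((Real.continuous_exp.comp (continuous_const.mul continuous_id)).mul
        (continuous_eSum (μ + s) n)).measurable.comp hY).aestronglyMeasurable
      (Filter.Eventually.of_forall fun ω => ?_)
    have h0 : 0 ≤ (μ + s) * Y ω := mul_nonneg hlam.le (hY_nonneg ω)
    rw [Real.norm_of_nonneg (mul_nonneg (Real.exp_pos _).le (eSum_nonneg h0 n))]
    exact exp_mul_eSum_le hμ hlam.le (hY_nonneg ω) n
  have hf1 : Integrable (fun ω => ∑ n ∈ Finset.Icc 1 N,
      κ n * (Real.exp (-μ * Y ω) * eSum μ n (Y ω))) Pr :=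
    integrable_finset_sum _ fun n _ => (hI1 n).const_mul (κ n)
  have hf2 : Integrable (fun ω => ∑ n ∈ Finset.Icc 1 N,
      κ n * ((μ / (μ + s)) ^ n * (Real.exp (-μ * Y ω) * eSum (μ + s) n (Y ω)))) Pr :=
    integrable_finset_sum _ fun n _ => ((hI2 n).const_mul _).const_mul (κ n)
  have hsub : Integrable (fun ω => 1 - ∑ n ∈ Finset.Icc 1 N,
      κ n * (Real.exp (-μ * Y ω) * eSum μ n (Y ω))) Pr := (integrable_const 1).sub hf1
  rw [integral_add hsub hf2,
    integral_sub (integrable_const 1) hf1,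
    integral_finset_sum _ (fun n _ => (hI1 n).const_mul (κ n)),
    integral_finset_sum _ (fun n _ => ((hI2 n).const_mul _).const_mul (κ n))]
  simp only [integral_const, measure_univ, ENNReal.toReal_one, probReal_univ, smul_eq_mul, mul_one,
    MeasureTheory.integral_const_mul]
  have hS1 : (∑ n ∈ Finset.Icc 1 N, κ n * ∫ ω, Real.exp (-μ * Y ω) *
        ∑ ℓ ∈ Finset.range n, (μ * Y ω) ^ ℓ / ℓ.factorial ∂Pr)
      = ∑ n ∈ Finset.Icc 1 N, κ n * ∫ ω, Real.exp (-μ * Y ω) * eSum μ n (Y ω) ∂Pr := rfl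
  have hS2 : (∑ n ∈ Finset.Icc 1 N, κ n * (μ / (μ + s)) ^ n * ∫ ω, Real.exp (-μ * Y ω) *
        ∑ ℓ ∈ Finset.range n, ((μ + s) * Y ω) ^ ℓ / ℓ.factorial ∂Pr)
      = ∑ n ∈ Finset.Icc 1 N, κ n * ((μ / (μ + s)) ^ n *
          ∫ ω, Real.exp (-μ * Y ω) * eSum (μ + s) n (Y ω) ∂Pr) :=
    Finset.sum_congr rfl fun n _ => by rw [mul_assoc]; rfl
  rw [hS1, hS2]
end

section
/- Let λ > 0 and let A be exponentially distributed with rate λ. Let B ≥ 0 be a random variable with finite mean and let χ, ψ : [0,∞) → ℝ be functions with χ(0) = 1, ψ(0) = 0, both differentiable at 0, such that for every s ≥ 0 the conditional expectation satisfies E[e^{−sB} | A] = χ(s)·e^{−ψ(s)·A} almost surely, with ψ(s) ≥ 0 and χ(s) ≥ 0 for s ≥ 0, and suppose AB is integrable. Then E[A·B] = (2ψ′(0) − λχ′(0))/λ², and consequently the covariance satisfies Cov(A, B) = E[AB] − E[A]E[B] = ψ′(0)/λ². -/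
open MeasureTheory ProbabilityTheory Real Set Filter Topology
open scoped ENNReal NNReal

section Aux



lemma expMeasure_eq (lam : ℝ) :
    expMeasure lam = volume.withDensity
      (fun x => ((exponentialPDFReal lam x).toNNReal : ℝ≥0∞)) := rfl

lemma integral_expMeasure (lam : ℝ) (hlam : 0 < lam) (g : ℝ → ℝ) :
    ∫ x, g x ∂(expMeasure lam) = ∫ x in Ioi 0, lam * Real.exp (-(lam * x)) * g x := by
  rw [expMeasure_eq, integral_withDensity_eq_integral_smul
    (by measurability : Measurable fun x => (exponentialPDFReal lam x).toNNReal)]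
  rw [← setIntegral_eq_integral_of_ae_compl_eq_zero (s := Ioi 0) ?_]
  · refine setIntegral_congr_fun measurableSet_Ioi (fun x hx => ?_)
    have hx' : 0 ≤ x := le_of_lt hx
    simp only [NNReal.smul_def, smul_eq_mul,
      Real.coe_toNNReal _ (exponentialPDFReal_nonneg hlam x)]
    congr 1
    rw [exponentialPDFReal, gammaPDFReal, if_pos hx']
    simp [Real.Gamma_one]
  · have h0 : ∀ᵐ x : ℝ ∂volume, x ≠ (0:ℝ) := by
      rw [ae_iff]; simp
    filter_upwards [h0] with x hx0 hx
    have hx' : x < 0 := lt_of_le_of_ne (by simpa using hx) hx0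
    rw [NNReal.smul_def, Real.coe_toNNReal', exponentialPDFReal, gammaPDFReal,
      if_neg (not_le.2 hx')]
    simp

lemma Gamma_two' : Real.Gamma 2 = 1 := by
  rw [show (2:ℝ) = (1:ℕ) + 1 by norm_num, Real.Gamma_nat_eq_factorial]; norm_num

lemma integral_x_exp_expMeasure {lam c : ℝ} (hlam : 0 < lam) (hc : 0 ≤ c) :
    ∫ x, x * Real.exp (-c * x) ∂(expMeasure lam) = lam / (lam + c) ^ 2 := by
  have hr : 0 < lam + c := by linarith
  rw [integral_expMeasure lam hlam]
  have h : ∀ x ∈ Ioi (0:ℝ), lam * Real.exp (-(lam * x)) * (x * Real.exp (-c * x))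
      = lam * (x ^ ((2:ℝ)-1) * Real.exp (-((lam + c) * x))) := by
    intro x hx
    rw [show ((2:ℝ)-1) = 1 by norm_num, rpow_one,
      show -((lam+c)*x) = -(lam*x) + -c*x by ring, Real.exp_add]
    ring
  rw [setIntegral_congr_fun measurableSet_Ioi h, integral_const_mul,
    integral_rpow_mul_exp_neg_mul_Ioi (by norm_num) hr, Gamma_two',
    show ((2:ℝ)) = ((2:ℕ):ℝ) by norm_num, rpow_natCast]
  field_simp

lemma integral_exp_expMeasure {lam c : ℝ} (hlam : 0 < lam) (hc : 0 ≤ c) :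
    ∫ x, Real.exp (-c * x) ∂(expMeasure lam) = lam / (lam + c) := by
  have hr : 0 < lam + c := by linarith
  rw [integral_expMeasure lam hlam]
  have h : ∀ x ∈ Ioi (0:ℝ), lam * Real.exp (-(lam * x)) * Real.exp (-c * x)
      = lam * (x ^ ((1:ℝ)-1) * Real.exp (-((lam + c) * x))) := by
    intro x hx
    rw [show ((1:ℝ)-1) = 0 by norm_num, rpow_zero, one_mul,
      show -((lam+c)*x) = -(lam*x) + -c*x by ring, Real.exp_add]
    ring
  rw [setIntegral_congr_fun measurableSet_Ioi h, integral_const_mul,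
    integral_rpow_mul_exp_neg_mul_Ioi (by norm_num) hr, Real.Gamma_one, rpow_one]
  field_simp

lemma integrable_id_expMeasure {lam : ℝ} (hlam : 0 < lam) :
    Integrable (fun x => x) (expMeasure lam) := by
  rw [expMeasure_eq, integrable_withDensity_iff_integrable_smul
    (by measurability : Measurable fun x => (exponentialPDFReal lam x).toNNReal)]
  rw [← integrableOn_univ, ← Set.Iic_union_Ioi (a := (0:ℝ))]
  refine IntegrableOn.union ?_ ?_
  · have h0 : ∀ᵐ x : ℝ ∂(volume.restrict (Iic 0)), x ≠ (0:ℝ) := by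
      refine ae_iff.2 ?_
      have hset : {x : ℝ | ¬ x ≠ 0} = {0} := by ext x; simp
      rw [hset, Measure.restrict_apply (measurableSet_singleton 0)]
      exact measure_mono_null Set.inter_subset_left Real.volume_singleton
    refine (integrable_zero _ _ _).congr ?_
    filter_upwards [h0, ae_restrict_mem measurableSet_Iic] with x hx0 hx
    have hx' : x < 0 := lt_of_le_of_ne hx hx0
    rw [NNReal.smul_def, Real.coe_toNNReal', exponentialPDFReal, gammaPDFReal,
      if_neg (not_le.2 hx')]
    simp
  · have : IntegrableOn (fun x : ℝ => lam * (x ^ (1:ℝ) * Real.exp (-lam * x ^ (1:ℝ)))) (Ioi 0) :=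
      (integrableOn_rpow_mul_exp_neg_mul_rpow (by norm_num) zero_lt_one hlam).const_mul lam
    refine this.congr_fun (fun x hx => ?_) measurableSet_Ioi
    have hx' : (0:ℝ) ≤ x := le_of_lt hx
    rw [NNReal.smul_def, smul_eq_mul, Real.coe_toNNReal _ (exponentialPDFReal_nonneg hlam x),
      exponentialPDFReal, gammaPDFReal, if_pos hx', rpow_one]
    simp [Real.Gamma_one]
    ring_nf




lemma hasDerivWithinAt_integral_exp {Ω : Type*} [MeasurableSpace Ω] (Pr : Measure Ω)
    [IsFiniteMeasure Pr] (C B : Ω → ℝ) (hC : AEStronglyMeasurable C Pr) (hBm : Measurable B)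
    (hB_nonneg : ∀ᵐ ω ∂Pr, 0 ≤ B ω)
    (hC_int : Integrable C Pr) (hCB_int : Integrable (fun ω => C ω * B ω) Pr) :
    HasDerivWithinAt (fun s => ∫ ω, C ω * Real.exp (-s * B ω) ∂Pr)
      (-∫ ω, C ω * B ω ∂Pr) (Set.Ici 0) 0 := by
  have hint : ∀ s : ℝ, 0 ≤ s → Integrable (fun ω => C ω * Real.exp (-s * B ω)) Pr := by
    intro s hs
    refine Integrable.mono' hC_int.abs
      (hC.mul (Real.measurable_exp.comp ((measurable_const.mul hBm))).aestronglyMeasurable) ?_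
    filter_upwards [hB_nonneg] with ω hb
    rw [norm_mul, Real.norm_eq_abs, Real.norm_eq_abs, Real.abs_exp]
    have h1 : Real.exp (-s * B ω) ≤ 1 := Real.exp_le_one_iff.2 (by nlinarith)
    nlinarith [abs_nonneg (C ω), Real.exp_pos (-s * B ω)]
  rw [hasDerivWithinAt_iff_tendsto_slope, Set.Ici_sdiff_left]
  have key : Tendsto (fun s => ∫ ω, C ω * ((Real.exp (-s * B ω) - 1) / s) ∂Pr)
      (𝓝[Set.Ioi 0] 0) (𝓝 (∫ ω, C ω * (-B ω) ∂Pr)) := by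
    refine tendsto_integral_filter_of_dominated_convergence (fun ω => |C ω| * B ω)
      (Eventually.of_forall fun s => ?_) ?_ ?_ ?_
    · exact hC.mul (((Real.measurable_exp.comp (measurable_const.mul hBm)).sub
        measurable_const).div_const s).aestronglyMeasurable
    · filter_upwards [self_mem_nhdsWithin] with s hs
      have hs' : (0:ℝ) < s := hs
      filter_upwards [hB_nonneg] with ω hb
      have h1 : Real.exp (-s * B ω) ≤ 1 := Real.exp_le_one_iff.2 (by nlinarith)
      have h2 : 1 - s * B ω ≤ Real.exp (-s * B ω) := by
        have := Real.add_one_le_exp (-s * B ω); linarith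
      rw [norm_mul, Real.norm_eq_abs, Real.norm_eq_abs, abs_div,
        abs_of_pos hs', abs_of_nonpos (by linarith : Real.exp (-s * B ω) - 1 ≤ 0)]
      have h3 : -(Real.exp (-s * B ω) - 1) / s ≤ B ω := by
        rw [div_le_iff₀ hs']; nlinarith
      have h4 : 0 ≤ -(Real.exp (-s * B ω) - 1) / s := div_nonneg (by linarith) hs'.le
      nlinarith [abs_nonneg (C ω)]
    · refine hCB_int.abs.congr ?_
      filter_upwards [hB_nonneg] with ω hb
      rw [abs_mul, abs_of_nonneg hb]
    · refine Eventually.of_forall fun ω => ?_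
      have h1 : HasDerivAt (fun s : ℝ => -s * B ω) (-B ω) 0 := by
        simpa using ((hasDerivAt_id (0:ℝ)).neg.mul_const (B ω))
      have h2 : HasDerivAt (fun s : ℝ => Real.exp (-s * B ω)) (-B ω) 0 := by
        simpa using h1.exp
      have h3 := hasDerivAt_iff_tendsto_slope.1 h2
      have h4 : Tendsto (fun s => (Real.exp (-s * B ω) - 1) / s) (𝓝[Set.Ioi 0] 0)
          (𝓝 (-B ω)) := by
        refine (h3.mono_left (nhdsWithin_mono _ fun x hx => ne_of_gt hx)).congr fun s => ?_
        rw [slope_def_field]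
        simp
      exact h4.const_mul (C ω)
  have hval : (∫ ω, C ω * (-B ω) ∂Pr) = -∫ ω, C ω * B ω ∂Pr := by
    rw [← integral_neg]
    exact integral_congr_ae (Eventually.of_forall fun ω => by ring)
  rw [hval] at key
  refine key.congr' ?_
  · filter_upwards [self_mem_nhdsWithin] with s hs
    have hs' : (0:ℝ) < s := hs
    rw [slope_def_field]
    have hF0 : (∫ ω, C ω * Real.exp (-(0:ℝ) * B ω) ∂Pr) = ∫ ω, C ω ∂Pr := by
      refine integral_congr_ae (Eventually.of_forall fun ω => ?_); simp
    rw [hF0, sub_zero, ← integral_sub (hint s hs'.le) hC_int, ← integral_div]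
    refine integral_congr_ae (Eventually.of_forall fun ω => ?_)
    ring

end Aux

open MeasureTheory ProbabilityTheory

/-- If `A ~ Exp(λ)`, `B ≥ 0` has finite mean, `AB` is integrable, and
`E[e^{-sB} | A] = χ(s) e^{-ψ(s) A}` a.s. for every `s ≥ 0`, with `χ(0) = 1`, `ψ(0) = 0`,
`χ, ψ ≥ 0` on `[0,∞)` and both differentiable at `0` (from the right), then
`E[AB] = (2ψ'(0) - λχ'(0))/λ²` and `Cov(A,B) = E[AB] - E[A]E[B] = ψ'(0)/λ²`. -/
theorem stmt9 {Ω : Type*} [MeasurableSpace Ω] (Pr : Measure Ω) [IsProbabilityMeasure Pr]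
    (lam : ℝ) (hlam : 0 < lam)
    (A B : Ω → ℝ) (hA : Measurable A) (hB : Measurable B)
    (hA_exp : ∀ x : ℝ, Pr {ω | A ω ≤ x} = ENNReal.ofReal (1 - Real.exp (-lam * x)))
    (hB_nonneg : ∀ᵐ ω ∂Pr, 0 ≤ B ω) (hB_int : Integrable B Pr)
    (hAB_int : Integrable (fun ω => A ω * B ω) Pr)
    (χ ψ : ℝ → ℝ) (hχ0 : χ 0 = 1) (hψ0 : ψ 0 = 0)
    (hχ_nonneg : ∀ s : ℝ, 0 ≤ s → 0 ≤ χ s) (hψ_nonneg : ∀ s : ℝ, 0 ≤ s → 0 ≤ ψ s)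
    (χ' ψ' : ℝ)
    (hχd : HasDerivWithinAt χ χ' (Set.Ici 0) 0) (hψd : HasDerivWithinAt ψ ψ' (Set.Ici 0) 0)
    (h_cond : ∀ s : ℝ, 0 ≤ s →
      Pr[fun ω => Real.exp (-s * B ω) | MeasurableSpace.comap A inferInstance]
        =ᵐ[Pr] fun ω => χ s * Real.exp (-(ψ s) * A ω)) :
    (∫ ω, A ω * B ω ∂Pr) = (2 * ψ' - lam * χ') / lam ^ 2
      ∧ (∫ ω, A ω * B ω ∂Pr) - (∫ ω, A ω ∂Pr) * (∫ ω, B ω ∂Pr) = ψ' / lam ^ 2 := by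
  have hlam2 : lam ^ 2 ≠ 0 := pow_ne_zero 2 hlam.ne'
  have hm : MeasurableSpace.comap A inferInstance ≤ ‹MeasurableSpace Ω› := hA.comap_le
  haveI : SigmaFinite (Pr.trim hm) := by infer_instance
  -- distribution of A
  haveI : IsProbabilityMeasure (Pr.map A) := Measure.isProbabilityMeasure_map hA.aemeasurable
  haveI := isProbabilityMeasure_expMeasure hlam
  have hmap : Pr.map A = expMeasure lam := by
    refine MeasureTheory.Measure.ext_of_Iic (Pr.map A) (expMeasure lam) fun a => ?_
    rw [Measure.map_apply hA measurableSet_Iic]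
    have hL : Pr (A ⁻¹' Iic a) = ENNReal.ofReal (1 - Real.exp (-lam * a)) := hA_exp a
    rw [hL, show expMeasure lam = gammaMeasure 1 lam from rfl, gammaMeasure,
      withDensity_apply _ measurableSet_Iic]
    have : ∫⁻ y in Iic a, gammaPDF 1 lam y = ∫⁻ y in Iic a, exponentialPDF lam y := rfl
    rw [this, lintegral_exponentialPDF_eq_antiDeriv hlam a]
    split_ifs with h
    · ring_nf
    · push_neg at h
      rw [ENNReal.ofReal_eq_zero.2, ENNReal.ofReal_eq_zero.2]
      · have : (1:ℝ) ≤ Real.exp (-(lam * a)) := Real.one_le_exp (by nlinarith)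
        linarith
      · have : (1:ℝ) ≤ Real.exp (-lam * a) := Real.one_le_exp (by nlinarith)
        linarith
  -- A is nonneg and integrable
  have hA_int : Integrable A Pr := by
    have h := integrable_id_expMeasure hlam
    rw [← hmap] at h
    exact (integrable_map_measure aestronglyMeasurable_id hA.aemeasurable).1 h
  -- moments of A
  have hmoment : ∀ c : ℝ, 0 ≤ c →
      (∫ ω, A ω * Real.exp (-c * A ω) ∂Pr) = lam / (lam + c) ^ 2 := by
    intro c hc
    have hg : AEStronglyMeasurable (fun x : ℝ => x * Real.exp (-c * x)) (Pr.map A) :=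
      (measurable_id.mul (Real.measurable_exp.comp
        (measurable_const.mul measurable_id))).aestronglyMeasurable
    calc (∫ ω, A ω * Real.exp (-c * A ω) ∂Pr)
        = ∫ x, x * Real.exp (-c * x) ∂(Pr.map A) := (integral_map hA.aemeasurable hg).symm
      _ = lam / (lam + c) ^ 2 := by rw [hmap, integral_x_exp_expMeasure hlam hc]
  have h_expA : ∀ c : ℝ, 0 ≤ c →
      (∫ ω, Real.exp (-c * A ω) ∂Pr) = lam / (lam + c) := by
    intro c hc
    have hg : AEStronglyMeasurable (fun x : ℝ => Real.exp (-c * x)) (Pr.map A) :=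
      (Real.measurable_exp.comp (measurable_const.mul measurable_id)).aestronglyMeasurable
    calc (∫ ω, Real.exp (-c * A ω) ∂Pr)
        = ∫ x, Real.exp (-c * x) ∂(Pr.map A) := (integral_map hA.aemeasurable hg).symm
      _ = lam / (lam + c) := by rw [hmap, integral_exp_expMeasure hlam hc]
  have hmean : (∫ ω, A ω ∂Pr) = 1 / lam := by
    have h0 := hmoment 0 le_rfl
    have he : (∫ ω, A ω * Real.exp (-(0:ℝ) * A ω) ∂Pr) = ∫ ω, A ω ∂Pr :=
      integral_congr_ae (Eventually.of_forall fun ω => by simp)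
    rw [he] at h0
    rw [h0]
    field_simp
    ring
  -- measurability of A wrt m
  have hAm : StronglyMeasurable[MeasurableSpace.comap A inferInstance] A :=
    (Measurable.of_comap_le le_rfl).stronglyMeasurable
  -- key identities
  have key1 : ∀ s : ℝ, 0 ≤ s →
      (∫ ω, A ω * Real.exp (-s * B ω) ∂Pr) = χ s * (lam / (lam + ψ s) ^ 2) := by
    intro s hs
    have hg_int : Integrable (fun ω => Real.exp (-s * B ω)) Pr := by
      refine Integrable.mono' (integrable_const (1:ℝ))
        (Real.measurable_exp.comp (measurable_const.mul hB)).aestronglyMeasurable ?_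
      filter_upwards [hB_nonneg] with ω hb
      rw [Real.norm_eq_abs, Real.abs_exp]
      exact Real.exp_le_one_iff.2 (by nlinarith)
    have hfg_int : Integrable (A * fun ω => Real.exp (-s * B ω)) Pr := by
      refine Integrable.mono' hA_int.abs
        (hA.aestronglyMeasurable.mul
          (Real.measurable_exp.comp (measurable_const.mul hB)).aestronglyMeasurable) ?_
      filter_upwards [hB_nonneg] with ω hb
      rw [Pi.mul_apply, norm_mul, Real.norm_eq_abs, Real.norm_eq_abs, Real.abs_exp]
      have h1 : Real.exp (-s * B ω) ≤ 1 := Real.exp_le_one_iff.2 (by nlinarith)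
      nlinarith [abs_nonneg (A ω), Real.exp_pos (-s * B ω)]
    have hpull := condExp_mul_of_stronglyMeasurable_left hAm hfg_int hg_int
    calc (∫ ω, A ω * Real.exp (-s * B ω) ∂Pr)
        = ∫ ω, (Pr[(A * fun ω => Real.exp (-s * B ω)) | MeasurableSpace.comap A inferInstance]) ω ∂Pr :=
          (integral_condExp hm).symm
      _ = ∫ ω, (A * Pr[(fun ω => Real.exp (-s * B ω)) | MeasurableSpace.comap A inferInstance]) ω ∂Pr :=
          integral_congr_ae hpull
      _ = ∫ ω, A ω * (χ s * Real.exp (-(ψ s) * A ω)) ∂Pr := by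
          refine integral_congr_ae ?_
          filter_upwards [h_cond s hs] with ω h
          rw [Pi.mul_apply, h]
      _ = χ s * ∫ ω, A ω * Real.exp (-(ψ s) * A ω) ∂Pr := by
          rw [← integral_const_mul]
          exact integral_congr_ae (Eventually.of_forall fun ω => by ring)
      _ = χ s * (lam / (lam + ψ s) ^ 2) := by rw [hmoment (ψ s) (hψ_nonneg s hs)]
  have key2 : ∀ s : ℝ, 0 ≤ s →
      (∫ ω, Real.exp (-s * B ω) ∂Pr) = χ s * (lam / (lam + ψ s)) := by
    intro s hs
    calc (∫ ω, Real.exp (-s * B ω) ∂Pr)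
        = ∫ ω, (Pr[(fun ω => Real.exp (-s * B ω)) | MeasurableSpace.comap A inferInstance]) ω ∂Pr :=
          (integral_condExp hm).symm
      _ = ∫ ω, χ s * Real.exp (-(ψ s) * A ω) ∂Pr :=
          integral_congr_ae (h_cond s hs)
      _ = χ s * ∫ ω, Real.exp (-(ψ s) * A ω) ∂Pr := integral_const_mul _ _
      _ = χ s * (lam / (lam + ψ s)) := by rw [h_expA (ψ s) (hψ_nonneg s hs)]
  -- derivatives of LHS
  have hF := hasDerivWithinAt_integral_exp Pr A B hA.aestronglyMeasurable hB hB_nonneg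
    hA_int hAB_int
  have hG0 := hasDerivWithinAt_integral_exp Pr (fun _ => (1:ℝ)) B
    aestronglyMeasurable_const hB hB_nonneg (integrable_const 1) (by simpa using hB_int)
  have hG : HasDerivWithinAt (fun s => ∫ ω, Real.exp (-s * B ω) ∂Pr)
      (-∫ ω, B ω ∂Pr) (Set.Ici 0) 0 := by simpa using hG0
  -- derivatives of RHS
  have hlam0 : lam + ψ 0 = lam := by rw [hψ0]; ring
  have hden : HasDerivWithinAt (fun s => (lam + ψ s) ^ 2) (2 * lam * ψ') (Set.Ici 0) 0 := by
    have h := (hψd.const_add lam).pow 2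
    refine h.congr_deriv ?_
    rw [hlam0]
    ring
  have hquot1 : HasDerivWithinAt (fun s => lam / (lam + ψ s) ^ 2)
      (-2 * ψ' / lam ^ 2) (Set.Ici 0) 0 := by
    have h := (hasDerivWithinAt_const (0:ℝ) (Set.Ici 0) lam).div hden
      (by rw [hlam0]; exact hlam2)
    refine h.congr_deriv ?_
    rw [hlam0]
    field_simp
    ring
  have hH1 : HasDerivWithinAt (fun s => χ s * (lam / (lam + ψ s) ^ 2))
      (χ' / lam - 2 * ψ' / lam ^ 2) (Set.Ici 0) 0 := by
    have h := hχd.mul hquot1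
    refine h.congr_deriv ?_
    rw [hχ0, hlam0]
    field_simp
    ring
  have hquot2 : HasDerivWithinAt (fun s => lam / (lam + ψ s))
      (-ψ' / lam) (Set.Ici 0) 0 := by
    have h := (hasDerivWithinAt_const (0:ℝ) (Set.Ici 0) lam).div (hψd.const_add lam)
      (by rw [hlam0]; exact hlam.ne')
    refine h.congr_deriv ?_
    rw [hlam0]
    field_simp
    ring
  have hH2 : HasDerivWithinAt (fun s => χ s * (lam / (lam + ψ s)))
      (χ' - ψ' / lam) (Set.Ici 0) 0 := by
    have h := hχd.mul hquot2
    refine h.congr_deriv ?_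
    rw [hχ0, hlam0]
    field_simp
    ring
  -- transfer derivatives and identify
  have hFH : HasDerivWithinAt (fun s => ∫ ω, A ω * Real.exp (-s * B ω) ∂Pr)
      (χ' / lam - 2 * ψ' / lam ^ 2) (Set.Ici 0) 0 :=
    hH1.congr (fun y hy => key1 y hy) (key1 0 le_rfl)
  have hGH : HasDerivWithinAt (fun s => ∫ ω, Real.exp (-s * B ω) ∂Pr)
      (χ' - ψ' / lam) (Set.Ici 0) 0 :=
    hH2.congr (fun y hy => key2 y hy) (key2 0 le_rfl)
  have eq1 : -(∫ ω, A ω * B ω ∂Pr) = χ' / lam - 2 * ψ' / lam ^ 2 :=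
    (uniqueDiffOn_Ici (0:ℝ) 0 Set.self_mem_Ici).eq_deriv _ hF hFH
  have eq2 : -(∫ ω, B ω ∂Pr) = χ' - ψ' / lam :=
    (uniqueDiffOn_Ici (0:ℝ) 0 Set.self_mem_Ici).eq_deriv _ hG hGH
  have hI : (∫ ω, A ω * B ω ∂Pr) = 2 * ψ' / lam ^ 2 - χ' / lam := by linarith [eq1]
  have hIB : (∫ ω, B ω ∂Pr) = ψ' / lam - χ' := by linarith [eq2]
  constructor
  · rw [hI]
    field_simp
  · rw [hI, hIB, hmean]
    field_simp
    ring
end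

section
/- Let u > 0, let M = 4 and let P be the cyclic permutation matrix with rows (0,1,0,0), (0,0,1,0), (0,0,0,1), (1,0,0,0), whose stationary distribution is ϖ = (1/4, 1/4, 1/4, 1/4). Let (Z_n)_{n≥1} be a stationary Markov chain with transition matrix P and Z_1 ~ ϖ, and let (B_n) be conditionally independent given the chain, with B_n exponentially distributed with rate μ_{Z_n}, where (μ_1, μ_2, μ_3, μ_4) = (u/2, 10u, u/2, 10u). Then for every n ≥ 1 the autocorrelation satisfies ρ[B_1, B_{1+n}] = Cov(B_1, B_{1+n})/Var(B_1) = (−1)^n · 361/1163, independently of u. -/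
open MeasureTheory ProbabilityTheory

open scoped ENNReal NNReal
open Real Set Filter Topology
open Fin.NatCast

namespace Stmt13Aux

lemma expMeasure_Iic {r : ℝ} (hr : 0 < r) (x : ℝ) :
    expMeasure r (Iic x) = ENNReal.ofReal (1 - Real.exp (-(r * x))) := by
  rw [expMeasure, gammaMeasure, withDensity_apply _ measurableSet_Iic]
  rw [show (gammaPDF 1 r) = exponentialPDF r from rfl]
  rw [lintegral_exponentialPDF_eq_antiDeriv hr]
  split_ifs with h
  · rfl
  · rw [ENNReal.ofReal_zero, Eq.comm, ENNReal.ofReal_eq_zero, sub_nonpos, ← Real.exp_zero]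
    apply Real.exp_le_exp.2
    nlinarith

lemma exponentialPDFReal_eq (r x : ℝ) :
    exponentialPDFReal r x = if 0 ≤ x then r * Real.exp (-(r * x)) else 0 := by
  rw [exponentialPDFReal, gammaPDFReal]
  split_ifs with h
  · simp [Real.rpow_one, Real.Gamma_one]
  · rfl

lemma integrableOn_pow_mul_exp {r : ℝ} (hr : 0 < r) (n : ℕ) :
    IntegrableOn (fun x => x ^ n * Real.exp (-(r * x))) (Ioi (0:ℝ)) := by
  have h := integrableOn_rpow_mul_exp_neg_mul_rpow (p := 1) (s := (n : ℝ))
    (by linarith [Nat.cast_nonneg (α:=ℝ) n] : (-1:ℝ) < (n:ℝ)) zero_lt_one hr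
  simp only [Real.rpow_one, Real.rpow_natCast, neg_mul] at h ⊢
  exact h

lemma integral_Ioi_pow_mul_exp {r : ℝ} (hr : 0 < r) (n : ℕ) :
    ∫ x in Ioi (0:ℝ), x ^ n * Real.exp (-(r * x)) = (Nat.factorial n : ℝ) / r ^ (n + 1) := by
  have h := integral_rpow_mul_exp_neg_mul_Ioi (a := (n : ℝ) + 1) (by positivity) hr
  rw [Real.Gamma_nat_eq_factorial n] at h
  rw [show ((n:ℝ) + 1 - 1) = (n:ℝ) by ring] at h
  simp only [Real.rpow_natCast] at h
  rw [h]
  rw [show ((n:ℝ) + 1) = ((n + 1 : ℕ) : ℝ) by push_cast; ring, Real.rpow_natCast]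
  rw [div_pow, one_pow]
  ring

lemma expMeasure_pdf_smul {r : ℝ} (hr : 0 < r) (g : ℝ → ℝ) :
    (fun x => (Real.toNNReal (exponentialPDFReal r x)) • g x)
      = fun x => (Ioi (0:ℝ)).indicator (fun x => r * Real.exp (-(r * x)) * g x) x
        + (if x = 0 then r * g 0 else 0) := by
  funext x
  simp only [NNReal.smul_def, Real.coe_toNNReal', exponentialPDFReal_eq, smul_eq_mul]
  rcases lt_trichotomy x 0 with h | h | h
  · rw [if_neg (not_le.2 h), indicator_of_notMem (by simpa using h.le), if_neg h.ne]
    simp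
  · subst h
    simp [indicator_of_notMem, max_eq_left hr.le]
  · rw [if_pos h.le, indicator_of_mem (by simpa using h), if_neg h.ne']
    rw [max_eq_left (by positivity)]
    ring_nf

end Stmt13Aux

namespace Stmt13Aux2
open Stmt13Aux

lemma expMeasure_eq (r : ℝ) :
    expMeasure r
      = volume.withDensity fun x => ((Real.toNNReal (exponentialPDFReal r x) : ℝ≥0) : ℝ≥0∞) := rfl

lemma pdf_smul_pow {r : ℝ} (hr : 0 < r) {n : ℕ} (hn : 1 ≤ n) :
    (fun x : ℝ => (Real.toNNReal (exponentialPDFReal r x)) • (x ^ n))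
      = (Ioi (0:ℝ)).indicator (fun x => r * Real.exp (-(r * x)) * x ^ n) := by
  rw [expMeasure_pdf_smul hr]
  funext x
  rcases eq_or_ne x 0 with h | h
  · subst h; simp [zero_pow (by omega : n ≠ 0)]
  · simp [h]

lemma expMeasure_integrable_pow {r : ℝ} (hr : 0 < r) {n : ℕ} (hn : 1 ≤ n) :
    Integrable (fun x => x ^ n) (expMeasure r) := by
  rw [expMeasure_eq r, integrable_withDensity_iff_integrable_smul
      ((measurable_exponentialPDFReal r).real_toNNReal)]
  rw [pdf_smul_pow hr hn, integrable_indicator_iff measurableSet_Ioi]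
  exact ((integrableOn_pow_mul_exp hr n).const_mul r).congr
    (Filter.Eventually.of_forall fun x => by ring)

lemma expMeasure_integral_pow {r : ℝ} (hr : 0 < r) {n : ℕ} (hn : 1 ≤ n) :
    ∫ x, x ^ n ∂(expMeasure r) = (Nat.factorial n : ℝ) / r ^ n := by
  rw [expMeasure_eq r, integral_withDensity_eq_integral_smul
      ((measurable_exponentialPDFReal r).real_toNNReal)]
  rw [pdf_smul_pow hr hn, integral_indicator measurableSet_Ioi]
  rw [setIntegral_congr_fun measurableSet_Ioi
      (show EqOn _ (fun x => r * (x ^ n * Real.exp (-(r * x)))) _ from fun x _ => by ring)]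
  rw [MeasureTheory.integral_const_mul, integral_Ioi_pow_mul_exp hr n, pow_succ]
  field_simp

section prodexp
variable {r s : ℝ}

lemma exp_int_id (hr : 0 < r) : ∫ x, x ∂(expMeasure r) = r⁻¹ := by
  have h := expMeasure_integral_pow hr (le_refl 1)
  simpa [Nat.factorial, one_div] using h

lemma exp_int_sq (hr : 0 < r) : ∫ x, x ^ 2 ∂(expMeasure r) = 2 / r ^ 2 := by
  have h := expMeasure_integral_pow hr (by norm_num : 1 ≤ 2)
  simpa [Nat.factorial] using h

lemma exp_prod_int_mul (hr : 0 < r) (hs : 0 < s) :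
    ∫ z : ℝ × ℝ, z.1 * z.2 ∂((expMeasure r).prod (expMeasure s)) = r⁻¹ * s⁻¹ := by
  haveI := isProbabilityMeasure_expMeasure hr
  haveI := isProbabilityMeasure_expMeasure hs
  rw [integral_prod_mul (f := fun x : ℝ => x) (g := fun x : ℝ => x), exp_int_id hr, exp_int_id hs]

lemma exp_prod_int_fst (hr : 0 < r) (hs : 0 < s) :
    ∫ z : ℝ × ℝ, z.1 ∂((expMeasure r).prod (expMeasure s)) = r⁻¹ := by
  haveI := isProbabilityMeasure_expMeasure hr
  haveI := isProbabilityMeasure_expMeasure hs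
  have h := integral_prod_mul (f := fun x : ℝ => x) (g := fun _ : ℝ => (1:ℝ))
    (μ := expMeasure r) (ν := expMeasure s)
  simpa [exp_int_id hr] using h

lemma exp_prod_int_snd (hr : 0 < r) (hs : 0 < s) :
    ∫ z : ℝ × ℝ, z.2 ∂((expMeasure r).prod (expMeasure s)) = s⁻¹ := by
  haveI := isProbabilityMeasure_expMeasure hr
  haveI := isProbabilityMeasure_expMeasure hs
  have h := integral_prod_mul (f := fun _ : ℝ => (1:ℝ)) (g := fun x : ℝ => x)
    (μ := expMeasure r) (ν := expMeasure s)
  simpa [exp_int_id hs] using h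

lemma exp_prod_int_fst_sq (hr : 0 < r) (hs : 0 < s) :
    ∫ z : ℝ × ℝ, z.1 ^ 2 ∂((expMeasure r).prod (expMeasure s)) = 2 / r ^ 2 := by
  haveI := isProbabilityMeasure_expMeasure hr
  haveI := isProbabilityMeasure_expMeasure hs
  have h := integral_prod_mul (f := fun x : ℝ => x ^ 2) (g := fun _ : ℝ => (1:ℝ))
    (μ := expMeasure r) (ν := expMeasure s)
  simpa [exp_int_sq hr] using h

lemma exp_prod_integrable_mul (hr : 0 < r) (hs : 0 < s) :
    Integrable (fun z : ℝ × ℝ => z.1 * z.2) ((expMeasure r).prod (expMeasure s)) := by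
  haveI := isProbabilityMeasure_expMeasure hr
  haveI := isProbabilityMeasure_expMeasure hs
  have h := (expMeasure_integrable_pow hr (le_refl 1)).mul_prod
    (expMeasure_integrable_pow hs (le_refl 1))
  simpa using h

lemma exp_prod_integrable_fst (hr : 0 < r) (hs : 0 < s) :
    Integrable (fun z : ℝ × ℝ => z.1) ((expMeasure r).prod (expMeasure s)) := by
  haveI := isProbabilityMeasure_expMeasure hr
  haveI := isProbabilityMeasure_expMeasure hs
  have h := (expMeasure_integrable_pow hr (le_refl 1)).mul_prod
    (integrable_const (μ := expMeasure s) (1:ℝ))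
  simpa using h

lemma exp_prod_integrable_snd (hr : 0 < r) (hs : 0 < s) :
    Integrable (fun z : ℝ × ℝ => z.2) ((expMeasure r).prod (expMeasure s)) := by
  haveI := isProbabilityMeasure_expMeasure hr
  haveI := isProbabilityMeasure_expMeasure hs
  have h := (integrable_const (μ := expMeasure r) (1:ℝ)).mul_prod
    (expMeasure_integrable_pow hs (le_refl 1))
  simpa using h

lemma exp_prod_integrable_fst_sq (hr : 0 < r) (hs : 0 < s) :
    Integrable (fun z : ℝ × ℝ => z.1 ^ 2) ((expMeasure r).prod (expMeasure s)) := by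
  haveI := isProbabilityMeasure_expMeasure hr
  haveI := isProbabilityMeasure_expMeasure hs
  have h := (expMeasure_integrable_pow hr (by norm_num : 1 ≤ 2)).mul_prod
    (integrable_const (μ := expMeasure s) (1:ℝ))
  simpa using h

end prodexp
end Stmt13Aux2
namespace Stmt13Big

lemma rect_lemma {Ω : Type*} [MeasurableSpace Ω] (Pr : Measure Ω) [IsProbabilityMeasure Pr]
    (Z : ℕ → Ω → Fin 4) (B : ℕ → Ω → ℝ) (n : ℕ) (hn : 1 ≤ n) (f : Fin (n + 1) → Fin 4)
    (mu : Fin 4 → ℝ) (hmupos : ∀ j, 0 < mu j)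
    (hF : Pr {ω | ∀ k : Fin (n + 1), Z ((k : ℕ) + 1) ω = f k} = ENNReal.ofReal (1 / 4))
    (hcond : ∀ x : Fin (n + 1) → ℝ,
      Pr {ω | ∀ k : Fin (n + 1), Z ((k : ℕ) + 1) ω = f k ∧ B ((k : ℕ) + 1) ω ≤ x k}
        = Pr {ω | ∀ k : Fin (n + 1), Z ((k : ℕ) + 1) ω = f k}
            * ∏ k, ENNReal.ofReal (1 - Real.exp (-(mu (f k)) * x k)))
    (x y : ℝ) :
    Pr ({ω | B 1 ω ≤ x ∧ B (1 + n) ω ≤ y} ∩ {ω | ∀ k : Fin (n + 1), Z ((k : ℕ) + 1) ω = f k})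
      = ENNReal.ofReal (1 / 4) * ENNReal.ofReal (1 - Real.exp (-(mu (f 0)) * x))
          * ENNReal.ofReal (1 - Real.exp (-(mu (f (Fin.last n))) * y)) := by
  classical
  have hn0 : n ≠ 0 := by omega
  set xs : ℕ → Fin (n + 1) → ℝ :=
    fun m k => if (k : ℕ) = 0 then x else if (k : ℕ) = n then y else (m : ℝ) with hxs
  set G : ℕ → Set Ω :=
    fun m => {ω | ∀ k : Fin (n + 1), Z ((k : ℕ) + 1) ω = f k ∧ B ((k : ℕ) + 1) ω ≤ xs m k}
    with hG
  have hGP : ∀ m, Pr (G m)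
      = ENNReal.ofReal (1 / 4)
        * ∏ k, ENNReal.ofReal (1 - Real.exp (-(mu (f k)) * xs m k)) := by
    intro m
    rw [hG]
    rw [hcond (xs m), hF]
  have hmono : Monotone G := by
    intro m m' hmm ω hω k
    refine ⟨(hω k).1, le_trans (hω k).2 ?_⟩
    simp only [hxs]
    split_ifs
    · exact le_rfl
    · exact le_rfl
    · exact_mod_cast Nat.cast_le.2 hmm
  have hval0 : ∀ m, xs m 0 = x := by intro m; simp [hxs]
  have hvall : ∀ m, xs m (Fin.last n) = y := by
    intro m; simp only [hxs, Fin.val_last]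
    rw [if_neg hn0]; simp
  have hunion : (⋃ m, G m)
      = {ω | B 1 ω ≤ x ∧ B (1 + n) ω ≤ y}
          ∩ {ω | ∀ k : Fin (n + 1), Z ((k : ℕ) + 1) ω = f k} := by
    ext ω
    simp only [mem_iUnion, mem_inter_iff, mem_setOf_eq, hG]
    constructor
    · rintro ⟨m, hm⟩
      refine ⟨⟨?_, ?_⟩, fun k => (hm k).1⟩
      · have h0 := (hm 0).2
        rw [hval0 m] at h0
        simpa using h0
      · have hl := (hm (Fin.last n)).2
        rw [hvall m] at hl
        rw [add_comm 1 n]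
        simpa [Fin.val_last] using hl
    · rintro ⟨⟨hx1, hy1⟩, hZs⟩
      obtain ⟨m, hm⟩ := exists_nat_ge
        (Finset.univ.sup' (Finset.univ_nonempty) fun k : Fin (n + 1) => B ((k : ℕ) + 1) ω)
      refine ⟨m, fun k => ⟨hZs k, ?_⟩⟩
      simp only [hxs]
      split_ifs with h0 h1
      · rw [h0]; exact hx1
      · rw [h1, add_comm n 1]; exact hy1
      · exact le_trans (Finset.le_sup' (fun k : Fin (n + 1) => B ((k : ℕ) + 1) ω) (Finset.mem_univ k)) hm
  rw [← hunion]
  rcases lt_or_ge x 0 with hx | hx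
  · have hof : ENNReal.ofReal (1 - Real.exp (-(mu (f 0)) * x)) = 0 := by
      rw [ENNReal.ofReal_eq_zero, sub_nonpos, ← Real.exp_zero]
      apply Real.exp_le_exp.2
      nlinarith [hmupos (f 0)]
    rw [hof, mul_zero, zero_mul]
    refine measure_iUnion_null fun m => ?_
    rw [hGP m]
    have h0 : ENNReal.ofReal (1 - Real.exp (-(mu (f 0)) * xs m 0)) = 0 := by
      rw [hval0 m]; exact hof
    rw [Finset.prod_eq_zero (Finset.mem_univ (0 : Fin (n + 1))) h0, mul_zero]
  rcases lt_or_ge y 0 with hy | hy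
  · have hof : ENNReal.ofReal (1 - Real.exp (-(mu (f (Fin.last n))) * y)) = 0 := by
      rw [ENNReal.ofReal_eq_zero, sub_nonpos, ← Real.exp_zero]
      apply Real.exp_le_exp.2
      nlinarith [hmupos (f (Fin.last n))]
    rw [hof, mul_zero]
    refine measure_iUnion_null fun m => ?_
    rw [hGP m]
    have h0 : ENNReal.ofReal (1 - Real.exp (-(mu (f (Fin.last n))) * xs m (Fin.last n))) = 0 := by
      rw [hvall m]; exact hof
    rw [Finset.prod_eq_zero (Finset.mem_univ (Fin.last n)) h0, mul_zero]
  · -- main case : 0 ≤ x, 0 ≤ y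
    have hxsnn : ∀ m k, 0 ≤ xs m k := by
      intro m k
      simp only [hxs]
      split_ifs
      · exact hx
      · exact hy
      · positivity
    have hfac : ∀ m k, 0 ≤ 1 - Real.exp (-(mu (f k)) * xs m k) := by
      intro m k
      rw [sub_nonneg, ← Real.exp_zero]
      apply Real.exp_le_exp.2
      have := hmupos (f k); have := hxsnn m k
      nlinarith
    have hGP' : ∀ m, Pr (G m)
        = ENNReal.ofReal ((1 / 4) * ∏ k, (1 - Real.exp (-(mu (f k)) * xs m k))) := by
      intro m
      rw [hGP m, ENNReal.ofReal_mul (by norm_num : (0:ℝ) ≤ 1 / 4),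
        ENNReal.ofReal_prod_of_nonneg (fun k _ => hfac m k)]
    set L : Fin (n + 1) → ℝ := fun k =>
      if (k : ℕ) = 0 then 1 - Real.exp (-(mu (f k)) * x)
      else if (k : ℕ) = n then 1 - Real.exp (-(mu (f k)) * y) else 1 with hL
    have hLprod : ∏ k, L k
        = (1 - Real.exp (-(mu (f 0)) * x)) * (1 - Real.exp (-(mu (f (Fin.last n))) * y)) := by
      rw [← Finset.prod_subset (Finset.subset_univ ({0, Fin.last n} : Finset (Fin (n + 1))))
        (fun k _ hk => ?_)]
      · rw [Finset.prod_pair (by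
          intro h
          have := congrArg (Fin.val) h
          simp [Fin.val_last] at this
          omega)]
        simp [hL, Fin.val_last, hn0]
      · simp only [Finset.mem_insert, Finset.mem_singleton, not_or] at hk
        simp only [hL]
        rw [if_neg, if_neg]
        · intro h; exact hk.2 (by ext; simp [Fin.val_last, h])
        · intro h; exact hk.1 (by ext; simp [h])
    have hfactor : ∀ k : Fin (n + 1),
        Tendsto (fun m : ℕ => 1 - Real.exp (-(mu (f k)) * xs m k)) atTop (𝓝 (L k)) := by
      intro k
      simp only [hxs, hL]
      split_ifs with h0 h1
      · exact tendsto_const_nhds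
      · exact tendsto_const_nhds
      · have hmul : Tendsto (fun m : ℕ => -(mu (f k)) * (m : ℝ)) atTop atBot := by
          have h1 : Tendsto (fun m : ℕ => (mu (f k)) * (m : ℝ)) atTop atTop :=
            Tendsto.const_mul_atTop (hmupos (f k)) tendsto_natCast_atTop_atTop
          have h2 := tendsto_neg_atTop_atBot.comp h1
          have he : (fun m : ℕ => -(mu (f k)) * (m : ℝ))
              = (Neg.neg ∘ fun m : ℕ => mu (f k) * (m : ℝ)) := by
            funext m; simp [Function.comp, neg_mul]
          rw [he]; exact h2
        have hexp : Tendsto (fun m : ℕ => Real.exp (-(mu (f k)) * (m : ℝ))) atTop (𝓝 0) :=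
          Real.tendsto_exp_atBot.comp hmul
        have := tendsto_const_nhds (x := (1:ℝ)) (f := atTop (α := ℕ)) |>.sub hexp
        simpa using this
    have hreal : Tendsto
        (fun m : ℕ => (1 / 4) * ∏ k, (1 - Real.exp (-(mu (f k)) * xs m k))) atTop
        (𝓝 ((1 / 4) * ((1 - Real.exp (-(mu (f 0)) * x))
            * (1 - Real.exp (-(mu (f (Fin.last n))) * y))))) := by
      rw [← hLprod]
      exact tendsto_const_nhds.mul (tendsto_finset_prod _ (fun k _ => hfactor k))
    have h1 : Tendsto (fun m => Pr (G m)) atTop (𝓝 (Pr (⋃ m, G m))) :=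
      tendsto_measure_iUnion_atTop hmono
    have h2 : Tendsto (fun m => Pr (G m)) atTop
        (𝓝 (ENNReal.ofReal ((1 / 4) * ((1 - Real.exp (-(mu (f 0)) * x))
            * (1 - Real.exp (-(mu (f (Fin.last n))) * y)))))) := by
      simp only [hGP']
      exact (ENNReal.continuous_ofReal.tendsto _).comp hreal
    rw [tendsto_nhds_unique h1 h2]
    have hxf : 0 ≤ 1 - Real.exp (-(mu (f 0)) * x) := by
      have := hfac 0 0; rwa [hval0 0] at this
    rw [ENNReal.ofReal_mul (by norm_num : (0:ℝ) ≤ 1 / 4), ENNReal.ofReal_mul hxf, mul_assoc]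

end Stmt13Big

lemma law_eq {Ω : Type*} [MeasurableSpace Ω] (μ : Measure Ω) [IsFiniteMeasure μ]
    {X Y : Ω → ℝ} (hX : Measurable X) (hY : Measurable Y) {r s : ℝ}
    (hr : 0 < r) (hs : 0 < s)
    (hrect : ∀ x y : ℝ, μ {ω | X ω ≤ x ∧ Y ω ≤ y}
        = ENNReal.ofReal (1 / 4) * (expMeasure r (Iic x) * expMeasure s (Iic y)))
    (huniv : μ univ = ENNReal.ofReal (1 / 4)) :
    μ.map (fun ω => (X ω, Y ω))
      = ENNReal.ofReal (1 / 4) • ((expMeasure r).prod (expMeasure s)) := by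
  haveI := isProbabilityMeasure_expMeasure hr
  haveI := isProbabilityMeasure_expMeasure hs
  have hspan : IsCountablySpanning (range (Iic : ℝ → Set ℝ)) := by
    refine ⟨fun n => Iic (n : ℝ), fun n => mem_range_self _, ?_⟩
    apply eq_univ_of_forall
    intro z
    rw [mem_iUnion]
    obtain ⟨n, hn⟩ := exists_nat_ge z
    exact ⟨n, hn⟩
  have hgen : (inferInstance : MeasurableSpace (ℝ × ℝ))
      = MeasurableSpace.generateFrom
          (image2 (· ×ˢ ·) (range (Iic : ℝ → Set ℝ)) (range (Iic : ℝ → Set ℝ))) := by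
    have hR : MeasurableSpace.generateFrom (range (Iic : ℝ → Set ℝ))
        = (inferInstance : MeasurableSpace ℝ) := by
      rw [← borel_eq_generateFrom_Iic]; rfl
    exact (generateFrom_eq_prod hR hR hspan hspan).symm
  refine ext_of_generate_finite _ hgen (isPiSystem_Iic.prod isPiSystem_Iic) ?_ ?_
  · rintro t ⟨S1, ⟨a, rfl⟩, S2, ⟨b, rfl⟩, rfl⟩
    rw [Measure.map_apply (hX.prodMk hY) (measurableSet_Iic.prod measurableSet_Iic)]
    have hpre : (fun ω => (X ω, Y ω)) ⁻¹' (Iic a ×ˢ Iic b) = {ω | X ω ≤ a ∧ Y ω ≤ b} := by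
      ext ω; simp [Set.mem_prod]
    rw [hpre, hrect a b, Measure.smul_apply, Measure.prod_prod, smul_eq_mul]
  · rw [Measure.map_apply (hX.prodMk hY) MeasurableSet.univ, preimage_univ, huniv,
      Measure.smul_apply, measure_univ, smul_eq_mul, mul_one]

set_option maxHeartbeats 1000000 in
/-- For the cyclic 4-state chain with transition matrix `p i j = if j = i + 1 then 1 else 0`
(stationary distribution `(1/4,1/4,1/4,1/4)`) and preparation times `B_n` that are
conditionally independent given the chain and exponential with rate `μ_{Z_n}`, where
`(μ₁,μ₂,μ₃,μ₄) = (u/2, 10u, u/2, 10u)` for `u > 0`, the autocorrelation is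
`ρ[B_1, B_{1+n}] = (-1)^n · 361/1163` for every `n ≥ 1`, independently of `u`. -/
theorem stmt13 {Ω : Type*} [MeasurableSpace Ω] (Pr : Measure Ω) [IsProbabilityMeasure Pr]
    (u : ℝ) (hu : 0 < u)
    (p : Fin 4 → Fin 4 → ℝ) (hp : ∀ i j, p i j = if j = i + 1 then 1 else 0)
    (mu : Fin 4 → ℝ) (hmu : mu = ![u / 2, 10 * u, u / 2, 10 * u])
    (Z : ℕ → Ω → Fin 4) (B : ℕ → Ω → ℝ)
    (hZ : ∀ n, Measurable (Z n)) (hB : ∀ n, Measurable (B n))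
    -- Finite-dimensional distributions of the stationary chain started from `ϖ = 1/4`.
    (h_chain : ∀ (n : ℕ) (f : Fin (n + 1) → Fin 4),
      Pr {ω | ∀ k : Fin (n + 1), Z ((k : ℕ) + 1) ω = f k}
        = ENNReal.ofReal ((1 / 4) * ∏ k : Fin n, p (f k.castSucc) (f k.succ)))
    -- Conditionally on the chain, the `B_n` are independent and `B_n ~ Exp(μ_{Z_n})`.
    (h_condB : ∀ (n : ℕ) (f : Fin n → Fin 4) (x : Fin n → ℝ),
      Pr {ω | ∀ k : Fin n, Z ((k : ℕ) + 1) ω = f k ∧ B ((k : ℕ) + 1) ω ≤ x k}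
        = Pr {ω | ∀ k : Fin n, Z ((k : ℕ) + 1) ω = f k}
            * ∏ k, ENNReal.ofReal (1 - Real.exp (-(mu (f k)) * x k))) :
    ∀ n : ℕ, 1 ≤ n →
      ((∫ ω, B 1 ω * B (1 + n) ω ∂Pr) - (∫ ω, B 1 ω ∂Pr) * (∫ ω, B (1 + n) ω ∂Pr))
          / ((∫ ω, B 1 ω ^ 2 ∂Pr) - (∫ ω, B 1 ω ∂Pr) ^ 2)
        = (-1 : ℝ) ^ n * (361 / 1163) := by
  subst hmu
  intro n hn
  set μf : Fin 4 → ℝ := ![u / 2, 10 * u, u / 2, 10 * u] with hμf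
  have hmupos : ∀ j : Fin 4, 0 < μf j := by
    intro j
    fin_cases j <;> simp [hμf] <;> linarith
  -- probabilities of the elementary chain events
  have hEmeas : ∀ i : Fin 4, MeasurableSet (Z 1 ⁻¹' {i}) :=
    fun i => hZ 1 (measurableSet_singleton i)
  have hPrE : ∀ i : Fin 4, Pr (Z 1 ⁻¹' {i}) = ENNReal.ofReal (1 / 4) := by
    intro i
    have h := h_chain 0 (fun _ => i)
    have hset : {ω | ∀ k : Fin 1, Z ((k : ℕ) + 1) ω = i} = Z 1 ⁻¹' {i} := by
      ext ω; simp [Fin.forall_fin_one]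
    rw [hset] at h
    simpa using h
  have hPrF : ∀ i : Fin 4,
      Pr {ω | ∀ k : Fin (n + 1), Z ((k : ℕ) + 1) ω = i + ((k : ℕ) : Fin 4)}
        = ENNReal.ofReal (1 / 4) := by
    intro i
    have h := h_chain n (fun k => i + ((k : ℕ) : Fin 4))
    rw [h]
    have hstep : ∀ k : Fin n,
        p (i + (((k.castSucc : Fin (n + 1)) : ℕ) : Fin 4))
          (i + (((k.succ : Fin (n + 1)) : ℕ) : Fin 4)) = 1 := by
      intro k
      rw [hp, if_pos]
      rw [Fin.coe_castSucc, Fin.val_succ]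
      push_cast
      open Fin.CommRing in ring
    rw [Finset.prod_congr rfl (fun k _ => hstep k), Finset.prod_const_one, mul_one]
  have hFmeas : ∀ i : Fin 4,
      MeasurableSet {ω | ∀ k : Fin (n + 1), Z ((k : ℕ) + 1) ω = i + ((k : ℕ) : Fin 4)} := by
    intro i
    have h : {ω | ∀ k : Fin (n + 1), Z ((k : ℕ) + 1) ω = i + ((k : ℕ) : Fin 4)}
        = ⋂ k : Fin (n + 1), Z ((k : ℕ) + 1) ⁻¹' {i + ((k : ℕ) : Fin 4)} := by
      ext ω; simp [mem_iInter]
    rw [h]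
    exact MeasurableSet.iInter fun k => hZ _ (measurableSet_singleton _)
  have hFsubE : ∀ i : Fin 4,
      {ω | ∀ k : Fin (n + 1), Z ((k : ℕ) + 1) ω = i + ((k : ℕ) : Fin 4)} ⊆ Z 1 ⁻¹' {i} := by
    intro i ω hω
    have h0 := hω 0
    simpa using h0
  have hdiff : ∀ i : Fin 4,
      Pr (Z 1 ⁻¹' {i} \
        {ω | ∀ k : Fin (n + 1), Z ((k : ℕ) + 1) ω = i + ((k : ℕ) : Fin 4)}) = 0 := by
    intro i
    rw [measure_diff (hFsubE i) (hFmeas i).nullMeasurableSet (measure_ne_top Pr _),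
      hPrE i, hPrF i, tsub_self]
  have hD : ∀ (i : Fin 4) (x y : ℝ),
      Pr ({ω | B 1 ω ≤ x ∧ B (1 + n) ω ≤ y} ∩ Z 1 ⁻¹' {i})
        = ENNReal.ofReal (1 / 4) * ENNReal.ofReal (1 - Real.exp (-(μf i) * x))
            * ENNReal.ofReal (1 - Real.exp (-(μf (i + (n : Fin 4))) * y)) := by
    intro i x y
    have h1 := Stmt13Big.rect_lemma Pr Z B n hn (fun k => i + ((k : ℕ) : Fin 4)) μf hmupos
      (hPrF i) (fun xv => h_condB (n + 1) _ xv) x y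
    have hf0 : i + (((0 : Fin (n + 1)) : ℕ) : Fin 4) = i := by simp
    have hfl : i + (((Fin.last n : Fin (n + 1)) : ℕ) : Fin 4) = i + (n : Fin 4) := by
      simp [Fin.val_last]
    rw [hf0, hfl] at h1
    apply le_antisymm
    · calc Pr ({ω | B 1 ω ≤ x ∧ B (1 + n) ω ≤ y} ∩ Z 1 ⁻¹' {i})
          ≤ Pr (({ω | B 1 ω ≤ x ∧ B (1 + n) ω ≤ y}
              ∩ {ω | ∀ k : Fin (n + 1), Z ((k : ℕ) + 1) ω = i + ((k : ℕ) : Fin 4)})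
            ∪ (Z 1 ⁻¹' {i} \
              {ω | ∀ k : Fin (n + 1), Z ((k : ℕ) + 1) ω = i + ((k : ℕ) : Fin 4)})) := by
            apply measure_mono
            rintro ω ⟨h2, h3⟩
            by_cases hF : ω ∈ {ω | ∀ k : Fin (n + 1), Z ((k : ℕ) + 1) ω = i + ((k : ℕ) : Fin 4)}
            · exact Or.inl ⟨h2, hF⟩
            · exact Or.inr ⟨h3, hF⟩
        _ ≤ Pr ({ω | B 1 ω ≤ x ∧ B (1 + n) ω ≤ y}
              ∩ {ω | ∀ k : Fin (n + 1), Z ((k : ℕ) + 1) ω = i + ((k : ℕ) : Fin 4)})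
            + Pr (Z 1 ⁻¹' {i} \
              {ω | ∀ k : Fin (n + 1), Z ((k : ℕ) + 1) ω = i + ((k : ℕ) : Fin 4)}) :=
            measure_union_le _ _
        _ = _ := by rw [hdiff i, add_zero, h1]
    · rw [← h1]
      exact measure_mono (inter_subset_inter_right _ (hFsubE i))
  -- identification of the joint law on each chain-start event
  have hlaw : ∀ i : Fin 4,
      (Pr.restrict (Z 1 ⁻¹' {i})).map (fun ω => (B 1 ω, B (1 + n) ω))
        = ENNReal.ofReal (1 / 4)
            • ((expMeasure (μf i)).prod (expMeasure (μf (i + (n : Fin 4))))) := by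
    intro i
    refine law_eq _ (hB 1) (hB (1 + n)) (hmupos i) (hmupos _) ?_ ?_
    · intro x y
      have hms : MeasurableSet {ω | B 1 ω ≤ x ∧ B (1 + n) ω ≤ y} :=
        ((hB 1) measurableSet_Iic).inter ((hB (1 + n)) measurableSet_Iic)
      rw [Measure.restrict_apply hms]
      rw [hD i x y, Stmt13Aux.expMeasure_Iic (hmupos i), Stmt13Aux.expMeasure_Iic (hmupos _)]
      rw [neg_mul, neg_mul, mul_assoc]
    · rw [Measure.restrict_apply_univ, hPrE i]
  -- decomposition of the measure
  have hPrsum : Pr = ∑ i : Fin 4, Pr.restrict (Z 1 ⁻¹' {i}) := by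
    ext s hs
    rw [Measure.finset_sum_apply]
    simp only [Measure.restrict_apply hs]
    have h1 : Pr s = Pr (⋃ i : Fin 4, s ∩ Z 1 ⁻¹' {i}) := by
      congr 1
      ext ω; simp
    rw [h1, measure_iUnion ?_ (fun i => hs.inter (hEmeas i)), tsum_fintype]
    intro i j hij
    refine Set.disjoint_left.2 fun ω h1 h2 => hij ?_
    have hi : Z 1 ω = i := h1.2
    have hj : Z 1 ω = j := h2.2
    rw [← hi, hj]
  have key : ∀ g : ℝ × ℝ → ℝ, Measurable g →
      (∀ i : Fin 4, Integrable g ((expMeasure (μf i)).prod (expMeasure (μf (i + (n : Fin 4)))))) →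
      ∫ ω, g (B 1 ω, B (1 + n) ω) ∂Pr
        = ∑ i : Fin 4, (1 / 4 : ℝ)
            * ∫ z, g z ∂((expMeasure (μf i)).prod (expMeasure (μf (i + (n : Fin 4))))) := by
    intro g hg hint
    have hTm : Measurable (fun ω => (B 1 ω, B (1 + n) ω)) := (hB 1).prodMk (hB (1 + n))
    have hint' : ∀ i : Fin 4,
        Integrable (fun ω => g (B 1 ω, B (1 + n) ω)) (Pr.restrict (Z 1 ⁻¹' {i})) := by
      intro i
      have h2 : Integrable g ((Pr.restrict (Z 1 ⁻¹' {i})).map (fun ω => (B 1 ω, B (1 + n) ω))) := by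
        rw [hlaw i]
        exact (hint i).smul_measure ENNReal.ofReal_ne_top
      exact (integrable_map_measure hg.aestronglyMeasurable hTm.aemeasurable).1 h2
    calc ∫ ω, g (B 1 ω, B (1 + n) ω) ∂Pr
        = ∫ ω, g (B 1 ω, B (1 + n) ω) ∂(∑ i : Fin 4, Pr.restrict (Z 1 ⁻¹' {i})) := by
          rw [← hPrsum]
      _ = ∑ i : Fin 4, ∫ ω, g (B 1 ω, B (1 + n) ω) ∂(Pr.restrict (Z 1 ⁻¹' {i})) :=
          integral_finset_sum_measure (fun i _ => hint' i)
      _ = _ := by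
          refine Finset.sum_congr rfl fun i _ => ?_
          rw [← integral_map hTm.aemeasurable hg.aestronglyMeasurable, hlaw i,
            integral_smul_measure, ENNReal.toReal_ofReal (by norm_num : (0:ℝ) ≤ 1 / 4),
            smul_eq_mul]
  -- the four integrals
  have hI1 : ∫ ω, B 1 ω * B (1 + n) ω ∂Pr
      = ∑ i : Fin 4, (1 / 4 : ℝ) * ((μf i)⁻¹ * (μf (i + (n : Fin 4)))⁻¹) := by
    have h : ∫ ω, B 1 ω * B (1 + n) ω ∂Pr
        = ∑ i : Fin 4, (1 / 4 : ℝ)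
            * ∫ z : ℝ × ℝ, z.1 * z.2
                ∂((expMeasure (μf i)).prod (expMeasure (μf (i + (n : Fin 4))))) :=
      key (fun z => z.1 * z.2) (measurable_fst.mul measurable_snd)
        (fun i => Stmt13Aux2.exp_prod_integrable_mul (hmupos i) (hmupos _))
    rw [h]
    exact Finset.sum_congr rfl fun i _ => by
      rw [Stmt13Aux2.exp_prod_int_mul (hmupos i) (hmupos _)]
  have hI2 : ∫ ω, B 1 ω ∂Pr = ∑ i : Fin 4, (1 / 4 : ℝ) * (μf i)⁻¹ := by
    have h : ∫ ω, B 1 ω ∂Pr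
        = ∑ i : Fin 4, (1 / 4 : ℝ)
            * ∫ z : ℝ × ℝ, z.1
                ∂((expMeasure (μf i)).prod (expMeasure (μf (i + (n : Fin 4))))) :=
      key (fun z => z.1) measurable_fst
        (fun i => Stmt13Aux2.exp_prod_integrable_fst (hmupos i) (hmupos _))
    rw [h]
    exact Finset.sum_congr rfl fun i _ => by
      rw [Stmt13Aux2.exp_prod_int_fst (hmupos i) (hmupos _)]
  have hI3 : ∫ ω, B (1 + n) ω ∂Pr = ∑ i : Fin 4, (1 / 4 : ℝ) * (μf (i + (n : Fin 4)))⁻¹ := by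
    have h : ∫ ω, B (1 + n) ω ∂Pr
        = ∑ i : Fin 4, (1 / 4 : ℝ)
            * ∫ z : ℝ × ℝ, z.2
                ∂((expMeasure (μf i)).prod (expMeasure (μf (i + (n : Fin 4))))) :=
      key (fun z => z.2) measurable_snd
        (fun i => Stmt13Aux2.exp_prod_integrable_snd (hmupos i) (hmupos _))
    rw [h]
    exact Finset.sum_congr rfl fun i _ => by
      rw [Stmt13Aux2.exp_prod_int_snd (hmupos i) (hmupos _)]
  have hI4 : ∫ ω, B 1 ω ^ 2 ∂Pr = ∑ i : Fin 4, (1 / 4 : ℝ) * (2 / (μf i) ^ 2) := by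
    have h : ∫ ω, B 1 ω ^ 2 ∂Pr
        = ∑ i : Fin 4, (1 / 4 : ℝ)
            * ∫ z : ℝ × ℝ, z.1 ^ 2
                ∂((expMeasure (μf i)).prod (expMeasure (μf (i + (n : Fin 4))))) :=
      key (fun z => z.1 ^ 2) (measurable_fst.pow_const 2)
        (fun i => Stmt13Aux2.exp_prod_integrable_fst_sq (hmupos i) (hmupos _))
    rw [h]
    exact Finset.sum_congr rfl fun i _ => by
      rw [Stmt13Aux2.exp_prod_int_fst_sq (hmupos i) (hmupos _)]
  -- numerics
  have hu' : u ≠ 0 := ne_of_gt hu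
  have hper : ∀ j : Fin 4, μf (j + 2) = μf j := by
    intro j; fin_cases j <;> rfl
  have hper2 : ∀ (m : ℕ) (j : Fin 4), μf (j + ((m : Fin 4) + (m : Fin 4))) = μf j := by
    intro m
    induction m with
    | zero => intro j; simp
    | succ k ih =>
        intro j
        have h1 : j + (((k : Fin 4) + 1) + ((k : Fin 4) + 1))
            = (j + ((k : Fin 4) + (k : Fin 4))) + 2 := by open Fin.CommRing in ring
        rw [Nat.cast_succ, h1, hper, ih]
  have e2 : ∫ ω, B 1 ω ∂Pr = 21 / (20 * u) := by
    rw [hI2, Fin.sum_univ_four]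
    norm_num [hμf, Matrix.cons_val_two, Matrix.cons_val_three]
    field_simp
    ring
  rcases Nat.even_or_odd n with ⟨m, hm⟩ | ⟨m, hm⟩
  · -- even case
    have hNc : ∀ j : Fin 4, μf (j + (n : Fin 4)) = μf j := by
      intro j
      have h1 : ((n : ℕ) : Fin 4) = (m : Fin 4) + (m : Fin 4) := by rw [hm]; push_cast; open Fin.CommRing in ring
      rw [h1]; exact hper2 m j
    have hsign : (-1 : ℝ) ^ n = 1 := Even.neg_one_pow ⟨m, hm⟩
    have e1 : ∫ ω, B 1 ω * B (1 + n) ω ∂Pr = 401 / (200 * u ^ 2) := by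
      rw [hI1]
      simp only [hNc]
      rw [Fin.sum_univ_four]
      norm_num [hμf, Matrix.cons_val_two, Matrix.cons_val_three]
      field_simp
      ring
    have e3 : ∫ ω, B (1 + n) ω ∂Pr = 21 / (20 * u) := by
      rw [hI3]
      simp only [hNc]
      rw [Fin.sum_univ_four]
      norm_num [hμf, Matrix.cons_val_two, Matrix.cons_val_three]
      field_simp
      ring
    have e4 : ∫ ω, B 1 ω ^ 2 ∂Pr = 401 / (100 * u ^ 2) := by
      rw [hI4, Fin.sum_univ_four]
      norm_num [hμf, Matrix.cons_val_two, Matrix.cons_val_three]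
      field_simp
      ring
    rw [e1, e2, e3, e4, hsign, one_mul]
    rw [show (401:ℝ) / (200 * u ^ 2) - 21 / (20 * u) * (21 / (20 * u)) = 361 / (400 * u ^ 2) by
      field_simp; ring]
    rw [show (401:ℝ) / (100 * u ^ 2) - (21 / (20 * u)) ^ 2 = 1163 / (400 * u ^ 2) by
      field_simp; ring]
    rw [div_eq_div_iff (by positivity) (by norm_num : (1163:ℝ) ≠ 0)]
    ring
  · -- odd case
    have hNc : ∀ j : Fin 4, μf (j + (n : Fin 4)) = μf (j + 1) := by
      intro j
      have h1 : ((n : ℕ) : Fin 4) = ((m : Fin 4) + (m : Fin 4)) + 1 := by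
        rw [hm]; open Fin.CommRing in (push_cast; ring)
      rw [h1, show j + (((m : Fin 4) + (m : Fin 4)) + 1)
          = (j + 1) + ((m : Fin 4) + (m : Fin 4)) by open Fin.CommRing in ring, hper2 m (j + 1)]
    have hsign : (-1 : ℝ) ^ n = -1 := Odd.neg_one_pow ⟨m, hm⟩
    have e1 : ∫ ω, B 1 ω * B (1 + n) ω ∂Pr = 1 / (5 * u ^ 2) := by
      rw [hI1]
      simp only [hNc]
      rw [Fin.sum_univ_four]
      simp only [show (0 + 1 : Fin 4) = 1 from rfl, show (1 + 1 : Fin 4) = 2 from rfl,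
        show (2 + 1 : Fin 4) = 3 from rfl, show (3 + 1 : Fin 4) = 0 from rfl]
      norm_num [hμf, Matrix.cons_val_two, Matrix.cons_val_three]
      field_simp
      ring
    have e3 : ∫ ω, B (1 + n) ω ∂Pr = 21 / (20 * u) := by
      rw [hI3]
      simp only [hNc]
      rw [Fin.sum_univ_four]
      simp only [show (0 + 1 : Fin 4) = 1 from rfl, show (1 + 1 : Fin 4) = 2 from rfl,
        show (2 + 1 : Fin 4) = 3 from rfl, show (3 + 1 : Fin 4) = 0 from rfl]
      norm_num [hμf, Matrix.cons_val_two, Matrix.cons_val_three]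
      field_simp
      ring
    have e4 : ∫ ω, B 1 ω ^ 2 ∂Pr = 401 / (100 * u ^ 2) := by
      rw [hI4, Fin.sum_univ_four]
      norm_num [hμf, Matrix.cons_val_two, Matrix.cons_val_three]
      field_simp
      ring
    rw [e1, e2, e3, e4, hsign]
    rw [show (-1 : ℝ) * (361 / 1163) = (-361) / 1163 by norm_num]
    rw [show (1:ℝ) / (5 * u ^ 2) - 21 / (20 * u) * (21 / (20 * u)) = -361 / (400 * u ^ 2) by
      field_simp; ring]
    rw [show (401:ℝ) / (100 * u ^ 2) - (21 / (20 * u)) ^ 2 = 1163 / (400 * u ^ 2) by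
      field_simp; ring]
    rw [div_eq_div_iff (by positivity) (by norm_num : (1163:ℝ) ≠ 0)]
    ring
end

section
/- Let μ > 0, let A ≥ 0 be a random variable with Laplace–Stieltjes transform α(s) = E[e^{−sA}], let B be exponentially distributed with rate μ, and let W ≥ 0 be a random variable such that W, A, B are mutually independent and max(0, B − A − W) has the same distribution as W. Then E[e^{−μW}] = 2/(2 + α(μ)), P[W = 0] = (2 − α(μ))/(2 + α(μ)), and for every Borel set S ⊆ (0,∞), P[W ∈ S] = ∫_S (2α(μ)/(2 + α(μ))) · μ e^{−μx} dx. -/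
open MeasureTheory ProbabilityTheory Real Set
open scoped ENNReal NNReal

lemma myHasDeriv (μ x : ℝ) :
    HasDerivAt (fun y => -Real.exp (-μ * y)) (μ * Real.exp (-μ * x)) x := by
  have h1 : HasDerivAt (fun y : ℝ => -μ * y) (-μ) x := by
    simpa using (hasDerivAt_id x).const_mul (-μ)
  have h2 := (Real.hasDerivAt_exp (-μ * x)).comp x h1
  have h3 := h2.neg
  have h4 : μ * Real.exp (-μ * x) = -(Real.exp (-μ * x) * -μ) := by ring
  rw [h4]
  exact h3

lemma myIoc (μ : ℝ) {t : ℝ} (ht : 0 ≤ t) :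
    ∫ x in Set.Ioc 0 t, μ * Real.exp (-μ * x) = 1 - Real.exp (-μ * t) := by
  rw [← intervalIntegral.integral_of_le ht]
  rw [intervalIntegral.integral_eq_sub_of_hasDerivAt
    (f := fun y => -Real.exp (-μ * y)) (fun x _ => myHasDeriv μ x)
    (by apply Continuous.intervalIntegrable; continuity)]
  simp
  ring

lemma myIoi {a : ℝ} (ha : 0 < a) :
    ∫ x in Set.Ioi (0:ℝ), Real.exp (-(a * x)) = 1 / a := by
  have := integral_comp_mul_left_Ioi (fun x => Real.exp (-x)) 0 ha
  simp only [mul_zero, smul_eq_mul] at this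
  rw [this, integral_exp_neg_Ioi_zero]
  simp [one_div]

lemma myIntegrableOnIoi {a : ℝ} (ha : 0 < a) (c : ℝ) :
    IntegrableOn (fun x => c * Real.exp (-a * x)) (Set.Ioi (0:ℝ)) := by
  have := (exp_neg_integrableOn_Ioi 0 ha).const_mul c
  simpa [neg_mul, IntegrableOn] using this

/-- The i.i.d. alternating service queue with exponential preparation times: if `A ≥ 0` has
Laplace–Stieltjes transform `α`, `B ~ Exp(μ)`, `W ≥ 0`, the three are mutually independent,
and `max (0, B - A - W)` has the same law as `W`, then `E[e^{-μW}] = 2/(2 + α(μ))`,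
`P[W = 0] = (2 - α(μ))/(2 + α(μ))`, and on `(0,∞)` the law of `W` has density
`x ↦ (2α(μ)/(2 + α(μ))) μ e^{-μx}`. -/
theorem stmt15 {Ω : Type*} [MeasurableSpace Ω] (Pr : Measure Ω) [IsProbabilityMeasure Pr]
    (μ : ℝ) (hμ : 0 < μ)
    (A B W : Ω → ℝ) (hA : Measurable A) (hB : Measurable B) (hW : Measurable W)
    (hA_nonneg : ∀ ω, 0 ≤ A ω) (hW_nonneg : ∀ ω, 0 ≤ W ω)
    (hB_exp : ∀ x : ℝ, Pr {ω | B ω ≤ x} = ENNReal.ofReal (1 - Real.exp (-μ * x)))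
    (h_indep : iIndepFun ![W, A, B] Pr)
    (h_stat : Measure.map (fun ω => max 0 (B ω - A ω - W ω)) Pr = Measure.map W Pr)
    (α : ℝ → ℝ) (hα : ∀ s : ℝ, α s = ∫ ω, Real.exp (-s * A ω) ∂Pr) :
    (∫ ω, Real.exp (-μ * W ω) ∂Pr) = 2 / (2 + α μ)
      ∧ Pr {ω | W ω = 0} = ENNReal.ofReal ((2 - α μ) / (2 + α μ))
      ∧ ∀ S : Set ℝ, MeasurableSet S → S ⊆ Set.Ioi 0 →
          Pr {ω | W ω ∈ S}
            = ENNReal.ofReal (∫ x in S, (2 * α μ / (2 + α μ)) * (μ * Real.exp (-μ * x))) := by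
  -- measurability basics
  have hexpA_meas : Measurable fun ω => Real.exp (-μ * A ω) :=
    Real.measurable_exp.comp (hA.const_mul (-μ))
  have hexpW_meas : Measurable fun ω => Real.exp (-μ * W ω) :=
    Real.measurable_exp.comp (hW.const_mul (-μ))
  have hexpA_int : Integrable (fun ω => Real.exp (-μ * A ω)) Pr := by
    refine Integrable.mono' (integrable_const 1) hexpA_meas.aestronglyMeasurable ?_
    filter_upwards with ω
    rw [Real.norm_eq_abs, abs_of_pos (Real.exp_pos _)]
    exact Real.exp_le_one_iff.mpr (by nlinarith [hA_nonneg ω])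
  have hexpW_int : Integrable (fun ω => Real.exp (-μ * W ω)) Pr := by
    refine Integrable.mono' (integrable_const 1) hexpW_meas.aestronglyMeasurable ?_
    filter_upwards with ω
    rw [Real.norm_eq_abs, abs_of_pos (Real.exp_pos _)]
    exact Real.exp_le_one_iff.mpr (by nlinarith [hW_nonneg ω])
  set β : ℝ := ∫ ω, Real.exp (-μ * W ω) ∂Pr with hβdef
  have hα0 : 0 ≤ α μ := by
    rw [hα μ]; exact integral_nonneg fun ω => (Real.exp_pos _).le
  have hα1 : α μ ≤ 1 := by
    rw [hα μ]
    calc ∫ ω, Real.exp (-μ * A ω) ∂Pr ≤ ∫ _ω, (1:ℝ) ∂Pr := by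
          refine integral_mono hexpA_int (integrable_const 1) fun ω => ?_
          exact Real.exp_le_one_iff.mpr (by nlinarith [hA_nonneg ω])
      _ = 1 := by simp
  have hβ0 : 0 ≤ β := integral_nonneg fun ω => (Real.exp_pos _).le
  have hβ1 : β ≤ 1 := by
    rw [hβdef]
    calc ∫ ω, Real.exp (-μ * W ω) ∂Pr ≤ ∫ _ω, (1:ℝ) ∂Pr := by
          refine integral_mono hexpW_int (integrable_const 1) fun ω => ?_
          exact Real.exp_le_one_iff.mpr (by nlinarith [hW_nonneg ω])
      _ = 1 := by simp
  -- independence facts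
  have hmeas : ∀ i, Measurable (![W, A, B] i) := by
    intro i
    fin_cases i <;> simpa using ‹_›
  have hAW : IndepFun A W Pr := h_indep.indepFun (show (1 : Fin 3) ≠ 0 by decide)
  have hindepexp : IndepFun (fun ω => Real.exp (-μ * A ω)) (fun ω => Real.exp (-μ * W ω)) Pr :=
    hAW.comp (Real.measurable_exp.comp (measurable_id.const_mul (-μ)))
      (Real.measurable_exp.comp (measurable_id.const_mul (-μ)))
  have hcEq : ∫ ω, Real.exp (-μ * (A ω + W ω)) ∂Pr = α μ * β := by
    have h1 := hindepexp.integral_mul_eq_mul_integral hexpA_int.1 hexpW_int.1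
    rw [hα μ, hβdef, ← h1]
    congr 1
    funext ω
    simp only [Pi.mul_apply]
    rw [← Real.exp_add]
    ring_nf
  set V : Ω → ℝ := fun ω => A ω + W ω with hVdef
  have hV : Measurable V := hA.add hW
  have hVB : IndepFun V B Pr := by
    have h01 : IndepFun (fun ω => (A ω, W ω)) B Pr :=
      h_indep.indepFun_prodMk hmeas 1 0 2 (by decide) (by decide)
    exact h01.comp (measurable_fst.add measurable_snd) measurable_id
  set ν : Measure ℝ := Measure.map V Pr with hνdef
  haveI : IsProbabilityMeasure ν := Measure.isProbabilityMeasure_map hV.aemeasurable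
  have hmapprod : Measure.map (fun ω => (V ω, B ω)) Pr = ν.prod (Measure.map B Pr) :=
    (indepFun_iff_map_prod_eq_prod_map_map hV.aemeasurable hB.aemeasurable).mp hVB
  have hBIic : ∀ x, Measure.map B Pr (Set.Iic x) = ENNReal.ofReal (1 - Real.exp (-μ * x)) := by
    intro x
    rw [Measure.map_apply hB measurableSet_Iic]
    exact hB_exp x
  have hVae : ∀ᵐ v ∂ν, 0 ≤ v := by
    rw [hνdef, ae_map_iff hV.aemeasurable (measurableSet_Ici : MeasurableSet (Set.Ici (0:ℝ)))]
    exact ae_of_all _ fun ω => add_nonneg (hA_nonneg ω) (hW_nonneg ω)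
  have hexpV_meas : Measurable fun v : ℝ => Real.exp (-μ * v) :=
    Real.measurable_exp.comp (measurable_id.const_mul (-μ))
  have hexpV_int : Integrable (fun v => Real.exp (-μ * v)) ν := by
    refine Integrable.mono' (integrable_const 1) hexpV_meas.aestronglyMeasurable ?_
    filter_upwards [hVae] with v hv
    rw [Real.norm_eq_abs, abs_of_pos (Real.exp_pos _)]
    exact Real.exp_le_one_iff.mpr (by nlinarith)
  have hcV : ∫ v, Real.exp (-μ * v) ∂ν = α μ * β := by
    rw [hνdef, integral_map hV.aemeasurable hexpV_meas.aestronglyMeasurable]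
    exact hcEq
  -- CDF of W for t ≥ 0
  have hmax_meas : Measurable fun ω => max 0 (B ω - A ω - W ω) :=
    measurable_const.max ((hB.sub hA).sub hW)
  have hWcdf : ∀ t : ℝ, 0 ≤ t →
      Measure.map W Pr (Set.Iic t) = ENNReal.ofReal (1 - α μ * β * Real.exp (-μ * t)) := by
    intro t ht
    have hsetmeas : MeasurableSet {p : ℝ × ℝ | p.2 ≤ p.1 + t} :=
      measurableSet_le measurable_snd (measurable_fst.add measurable_const)
    have hset : (fun ω => max 0 (B ω - A ω - W ω)) ⁻¹' (Set.Iic t)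
        = (fun ω => (V ω, B ω)) ⁻¹' {p : ℝ × ℝ | p.2 ≤ p.1 + t} := by
      ext ω
      simp only [Set.mem_preimage, Set.mem_Iic, max_le_iff, Set.mem_setOf_eq, hVdef]
      constructor
      · rintro ⟨-, h⟩; linarith
      · intro h; exact ⟨ht, by linarith⟩
    rw [← h_stat, Measure.map_apply hmax_meas measurableSet_Iic, hset,
      ← Measure.map_apply (hV.prodMk hB) hsetmeas, hmapprod,
      Measure.prod_apply hsetmeas]
    have hfiber : ∀ v : ℝ, (Prod.mk v ⁻¹' {p : ℝ × ℝ | p.2 ≤ p.1 + t}) = Set.Iic (v + t) :=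
      fun v => rfl
    simp only [hfiber, hBIic]
    have hint : Integrable (fun v => 1 - Real.exp (-μ * (v + t))) ν := by
      have h2 : Integrable (fun v => Real.exp (-μ * t) * Real.exp (-μ * v)) ν :=
        hexpV_int.const_mul _
      have h3 : (fun v => Real.exp (-μ * (v + t)))
          = fun v => Real.exp (-μ * t) * Real.exp (-μ * v) := by
        funext v; rw [← Real.exp_add]; ring_nf
      exact (integrable_const 1).sub (h3 ▸ h2)
    have hnn : 0 ≤ᵐ[ν] fun v => 1 - Real.exp (-μ * (v + t)) := by
      filter_upwards [hVae] with v hv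
      have : Real.exp (-μ * (v + t)) ≤ 1 := Real.exp_le_one_iff.mpr (by nlinarith)
      simp only [Pi.zero_apply]; linarith
    rw [← ofReal_integral_eq_lintegral_ofReal hint hnn]
    congr 1
    have h3 : (fun v => Real.exp (-μ * (v + t)))
        = fun v => Real.exp (-μ * t) * Real.exp (-μ * v) := by
      funext v; rw [← Real.exp_add]; ring_nf
    rw [integral_sub (integrable_const 1) (h3 ▸ hexpV_int.const_mul _), h3,
      integral_const_mul, hcV]
    simp [measure_univ]
    ring
  -- the candidate law
  set cR : ℝ := α μ * β with hcRdef
  have hc0 : 0 ≤ cR := mul_nonneg hα0 hβ0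
  have hc1 : cR ≤ 1 := by nlinarith
  have hdens_meas : Measurable fun x : ℝ => (cR * (μ * Real.exp (-μ * x))).toNNReal :=
    measurable_real_toNNReal.comp
      (((Real.measurable_exp.comp (measurable_id.const_mul (-μ))).const_mul μ).const_mul cR)
  set m : Measure ℝ := ENNReal.ofReal (1 - cR) • Measure.dirac 0
      + (volume.restrict (Set.Ioi 0)).withDensity
          (fun x => ((cR * (μ * Real.exp (-μ * x))).toNNReal : ℝ≥0∞)) with hmdef
  have hIntIoi : IntegrableOn (fun x => cR * (μ * Real.exp (-μ * x))) (Set.Ioi (0:ℝ)) := by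
    simpa [mul_assoc] using myIntegrableOnIoi hμ (cR * μ)
  have hwd : ∀ s : Set ℝ, MeasurableSet s →
      (volume.restrict (Set.Ioi 0)).withDensity
        (fun x => ((cR * (μ * Real.exp (-μ * x))).toNNReal : ℝ≥0∞)) s
      = ∫⁻ x in s ∩ Set.Ioi 0, ENNReal.ofReal (cR * (μ * Real.exp (-μ * x))) := by
    intro s hs
    rw [withDensity_apply _ hs, Measure.restrict_restrict hs]
    rfl
  have hlint : ∀ s : Set ℝ, MeasurableSet s → s ⊆ Set.Ioi 0 →
      ∫⁻ x in s, ENNReal.ofReal (cR * (μ * Real.exp (-μ * x)))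
        = ENNReal.ofReal (∫ x in s, cR * (μ * Real.exp (-μ * x))) := by
    intro s hs hsub
    rw [← ofReal_integral_eq_lintegral_ofReal (hIntIoi.mono_set hsub)
      (ae_of_all _ fun x => by positivity)]
  have hmIic : ∀ t : ℝ, 0 ≤ t → m (Set.Iic t) = ENNReal.ofReal (1 - cR * Real.exp (-μ * t)) := by
    intro t ht
    rw [hmdef, Measure.add_apply, Measure.smul_apply,
      Measure.dirac_apply' _ measurableSet_Iic, hwd _ measurableSet_Iic]
    have h1 : Set.Iic t ∩ Set.Ioi 0 = Set.Ioc 0 t := by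
      rw [Set.inter_comm]; exact Set.Ioi_inter_Iic
    rw [h1, hlint _ measurableSet_Ioc Set.Ioc_subset_Ioi_self]
    have h2 : ∫ x in Set.Ioc 0 t, cR * (μ * Real.exp (-μ * x))
        = cR * (1 - Real.exp (-μ * t)) := by
      rw [integral_const_mul, myIoc μ ht]
    rw [h2, Set.indicator_of_mem (by exact ht : (0:ℝ) ∈ Set.Iic t)]
    have hexple : Real.exp (-μ * t) ≤ 1 := Real.exp_le_one_iff.mpr (by nlinarith)
    rw [Pi.one_apply, smul_eq_mul, mul_one,
      ← ENNReal.ofReal_add (by linarith) (by nlinarith)]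
    congr 1
    ring
  -- identify the law of W
  have hWlaw : Measure.map W Pr = m := by
    haveI : IsProbabilityMeasure (Measure.map W Pr) := Measure.isProbabilityMeasure_map hW.aemeasurable
    refine Measure.ext_of_Iic (Measure.map W Pr) m fun t => ?_
    rcases le_or_gt 0 t with ht | ht
    · rw [hWcdf t ht, hmIic t ht]
    · have h1 : Measure.map W Pr (Set.Iic t) = 0 := by
        rw [Measure.map_apply hW measurableSet_Iic]
        have he : W ⁻¹' Set.Iic t = ∅ := by
          ext ω
          simp only [Set.mem_preimage, Set.mem_Iic, Set.mem_empty_iff_false, iff_false, not_le]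
          exact lt_of_lt_of_le ht (hW_nonneg ω)
        rw [he]; exact measure_empty
      rw [h1, hmdef, Measure.add_apply, Measure.smul_apply,
        Measure.dirac_apply' _ measurableSet_Iic, hwd _ measurableSet_Iic]
      have h2 : Set.Iic t ∩ Set.Ioi 0 = ∅ := by
        ext x
        simp only [Set.mem_inter_iff, Set.mem_Iic, Set.mem_Ioi, Set.mem_empty_iff_false,
          iff_false, not_and, not_lt]
        intro hx; linarith
      rw [h2, Set.indicator_of_notMem (by simpa using ht : (0:ℝ) ∉ Set.Iic t)]
      simp
  -- compute β from the identified law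
  have hprod_exp : ∀ x : ℝ, Real.exp (-μ * x) * Real.exp (-μ * x) = Real.exp (-(2 * μ * x)) := by
    intro x; rw [← Real.exp_add]; congr 1; ring
  have hsmul_eq : (fun x => ((cR * (μ * Real.exp (-μ * x))).toNNReal) • Real.exp (-μ * x))
      = fun x => (cR * μ) * Real.exp (-(2 * μ) * x) := by
    funext x
    rw [NNReal.smul_def, Real.coe_toNNReal _ (by positivity)]
    have : Real.exp (-(2 * μ) * x) = Real.exp (-μ * x) * Real.exp (-μ * x) := by
      rw [hprod_exp x]; congr 1; ring
    rw [this, smul_eq_mul]; ring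
  have hβeq : β = (1 - cR) + cR / 2 := by
    have hβm : β = ∫ x, Real.exp (-μ * x) ∂(Measure.map W Pr) :=
      (integral_map hW.aemeasurable hexpV_meas.aestronglyMeasurable).symm
    rw [hβm, hWlaw, hmdef, integral_add_measure ?_ ?_]
    · congr 1
      · rw [integral_smul_measure, integral_dirac]
        simp [ENNReal.toReal_ofReal (by linarith : (0:ℝ) ≤ 1 - cR)]
      · rw [integral_withDensity_eq_integral_smul hdens_meas, hsmul_eq, integral_const_mul]
        have h2μ : (0:ℝ) < 2 * μ := by linarith
        have : ∫ x in Set.Ioi (0:ℝ), Real.exp (-(2 * μ) * x) = 1 / (2 * μ) := by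
          rw [show (fun x : ℝ => Real.exp (-(2 * μ) * x)) = fun x => Real.exp (-(2 * μ * x)) by
            funext x; congr 1; ring]
          exact myIoi h2μ
        rw [this]
        field_simp
    · refine Integrable.smul_measure ?_ ENNReal.ofReal_ne_top
      refine Integrable.mono' (integrable_const 1) hexpV_meas.aestronglyMeasurable ?_
      refine (ae_dirac_iff ?_).mpr ?_
      · exact measurableSet_le hexpV_meas.norm measurable_const
      · simp
    · rw [integrable_withDensity_iff_integrable_smul hdens_meas, hsmul_eq]
      exact myIntegrableOnIoi (by linarith : (0:ℝ) < 2 * μ) (cR * μ)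
  have h2α : (0:ℝ) < 2 + α μ := by linarith
  have hβval : β = 2 / (2 + α μ) := by
    rw [eq_div_iff (ne_of_gt h2α)]
    have h := hβeq
    rw [hcRdef] at h
    linear_combination 2 * h
  have hcval : cR = 2 * α μ / (2 + α μ) := by
    rw [hcRdef, hβval]; ring
  refine ⟨hβval, ?_, ?_⟩
  · have h1 : {ω | W ω = 0} = W ⁻¹' {0} := rfl
    rw [h1, ← Measure.map_apply hW (measurableSet_singleton 0), hWlaw, hmdef,
      Measure.add_apply, Measure.smul_apply,
      Measure.dirac_apply' _ (measurableSet_singleton 0), hwd _ (measurableSet_singleton 0)]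
    have h2 : ({0} : Set ℝ) ∩ Set.Ioi 0 = ∅ := by
      ext x
      simp only [Set.mem_inter_iff, Set.mem_singleton_iff, Set.mem_Ioi,
        Set.mem_empty_iff_false, iff_false, not_and, not_lt]
      intro hx; simp [hx]
    rw [h2]
    simp only [Measure.restrict_empty, lintegral_zero_measure, add_zero,
      Set.indicator_of_mem (Set.mem_singleton (0:ℝ)), Pi.one_apply, smul_eq_mul, mul_one]
    congr 1
    rw [hcval]
    field_simp
    ring
  · intro S hS hSsub
    have h1 : {ω | W ω ∈ S} = W ⁻¹' S := rfl
    rw [h1, ← Measure.map_apply hW hS, hWlaw, hmdef, Measure.add_apply, Measure.smul_apply,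
      Measure.dirac_apply' _ hS, hwd _ hS, Set.inter_eq_self_of_subset_left hSsub,
      hlint _ hS hSsub]
    have h0S : (0:ℝ) ∉ S := fun h => lt_irrefl 0 (Set.mem_Ioi.mp (hSsub h))
    rw [Set.indicator_of_notMem h0S, smul_zero, zero_add]
    congr 1
    rw [hcval]
end

section
/- Let c > 1 and let A be exponentially distributed with rate 1. Let W be a random variable, independent of A, whose law is the mixture (1/3)·δ_0 + (2/3)·Exp(1/(c−1)), i.e., P[W = 0] = 1/3 and P[W ∈ S] = ∫_S (2/(3(c−1))) e^{−x/(c−1)} dx for Borel S ⊆ (0,∞). Then max(0, (c−1)A − W) has the same distribution as W, and E[W] = 2(c−1)/3. -/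
open MeasureTheory ProbabilityTheory Set Real

lemma expdiv' {a : ℝ} : (fun x : ℝ => Real.exp (-x/a)) = fun x => Real.exp (-(a⁻¹*x)) := by
  funext x; rw [neg_div, div_eq_inv_mul]

lemma helpI {a : ℝ} (ha : 0 < a) : ∫ x in Set.Ioi (0:ℝ), Real.exp (-x/a) = a := by
  have hb : 0 < a⁻¹ := inv_pos.mpr ha
  have h := integral_comp_mul_left_Ioi (fun y => Real.exp (-y)) 0 hb
  simp only [mul_zero, integral_exp_neg_Ioi_zero, smul_eq_mul, mul_one, inv_inv] at h
  rw [expdiv', h]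

lemma helpIg {a : ℝ} (ha : 0 < a) : IntegrableOn (fun x => Real.exp (-x/a)) (Set.Ioi (0:ℝ)) := by
  rw [expdiv']
  simpa only [neg_mul] using exp_neg_integrableOn_Ioi 0 (inv_pos.mpr ha)

lemma helpJ1 : ∫ y in Set.Ioi (0:ℝ), y * Real.exp (-y) = 1 := by
  have h := Real.Gamma_eq_integral (by norm_num : (0:ℝ) < 2)
  rw [Real.Gamma_two] at h
  norm_num [Real.rpow_one] at h
  rw [h]; congr 1; funext y; ring

lemma helpJ {a : ℝ} (ha : 0 < a) : ∫ x in Set.Ioi (0:ℝ), x * Real.exp (-x/a) = a^2 := by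
  have hb : 0 < a⁻¹ := inv_pos.mpr ha
  have h := integral_comp_mul_left_Ioi (fun y => y * Real.exp (-y)) 0 hb
  simp only [mul_zero, helpJ1, smul_eq_mul, mul_one, inv_inv] at h
  have h4 : (∫ x in Set.Ioi (0:ℝ), a⁻¹ * (x * Real.exp (-x/a))) = a := by
    calc (∫ x in Set.Ioi (0:ℝ), a⁻¹ * (x * Real.exp (-x/a)))
        = ∫ x in Set.Ioi (0:ℝ), a⁻¹ * x * Real.exp (-(a⁻¹*x)) :=
          setIntegral_congr_fun measurableSet_Ioi (fun x _ => by
            rw [neg_div, div_eq_inv_mul]; ring)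
      _ = a := h
  rw [integral_const_mul] at h4
  have h5 : (∫ x in Set.Ioi (0:ℝ), x * Real.exp (-x/a)) = a * a := by
    rw [inv_mul_eq_iff_eq_mul₀ ha.ne'] at h4; exact h4
  rw [h5, sq]

lemma helpJg1 : IntegrableOn (fun y : ℝ => y * Real.exp (-y)) (Set.Ioi (0:ℝ)) := by
  have h := Real.GammaIntegral_convergent (by norm_num : (0:ℝ) < 2)
  refine h.congr_fun (fun x _ => ?_) measurableSet_Ioi
  norm_num [Real.rpow_one]; ring

lemma helpJg {a : ℝ} (ha : 0 < a) :
    IntegrableOn (fun x => x * Real.exp (-x/a)) (Set.Ioi (0:ℝ)) := by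
  have hb : 0 < a⁻¹ := inv_pos.mpr ha
  have h := (integrableOn_Ioi_comp_mul_left_iff (fun y : ℝ => y * Real.exp (-y)) 0 hb).mpr
    (by simpa using helpJg1)
  have h2 : IntegrableOn (fun x : ℝ => a * (a⁻¹ * x * Real.exp (-(a⁻¹ * x)))) (Set.Ioi 0) := by
    simpa [IntegrableOn] using h.const_mul a
  refine h2.congr_fun (fun x _ => ?_) measurableSet_Ioi
  rw [neg_div, div_eq_inv_mul]
  field_simp

lemma helpK {a t : ℝ} (ha : 0 < a) (ht : 0 ≤ t) :
    ∫ x in Set.Ioc (0:ℝ) t, Real.exp (-x/a) = a * (1 - Real.exp (-t/a)) := by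
  rw [← intervalIntegral.integral_of_le ht]
  have h1 : ∀ x : ℝ, Real.exp (-x/a) = Real.exp ((-a⁻¹)*x) := fun x => by
    congr 1; rw [neg_div, div_eq_inv_mul]; ring
  simp only [h1]
  rw [_root_.intervalIntegral.integral_comp_mul_left (fun y => Real.exp y)
    (neg_ne_zero.mpr (inv_ne_zero ha.ne'))]
  simp only [mul_zero, _root_.integral_exp, Real.exp_zero, smul_eq_mul]
  rw [← h1 t]
  field_simp
  ring

lemma helpCross {a x : ℝ} (ha : 0 < a) (hx : 0 ≤ x) :
    ∀ w : ℝ, Real.exp (-w/a) * Real.exp (-((x+w)/a))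
      = Real.exp (-x/a) * Real.exp (-w/(a/2)) := by
  intro w
  rw [← Real.exp_add, ← Real.exp_add]
  congr 1
  field_simp
  ring

lemma helpMainInt {a x : ℝ} (ha : 0 < a) (hx : 0 ≤ x) :
    IntegrableOn (fun w => (2/(3*a)) * Real.exp (-w/a) * (1 - Real.exp (-((x+w)/a))))
      (Set.Ioi (0:ℝ)) := by
  have h1 : IntegrableOn (fun w : ℝ => (2/(3*a)) * Real.exp (-w/a)) (Set.Ioi 0) :=
    (helpIg ha).const_mul _
  have h2 : IntegrableOn
      (fun w : ℝ => (2/(3*a)) * Real.exp (-x/a) * Real.exp (-w/(a/2))) (Set.Ioi 0) :=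
    (helpIg (by linarith : (0:ℝ) < a/2)).const_mul _
  refine (h1.sub h2).congr ?_
  filter_upwards [ae_restrict_mem measurableSet_Ioi] with w _
  have := helpCross ha hx w
  simp only [Pi.sub_apply]
  linear_combination ((2:ℝ)/(3*a)) * this

lemma helpMain {a x : ℝ} (ha : 0 < a) (hx : 0 ≤ x) :
    ∫ w in Set.Ioi (0:ℝ), (2/(3*a)) * Real.exp (-w/a) * (1 - Real.exp (-((x+w)/a)))
      = 2/3 - Real.exp (-x/a)/3 := by
  have h1 : IntegrableOn (fun w : ℝ => (2/(3*a)) * Real.exp (-w/a)) (Set.Ioi 0) :=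
    (helpIg ha).const_mul _
  have h2 : IntegrableOn
      (fun w : ℝ => (2/(3*a)) * Real.exp (-x/a) * Real.exp (-w/(a/2))) (Set.Ioi 0) :=
    (helpIg (by linarith : (0:ℝ) < a/2)).const_mul _
  have heq : ∀ w ∈ Set.Ioi (0:ℝ),
      (2/(3*a)) * Real.exp (-w/a) * (1 - Real.exp (-((x+w)/a)))
        = (2/(3*a)) * Real.exp (-w/a)
          - (2/(3*a)) * Real.exp (-x/a) * Real.exp (-w/(a/2)) := by
    intro w _
    have := helpCross ha hx w
    linear_combination (-(2:ℝ)/(3*a)) * this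
  rw [setIntegral_congr_fun measurableSet_Ioi heq, integral_sub h1 h2,
    integral_const_mul, integral_const_mul, helpI ha, helpI (by linarith : (0:ℝ) < a/2)]
  field_simp

/-- Linear dependence `B = cA`, `c > 1`: if `A ~ Exp(1)` and `W` is independent of `A`
with law `(1/3)δ₀ + (2/3)Exp(1/(c-1))`, then `max (0, (c-1)A - W)` has the same law as
`W`, and `E[W] = 2(c-1)/3`. -/
theorem stmt16 {Ω : Type*} [MeasurableSpace Ω] (Pr : Measure Ω) [IsProbabilityMeasure Pr]
    (c : ℝ) (hc : 1 < c)
    (A W : Ω → ℝ) (hA : Measurable A) (hW : Measurable W)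
    (hA_exp : ∀ x : ℝ, Pr {ω | A ω ≤ x} = ENNReal.ofReal (1 - Real.exp (-x)))
    (h_indep : IndepFun W A Pr)
    (hW0 : Pr {ω | W ω = 0} = ENNReal.ofReal (1 / 3))
    (hW_density : ∀ S : Set ℝ, MeasurableSet S → S ⊆ Set.Ioi 0 →
      Pr {ω | W ω ∈ S}
        = ENNReal.ofReal (∫ x in S, (2 / (3 * (c - 1))) * Real.exp (-x / (c - 1)))) :
    Measure.map (fun ω => max 0 ((c - 1) * A ω - W ω)) Pr = Measure.map W Pr
      ∧ ∫ ω, W ω ∂Pr = 2 * (c - 1) / 3 := by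
  have ha : (0:ℝ) < c - 1 := by linarith
  set d : ℝ → ℝ := fun x => (2 / (3 * (c - 1))) * Real.exp (-x / (c - 1)) with hd_def
  set g : ℝ → ENNReal := (Set.Ioi (0:ℝ)).indicator (fun x => ENNReal.ofReal (d x)) with hg_def
  have hd_meas : Measurable d := by fun_prop
  have hd_nonneg : ∀ x, 0 ≤ d x := fun x => by
    have := Real.exp_pos (-x/(c-1)); positivity
  have hgmeas : Measurable g :=
    (ENNReal.measurable_ofReal.comp hd_meas).indicator measurableSet_Ioi
  have hd_int : IntegrableOn d (Set.Ioi 0) := (helpIg ha).const_mul _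
  have hd_total : ∫ x in Set.Ioi (0:ℝ), d x = 2/3 := by
    rw [hd_def]
    rw [integral_const_mul, helpI ha]
    field_simp
  -- preimage versions of the hypotheses
  have hW0' : Pr (W ⁻¹' {0}) = ENNReal.ofReal (1/3) := by
    rw [show W ⁻¹' {0} = {ω | W ω = 0} from rfl]; exact hW0
  have hWD : ∀ S : Set ℝ, MeasurableSet S → S ⊆ Set.Ioi 0 →
      Pr (W ⁻¹' S) = ENNReal.ofReal (∫ x in S, d x) := fun S hS hSsub => by
    rw [show W ⁻¹' S = {ω | W ω ∈ S} from rfl]; exact hW_density S hS hSsub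
  have hWIoi : Pr (W ⁻¹' Set.Ioi 0) = ENNReal.ofReal (2/3) := by
    rw [hWD _ measurableSet_Ioi subset_rfl, hd_total]
  -- W is a.s. nonnegative
  have hWneg : Pr (W ⁻¹' Set.Iio 0) = 0 := by
    have hci : Pr (W ⁻¹' Set.Ici 0) = 1 := by
      have hu : W ⁻¹' Set.Ici 0 = W ⁻¹' {0} ∪ W ⁻¹' Set.Ioi 0 := by
        rw [← Set.preimage_union]
        congr 1
        ext y; simp [le_iff_lt_or_eq, eq_comm, or_comm]
      have hdisj : Disjoint ({0} : Set ℝ) (Set.Ioi 0) :=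
        Set.disjoint_singleton_left.mpr (Set.notMem_Ioi.mpr le_rfl)
      rw [hu, measure_union (hdisj.preimage W) (hW measurableSet_Ioi), hW0', hWIoi,
        ← ENNReal.ofReal_add (by norm_num) (by norm_num)]
      norm_num
    have hcompl : W ⁻¹' Set.Iio 0 = (W ⁻¹' Set.Ici 0)ᶜ := by
      rw [← Set.preimage_compl, Set.compl_Ici]
    rw [hcompl, measure_compl (hW measurableSet_Ici) (measure_ne_top _ _), hci,
      measure_univ, tsub_self]
  -- the law of W
  have hmap : Measure.map W Pr
      = ENNReal.ofReal (1/3) • Measure.dirac 0 + volume.withDensity g := by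
    ext s hs
    rw [Measure.map_apply hW hs]
    have hae2 : W ⁻¹' s =ᵐ[Pr] W ⁻¹' (s ∩ Set.Ici 0) := by
      rw [MeasureTheory.ae_eq_set]
      constructor
      · refine measure_mono_null (fun ω hω => ?_) hWneg
        rcases hω with ⟨h1, h2⟩
        simp only [Set.mem_preimage] at h1
        simp only [Set.mem_preimage, Set.mem_inter_iff, Set.mem_Ici, not_and] at h2
        by_contra h
        simp only [Set.mem_preimage, Set.mem_Iio, not_lt] at h
        exact h2 h1 h
      · refine measure_mono_null (fun ω hω => ?_) hWneg
        simp only [Set.mem_diff, Set.mem_preimage, Set.mem_inter_iff] at hω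
        exact absurd hω.1.1 hω.2
    rw [measure_congr hae2]
    have hdecomp : s ∩ Set.Ici 0 = (s ∩ {0}) ∪ (s ∩ Set.Ioi 0) := by
      ext y
      simp only [Set.mem_inter_iff, Set.mem_Ici, Set.mem_union, Set.mem_singleton_iff,
        Set.mem_Ioi]
      constructor
      · rintro ⟨hy, h0⟩
        rcases h0.lt_or_eq with h | h
        · exact Or.inr ⟨hy, h⟩
        · exact Or.inl ⟨hy, h.symm⟩
      · rintro (⟨hy, h⟩ | ⟨hy, h⟩)
        · exact ⟨hy, h.ge⟩
        · exact ⟨hy, h.le⟩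
    rw [hdecomp, Set.preimage_union,
      measure_union ?_ (hW (hs.inter measurableSet_Ioi))]
    · have hpart2 : Pr (W ⁻¹' (s ∩ Set.Ioi 0)) = ∫⁻ x in s, g x := by
        rw [hWD _ (hs.inter measurableSet_Ioi) Set.inter_subset_right,
          MeasureTheory.ofReal_integral_eq_lintegral_ofReal
            (hd_int.mono_set Set.inter_subset_right) (Filter.Eventually.of_forall hd_nonneg),
          hg_def, lintegral_indicator measurableSet_Ioi,
          Measure.restrict_restrict measurableSet_Ioi, Set.inter_comm]
      rw [hpart2, Measure.add_apply, Measure.smul_apply, smul_eq_mul,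
        Measure.dirac_apply' 0 hs, withDensity_apply g hs]
      by_cases h0s : (0:ℝ) ∈ s
      · rw [Set.inter_eq_self_of_subset_right (Set.singleton_subset_iff.mpr h0s), hW0',
          Set.indicator_of_mem h0s]
        simp
      · rw [Set.indicator_of_notMem h0s]
        have : s ∩ {0} = ∅ := by
          ext y; simp only [Set.mem_inter_iff, Set.mem_singleton_iff, Set.mem_empty_iff_false,
            iff_false, not_and]
          rintro hy rfl; exact h0s hy
        rw [this]
        simp
    · have hdisj : Disjoint ({0} : Set ℝ) (Set.Ioi 0) :=
        Set.disjoint_singleton_left.mpr (Set.notMem_Ioi.mpr le_rfl)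
      exact (hdisj.mono Set.inter_subset_right Set.inter_subset_right).preimage W
  -- lintegral against the law of W
  have hlint : ∀ f : ℝ → ENNReal, Measurable f →
      ∫⁻ x, f x ∂(Measure.map W Pr)
        = ENNReal.ofReal (1/3) * f 0 + ∫⁻ x in Set.Ioi 0, ENNReal.ofReal (d x) * f x := by
    intro f hf
    rw [hmap, lintegral_add_measure, lintegral_smul_measure, lintegral_dirac,
      lintegral_withDensity_eq_lintegral_mul volume hgmeas hf]
    congr 1
    have : (fun x => (g * f) x) = (Set.Ioi (0:ℝ)).indicator
        (fun x => ENNReal.ofReal (d x) * f x) := by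
      funext x
      by_cases hx : x ∈ Set.Ioi (0:ℝ)
      · simp [hg_def, Set.indicator_of_mem hx]
      · simp [hg_def, Set.indicator_of_notMem hx]
    rw [this, lintegral_indicator measurableSet_Ioi]
  have hM : Measurable (fun ω => max 0 ((c - 1) * A ω - W ω)) :=
    measurable_const.max ((measurable_const.mul hA).sub hW)
  haveI : IsProbabilityMeasure (Measure.map W Pr) :=
    Measure.isProbabilityMeasure_map hW.aemeasurable
  haveI : IsProbabilityMeasure (Measure.map (fun ω => max 0 ((c - 1) * A ω - W ω)) Pr) :=
    Measure.isProbabilityMeasure_map hM.aemeasurable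
  constructor
  · -- equality of laws
    refine MeasureTheory.Measure.ext_of_Iic _ _ (fun x => ?_)
    rcases lt_or_ge x 0 with hx | hx
    · -- x < 0 : both sides vanish
      rw [Measure.map_apply hM measurableSet_Iic, Measure.map_apply hW measurableSet_Iic]
      have h1 : (fun ω => max 0 ((c - 1) * A ω - W ω)) ⁻¹' Set.Iic x = ∅ := by
        ext ω
        simp only [Set.mem_preimage, Set.mem_Iic, Set.mem_empty_iff_false, iff_false, not_le]
        exact lt_of_lt_of_le hx (le_max_left _ _)
      rw [h1, measure_empty]
      refine (measure_mono_null (fun ω hω => ?_) hWneg).symm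
      simp only [Set.mem_preimage, Set.mem_Iic] at hω
      simpa using lt_of_le_of_lt hω hx
    · -- 0 ≤ x
      have hE1 : Real.exp (-(x/(c-1))) ≤ 1 :=
        Real.exp_le_one_iff.mpr (by
          rw [neg_nonpos]
          positivity)
      have hE0 : (0:ℝ) < Real.exp (-(x/(c-1))) := Real.exp_pos _
      have hRHS : Measure.map W Pr (Set.Iic x)
          = ENNReal.ofReal (1/3) + ENNReal.ofReal (2/3 * (1 - Real.exp (-x/(c-1)))) := by
        rw [hmap, Measure.add_apply, Measure.smul_apply, smul_eq_mul,
          Measure.dirac_apply' 0 measurableSet_Iic, Set.indicator_of_mem (by simpa using hx),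
          withDensity_apply g measurableSet_Iic]
        have hgint : ∫⁻ y in Set.Iic x, g y
            = ENNReal.ofReal (2/3 * (1 - Real.exp (-x/(c-1)))) := by
          rw [hg_def, lintegral_indicator measurableSet_Ioi,
            Measure.restrict_restrict measurableSet_Ioi, Set.Ioi_inter_Iic,
            ← MeasureTheory.ofReal_integral_eq_lintegral_ofReal
              (hd_int.mono_set Set.Ioc_subset_Ioi_self)
              (Filter.Eventually.of_forall hd_nonneg)]
          congr 1
          rw [hd_def]
          rw [integral_const_mul, helpK ha hx]
          field_simp
        rw [hgint]
        simp
      rw [hRHS]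
      have hpre : (fun ω => max 0 ((c - 1) * A ω - W ω)) ⁻¹' Set.Iic x
          = (fun ω => (W ω, A ω)) ⁻¹' {p : ℝ × ℝ | (c-1) * p.2 - p.1 ≤ x} := by
        ext ω
        simp only [Set.mem_preimage, Set.mem_Iic, Set.mem_setOf_eq, max_le_iff]
        exact ⟨fun h => h.2, fun h => ⟨hx, h⟩⟩
      have hE : MeasurableSet {p : ℝ × ℝ | (c-1) * p.2 - p.1 ≤ x} :=
        measurableSet_le ((measurable_const.mul measurable_snd).sub measurable_fst)
          measurable_const
      rw [Measure.map_apply hM measurableSet_Iic, hpre,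
        ← Measure.map_apply (hW.prodMk hA) hE,
        (indepFun_iff_map_prod_eq_prod_map_map hW.aemeasurable hA.aemeasurable).mp h_indep,
        Measure.prod_apply hE]
      have hsec : ∀ w : ℝ,
          Measure.map A Pr (Prod.mk w ⁻¹' {p : ℝ × ℝ | (c-1)*p.2 - p.1 ≤ x})
            = ENNReal.ofReal (1 - Real.exp (-((x + w)/(c-1)))) := by
        intro w
        have hset : Prod.mk w ⁻¹' {p : ℝ × ℝ | (c-1)*p.2 - p.1 ≤ x}
            = Set.Iic ((x+w)/(c-1)) := by
          ext y
          simp only [Set.mem_preimage, Set.mem_setOf_eq, Set.mem_Iic]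
          rw [le_div_iff₀ ha]
          constructor <;> intro h <;> nlinarith
        rw [hset, Measure.map_apply hA measurableSet_Iic]
        exact hA_exp _
      have hcongr : ∫⁻ w, Measure.map A Pr
            (Prod.mk w ⁻¹' {p : ℝ × ℝ | (c-1)*p.2 - p.1 ≤ x}) ∂(Measure.map W Pr)
          = ∫⁻ w, ENNReal.ofReal (1 - Real.exp (-((x + w)/(c-1)))) ∂(Measure.map W Pr) :=
        lintegral_congr fun w => hsec w
      rw [hcongr, hlint (fun w => ENNReal.ofReal (1 - Real.exp (-((x + w)/(c-1)))))
        (by fun_prop)]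
      have hset2 : ∫⁻ w in Set.Ioi 0,
            ENNReal.ofReal (d w) * ENNReal.ofReal (1 - Real.exp (-((x + w)/(c-1))))
          = ENNReal.ofReal (2/3 - Real.exp (-x/(c-1))/3) := by
        have hptw : ∀ w ∈ Set.Ioi (0:ℝ),
            ENNReal.ofReal (d w) * ENNReal.ofReal (1 - Real.exp (-((x + w)/(c-1))))
              = ENNReal.ofReal
                  (2/(3*(c-1)) * Real.exp (-w/(c-1)) * (1 - Real.exp (-((x + w)/(c-1))))) := by
          intro w hw
          rw [← ENNReal.ofReal_mul (hd_nonneg w)]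
        rw [setLIntegral_congr_fun measurableSet_Ioi hptw,
          ← MeasureTheory.ofReal_integral_eq_lintegral_ofReal (helpMainInt ha hx)
            ((ae_restrict_iff' measurableSet_Ioi).mpr
              (Filter.Eventually.of_forall fun w hw => ?_)),
          helpMain ha hx]
        refine mul_nonneg (mul_nonneg (le_of_lt (div_pos (by norm_num) (by linarith)))
          (Real.exp_pos _).le) ?_
        rw [sub_nonneg]
        refine Real.exp_le_one_iff.mpr ?_
        rw [neg_nonpos]
        have hw' : (0:ℝ) < w := hw
        positivity
      rw [hset2]
      simp only [add_zero]
      rw [← ENNReal.ofReal_mul (by norm_num : (0:ℝ) ≤ 1/3),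
        ← ENNReal.ofReal_add ?h1 ?h2, ← ENNReal.ofReal_add (by norm_num) ?h3]
      case h1 => nlinarith
      case h2 => simp only [neg_div]; nlinarith
      case h3 => simp only [neg_div]; nlinarith
      congr 1
      simp only [neg_div]
      ring
  · -- expectation
    have hae : 0 ≤ᵐ[Pr] W := by
      have h' : ∀ᵐ ω ∂Pr, 0 ≤ W ω := by
        rw [ae_iff]
        have hset : {ω | ¬ (0:ℝ) ≤ W ω} = W ⁻¹' Set.Iio 0 := by
          ext ω; simp [not_le]
        rw [hset]
        exact hWneg
      exact h'
    rw [MeasureTheory.integral_eq_lintegral_of_nonneg_ae hae hW.aestronglyMeasurable]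
    have h1 : ∫⁻ ω, ENNReal.ofReal (W ω) ∂Pr
        = ∫⁻ y, ENNReal.ofReal y ∂(Measure.map W Pr) :=
      (lintegral_map ENNReal.measurable_ofReal hW).symm
    rw [h1, hlint _ ENNReal.measurable_ofReal]
    have h2 : ∫⁻ y in Set.Ioi 0, ENNReal.ofReal (d y) * ENNReal.ofReal y
        = ENNReal.ofReal (2*(c-1)/3) := by
      have hptw : ∀ y ∈ Set.Ioi (0:ℝ), ENNReal.ofReal (d y) * ENNReal.ofReal y
          = ENNReal.ofReal (2/(3*(c-1)) * (y * Real.exp (-y/(c-1)))) := by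
        intro y hy
        rw [← ENNReal.ofReal_mul (hd_nonneg y)]
        congr 1
        simp only [hd_def]
        ring
      rw [setLIntegral_congr_fun measurableSet_Ioi hptw,
        ← MeasureTheory.ofReal_integral_eq_lintegral_ofReal
          ((helpJg ha).const_mul _)
          ((ae_restrict_iff' measurableSet_Ioi).mpr
            (Filter.Eventually.of_forall fun y hy =>
              mul_nonneg (le_of_lt (div_pos (by norm_num) (by linarith)))
                (mul_nonneg (le_of_lt hy) (Real.exp_pos _).le))),
        integral_const_mul, helpJ ha]
      congr 1
      field_simp
    rw [h2]
    simp only [ENNReal.ofReal_zero, mul_zero, zero_add]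
    rw [ENNReal.toReal_ofReal (by nlinarith)]
end
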